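/- arXiv:1710.08240 — 8 statements merged into one kernel-verified Lean document; each statement's English description precedes it below -/
import Mathlib

section
/- Let μ be a Borel probability measure on ℝ and let ε > 0 be such that α := ∫_ℝ exp(ε x²) dμ(x) < ∞ (i.e. x ↦ exp(ε x²) is μ-integrable). Then for every t ≥ 36·log(2α)/ε, the function f_{μ,t}(x) = ∫_ℝ exp(-(x-y)²/(2t)) dμ(y) is unimodal; consequently the convolution μ * N(0,t) is unimodal for all such t. -/
open MeasureTheory Real Set Filter Topology

/-- `|u| e^{-u²/(2t)} ≤ √t`. -/
lemma abs_mul_exp_le_sqrt {t : ℝ} (ht : 0 < t) (u : ℝ) :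
    |u| * Real.exp (-u ^ 2 / (2 * t)) ≤ Real.sqrt t := by
  have hst : 0 < Real.sqrt t := Real.sqrt_pos.2 ht
  have h5 : Real.sqrt t ^ 2 = t := Real.sq_sqrt ht.le
  have h2 : 1 + u ^ 2 / (2 * t) ≤ Real.exp (u ^ 2 / (2 * t)) := by
    have := Real.add_one_le_exp (u ^ 2 / (2 * t)); linarith
  have h1 : |u| ≤ Real.sqrt t * Real.exp (u ^ 2 / (2 * t)) := by
    have h3 : |u| ≤ Real.sqrt t * (1 + u ^ 2 / (2 * t)) := by
      have h4 : Real.sqrt t * (1 + u ^ 2 / (2 * t)) = Real.sqrt t + Real.sqrt t * u ^ 2 / (2 * t) := by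
        ring
      have h6 : Real.sqrt t * u ^ 2 / (2 * t) = u ^ 2 / (2 * Real.sqrt t) := by
        field_simp; linear_combination u ^ 2 * h5
      rw [h4, h6, ← sub_le_iff_le_add', le_div_iff₀ (by positivity)]
      nlinarith [sq_nonneg (|u| - Real.sqrt t), sq_abs u]
    exact h3.trans (by nlinarith [hst.le])
  calc |u| * Real.exp (-u ^ 2 / (2 * t))
      ≤ (Real.sqrt t * Real.exp (u ^ 2 / (2 * t))) * Real.exp (-u ^ 2 / (2 * t)) := by
        apply mul_le_mul_of_nonneg_right h1 (Real.exp_pos _).le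
    _ = Real.sqrt t * Real.exp (u ^ 2 / (2 * t) + -u ^ 2 / (2 * t)) := by
        rw [mul_assoc, ← Real.exp_add]
    _ = Real.sqrt t := by
        have : u ^ 2 / (2 * t) + -u ^ 2 / (2 * t) = 0 := by ring
        rw [this, Real.exp_zero, mul_one]

/-- `u² e^{-u²/(2t)} ≤ 2t`. -/
lemma sq_mul_exp_le {t : ℝ} (ht : 0 < t) (u : ℝ) :
    u ^ 2 * Real.exp (-u ^ 2 / (2 * t)) ≤ 2 * t := by
  have h2 : u ^ 2 / (2 * t) ≤ Real.exp (u ^ 2 / (2 * t)) := by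
    linarith [Real.add_one_le_exp (u ^ 2 / (2 * t))]
  have h3 : u ^ 2 ≤ 2 * t * Real.exp (u ^ 2 / (2 * t)) := by
    rw [div_le_iff₀ (by positivity)] at h2; linarith
  calc u ^ 2 * Real.exp (-u ^ 2 / (2 * t))
      ≤ (2 * t * Real.exp (u ^ 2 / (2 * t))) * Real.exp (-u ^ 2 / (2 * t)) :=
        mul_le_mul_of_nonneg_right h3 (Real.exp_pos _).le
    _ = 2 * t * Real.exp (u ^ 2 / (2 * t) + -u ^ 2 / (2 * t)) := by rw [mul_assoc, ← Real.exp_add]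
    _ = 2 * t := by
        have : u ^ 2 / (2 * t) + -u ^ 2 / (2 * t) = 0 := by ring
        rw [this, Real.exp_zero, mul_one]

/-- `s e^{-εs}` is decreasing past `1/ε`. -/
lemma decay_mono {ε s₀ s : ℝ} (hε : 0 < ε) (h1 : 1 ≤ ε * s₀) (h : s₀ ≤ s) :
    s * Real.exp (-(ε * s)) ≤ s₀ * Real.exp (-(ε * s₀)) := by
  have hs₀ : 0 < s₀ := by nlinarith
  have key : s ≤ s₀ * Real.exp (ε * (s - s₀)) := by
    have h2 := Real.add_one_le_exp (ε * (s - s₀))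
    calc s = s₀ + (s - s₀) := by ring
      _ ≤ s₀ + ε * s₀ * (s - s₀) := by nlinarith
      _ = s₀ * (ε * (s - s₀) + 1) := by ring
      _ ≤ s₀ * Real.exp (ε * (s - s₀)) := by nlinarith
  calc s * Real.exp (-(ε * s)) ≤ (s₀ * Real.exp (ε * (s - s₀))) * Real.exp (-(ε * s)) :=
        mul_le_mul_of_nonneg_right key (Real.exp_pos _).le
    _ = s₀ * Real.exp (ε * (s - s₀) + -(ε * s)) := by rw [mul_assoc, ← Real.exp_add]
    _ = s₀ * Real.exp (-(ε * s₀)) := by ring_nf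

/-- for `0 < x ≤ y` with `1 ≤ 2εx²`, `y e^{-εy²} ≤ x e^{-εx²}`. -/
lemma decay_mono' {ε x y : ℝ} (hε : 0 < ε) (hx0 : 0 < x) (hx : 1 ≤ 2 * ε * x ^ 2)
    (hxy : x ≤ y) :
    y * Real.exp (-(ε * y ^ 2)) ≤ x * Real.exp (-(ε * x ^ 2)) := by
  have key : y ≤ x * Real.exp (ε * (y ^ 2 - x ^ 2)) := by
    have h2 := Real.add_one_le_exp (ε * (y ^ 2 - x ^ 2))
    calc y = x + (y - x) := by ring
      _ ≤ x + 2 * ε * x ^ 2 * (y - x) := by nlinarith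
      _ = x * (ε * (2 * x * (y - x)) + 1) := by ring
      _ ≤ x * (ε * (y ^ 2 - x ^ 2) + 1) := by nlinarith [sq_nonneg (y - x)]
      _ ≤ x * Real.exp (ε * (y ^ 2 - x ^ 2)) := by nlinarith
  calc y * Real.exp (-(ε * y ^ 2))
      ≤ (x * Real.exp (ε * (y ^ 2 - x ^ 2))) * Real.exp (-(ε * y ^ 2)) :=
        mul_le_mul_of_nonneg_right key (Real.exp_pos _).le
    _ = x * Real.exp (ε * (y ^ 2 - x ^ 2) + -(ε * y ^ 2)) := by rw [mul_assoc, ← Real.exp_add]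
    _ = x * Real.exp (-(ε * x ^ 2)) := by ring_nf
section Aux

open MeasureTheory Real Set Filter Topology

variable {μ : Measure ℝ} [IsProbabilityMeasure μ] {ε t : ℝ}

lemma integrable_of_le_exp (hint : Integrable (fun y => Real.exp (ε * y ^ 2)) μ)
    {g : ℝ → ℝ} (hg : AEStronglyMeasurable g μ) (C : ℝ)
    (h : ∀ y, |g y| ≤ C * Real.exp (ε * y ^ 2)) : Integrable g μ :=
  (hint.const_mul C).mono' hg (ae_of_all _ fun y => by simpa using h y)

lemma alpha_ge_one (hint : Integrable (fun y => Real.exp (ε * y ^ 2)) μ)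
    (hε : 0 < ε) : 1 ≤ ∫ y, Real.exp (ε * y ^ 2) ∂μ := by
  have h1 : ∫ _y, (1:ℝ) ∂μ = 1 := by simp
  rw [← h1]
  exact integral_mono (integrable_const 1) hint
    (fun y => Real.one_le_exp (by positivity))

/-- Markov: the bulk `[-r, r]` has mass at least 1/2, when `ε r² = log (2α)`. -/
lemma half_le_bulk (hε : 0 < ε) (hint : Integrable (fun y => Real.exp (ε * y ^ 2)) μ)
    {α r : ℝ} (hα : α = ∫ y, Real.exp (ε * y ^ 2) ∂μ)
    (hr0 : 0 ≤ r) (hr2 : ε * r ^ 2 = Real.log (2 * α)) :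
    (1:ℝ)/2 ≤ (μ (Icc (-r) r)).toReal := by
  have hα1 : 1 ≤ α := hα ▸ alpha_ge_one hint hε
  have hmeas : MeasurableSet (Icc (-r) r) := measurableSet_Icc
  have hfin : μ (Icc (-r) r) ≠ ⊤ := (measure_lt_top μ _).ne
  have hfin' : μ (Icc (-r) r)ᶜ ≠ ⊤ := (measure_lt_top μ _).ne
  have hsum : (μ (Icc (-r) r)).toReal + (μ (Icc (-r) r)ᶜ).toReal = 1 := by
    rw [← ENNReal.toReal_add hfin hfin', measure_add_measure_compl hmeas]
    simp
  have hexp : Real.exp (ε * r ^ 2) = 2 * α := by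
    rw [hr2, Real.exp_log (by linarith)]
  have hcompl : (μ (Icc (-r) r)ᶜ).toReal ≤ 1/2 := by
    have key : ∀ y ∈ (Icc (-r) r)ᶜ, (1:ℝ) ≤ (2*α)⁻¹ * Real.exp (ε * y ^ 2) := by
      intro y hy
      simp only [mem_compl_iff, mem_Icc, not_and_or, not_le] at hy
      have hy2 : r ^ 2 ≤ y ^ 2 := by
        rcases hy with h | h
        · nlinarith [hr0]
        · nlinarith [hr0]
      rw [← hexp, ← Real.exp_neg, ← Real.exp_add]
      apply Real.one_le_exp
      nlinarith
    have h2 : (μ (Icc (-r) r)ᶜ).toReal = ∫ _y in (Icc (-r) r)ᶜ, (1:ℝ) ∂μ := by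
      rw [setIntegral_const]; simp; rfl
    rw [h2]
    calc ∫ _y in (Icc (-r) r)ᶜ, (1:ℝ) ∂μ
        ≤ ∫ y in (Icc (-r) r)ᶜ, (2*α)⁻¹ * Real.exp (ε * y ^ 2) ∂μ := by
          apply setIntegral_mono_on (integrableOn_const)
            ((hint.const_mul _).integrableOn) hmeas.compl key
      _ ≤ ∫ y, (2*α)⁻¹ * Real.exp (ε * y ^ 2) ∂μ := by
          apply setIntegral_le_integral (hint.const_mul _)
          apply ae_of_all _ fun y => by positivity
      _ = (2*α)⁻¹ * α := by rw [integral_const_mul, ← hα]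
      _ = 1/2 := by field_simp
  linarith

end Aux
section Step1

open MeasureTheory Real Set Filter Topology

variable {μ : Measure ℝ} [IsProbabilityMeasure μ] {ε t : ℝ}

lemma step1num (hε : 0 < ε) {α r t b : ℝ} (hα1 : 1 ≤ α) (hr0 : 0 < r)
    (hr2 : ε * r ^ 2 = Real.log (2 * α)) (ht : 36 * r ^ 2 ≤ t) (hb : 5 * r ≤ b) :
    α * (b * Real.exp (-(ε * b ^ 2))) < (b - r)/2 * Real.exp (-(b + r) ^ 2 / (2 * t)) := by
  have hL2 : (0.69:ℝ) ≤ Real.log (2 * α) := by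
    have h1 : Real.log 2 ≤ Real.log (2 * α) :=
      Real.log_le_log (by norm_num) (by linarith)
    have := Real.log_two_gt_d9
    linarith
  have hL : (0.69:ℝ) ≤ ε * r ^ 2 := hr2 ▸ hL2
  have ht0 : 0 < t := lt_of_lt_of_le (by positivity) ht
  have hb0 : 0 < b := by nlinarith
  have hs : 25 * (ε * r ^ 2) ≤ ε * b ^ 2 := by nlinarith [mul_nonneg (mul_nonneg hε.le (sub_nonneg.2 hb)) (show (0:ℝ) ≤ b + 5*r by nlinarith)]
  have e1 : (b + r) ^ 2 / (2 * t) ≤ ε * b ^ 2 / 25 := by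
    rw [div_le_div_iff₀ (by positivity) (by norm_num)]
    have h1 : (b + r) ^ 2 ≤ 36 / 25 * b ^ 2 := by nlinarith
    nlinarith [mul_le_mul_of_nonneg_left ht (le_of_lt (show (0:ℝ) < 25 * (b+r)^2/(36/25 * b^2) * 0 + 1 by norm_num))]
  have e2 : ε * r ^ 2 ≤ ε * b ^ 2 / 25 := by linarith
  have hαpos : (0:ℝ) < α := by linarith
  have e3 : Real.exp (ε * r ^ 2) = 2 * α := by rw [hr2, Real.exp_log (by linarith)]
  set s := ε * b ^ 2 with hs_def
  have hs15 : (15:ℝ) ≤ 23 * s / 25 := by nlinarith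
  have key : Real.exp (ε * r ^ 2 - s) < 4/5 * Real.exp (-(s/25)) := by
    have h1 : Real.exp (ε * r ^ 2 - s) ≤ Real.exp (s/25 - s) :=
      Real.exp_le_exp.2 (by linarith)
    have h2 : Real.exp (s/25 - s) < 4/5 * Real.exp (-(s/25)) := by
      rw [show s/25 - s = -(s/25) + (2*s/25 - s) by ring, Real.exp_add]
      have h3 : Real.exp (2*s/25 - s) < 4/5 := by
        have h4 : Real.exp (2*s/25 - s) ≤ Real.exp (-15 : ℝ) :=
          Real.exp_le_exp.2 (by linarith)
        have h5 : Real.exp (-15:ℝ) < 4/5 := by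
          rw [Real.exp_neg]
          have h6 : (16:ℝ) ≤ Real.exp 15 := by
            have := Real.add_one_le_exp (15:ℝ); linarith
          rw [inv_lt_iff_one_lt_mul₀ (by positivity)]
          nlinarith
        linarith
      calc Real.exp (-(s/25)) * Real.exp (2*s/25 - s)
          < Real.exp (-(s/25)) * (4/5) := by
            exact mul_lt_mul_of_pos_left h3 (Real.exp_pos _)
        _ = 4/5 * Real.exp (-(s/25)) := by ring
    linarith
  calc α * (b * Real.exp (-s))
      = (b/2) * Real.exp (ε * r ^ 2 - s) := by
        rw [Real.exp_sub, e3, Real.exp_neg]; ring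
    _ < (b/2) * (4/5 * Real.exp (-(s/25))) := by
        apply mul_lt_mul_of_pos_left key (by positivity)
    _ = (2*b/5) * Real.exp (-(s/25)) := by ring
    _ ≤ (2*b/5) * Real.exp (-(b + r) ^ 2 / (2 * t)) := by
        apply mul_le_mul_of_nonneg_left _ (by positivity)
        apply Real.exp_le_exp.2
        rw [neg_div]
        linarith
    _ ≤ (b - r)/2 * Real.exp (-(b + r) ^ 2 / (2 * t)) := by
        apply mul_le_mul_of_nonneg_right _ (Real.exp_pos _).le
        linarith

end Step1
section Step1b

open MeasureTheory Real Set Filter Topology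

variable {μ : Measure ℝ} [IsProbabilityMeasure μ] {ε t : ℝ}

lemma K_cont (t x : ℝ) : Continuous fun y : ℝ => Real.exp (-(x - y) ^ 2 / (2 * t)) := by
  fun_prop

lemma K_le_one (ht0 : 0 < t) (x y : ℝ) : Real.exp (-(x - y) ^ 2 / (2 * t)) ≤ 1 := by
  rw [← Real.exp_zero]
  apply Real.exp_le_exp.2
  have : (0:ℝ) ≤ (x - y)^2 / (2*t) := by positivity
  rw [neg_div]; linarith

lemma integrable_K (hε : 0 < ε) (ht0 : 0 < t)
    (hint : Integrable (fun y => Real.exp (ε * y ^ 2)) μ) (x : ℝ) :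
    Integrable (fun y => Real.exp (-(x - y) ^ 2 / (2 * t))) μ := by
  apply integrable_of_le_exp hint (K_cont t x).aestronglyMeasurable 1
  intro y
  rw [abs_of_pos (Real.exp_pos _), one_mul]
  exact (K_le_one ht0 x y).trans (Real.one_le_exp (by positivity))

lemma integrable_yxK (hε : 0 < ε) (ht0 : 0 < t)
    (hint : Integrable (fun y => Real.exp (ε * y ^ 2)) μ) (x : ℝ) :
    Integrable (fun y => (y - x) * Real.exp (-(x - y) ^ 2 / (2 * t))) μ := by
  apply integrable_of_le_exp hint
    (((continuous_id.sub continuous_const).mul (K_cont t x)).aestronglyMeasurable)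
    (Real.sqrt t)
  intro y
  show |(y - x) * Real.exp (-(x - y) ^ 2 / (2 * t))| ≤ _
  rw [abs_mul, abs_of_pos (Real.exp_pos _)]
  have h1 : (x - y)^2 = (y - x)^2 := by ring
  calc |y - x| * Real.exp (-(x - y) ^ 2 / (2 * t))
      = |y - x| * Real.exp (-(y - x) ^ 2 / (2 * t)) := by rw [h1]
    _ ≤ Real.sqrt t := abs_mul_exp_le_sqrt ht0 (y - x)
    _ ≤ Real.sqrt t * Real.exp (ε * y ^ 2) := by
        nlinarith [Real.one_le_exp (show (0:ℝ) ≤ ε * y ^ 2 by positivity),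
          Real.sqrt_nonneg t]

lemma step1pos (hε : 0 < ε) (hint : Integrable (fun y => Real.exp (ε * y ^ 2)) μ)
    {α r : ℝ} (hα : α = ∫ y, Real.exp (ε * y ^ 2) ∂μ)
    (hr0 : 0 ≤ r) (hr2 : ε * r ^ 2 = Real.log (2 * α)) (ht : 36 * r ^ 2 ≤ t)
    {x : ℝ} (hx : 5 * r ≤ x) :
    ∫ y, (y - x) * Real.exp (-(x - y) ^ 2 / (2 * t)) ∂μ < 0 := by
  have hα1 : 1 ≤ α := hα ▸ alpha_ge_one hint hε
  have hL2 : (0.69:ℝ) ≤ Real.log (2 * α) := by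
    have h1 : Real.log 2 ≤ Real.log (2 * α) := Real.log_le_log (by norm_num) (by linarith)
    have := Real.log_two_gt_d9; linarith
  have hr0' : 0 < r := by
    rcases lt_or_eq_of_le hr0 with h | h
    · exact h
    · exfalso; rw [← h] at hr2; simp at hr2; linarith
  have ht0 : 0 < t := lt_of_lt_of_le (by positivity) ht
  have hx0 : 0 < x := by nlinarith
  have hyxK := integrable_yxK (μ := μ) hε ht0 hint x
  have hK := integrable_K (μ := μ) hε ht0 hint x
  set emin := Real.exp (-(x + r) ^ 2 / (2 * t)) with hemin
  set c := (r - x) * emin with hc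
  have hc0 : c ≤ 0 := mul_nonpos_of_nonpos_of_nonneg (by linarith) (Real.exp_pos _).le
  -- bulk bound
  have hbulk := half_le_bulk hε hint hα hr0 hr2
  have boundIcc : ∫ y in Icc (-r) r, (y - x) * Real.exp (-(x - y) ^ 2 / (2 * t)) ∂μ
      ≤ c * (1/2) := by
    have hpt : ∀ y ∈ Icc (-r) r, (y - x) * Real.exp (-(x - y) ^ 2 / (2 * t)) ≤ c := by
      intro y hy
      obtain ⟨hy1, hy2⟩ := hy
      have hK_ge : emin ≤ Real.exp (-(x - y) ^ 2 / (2 * t)) := by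
        apply Real.exp_le_exp.2
        rw [div_le_div_iff₀ (by positivity) (by positivity)]
        have : (x - y)^2 ≤ (x + r)^2 := by nlinarith
        nlinarith
      have hyx : y - x ≤ 0 := by linarith
      calc (y - x) * Real.exp (-(x - y) ^ 2 / (2 * t)) ≤ (y - x) * emin :=
            mul_le_mul_of_nonpos_left hK_ge hyx
        _ ≤ (r - x) * emin := by
            apply mul_le_mul_of_nonneg_right (by linarith) (Real.exp_pos _).le
    calc ∫ y in Icc (-r) r, (y - x) * Real.exp (-(x - y) ^ 2 / (2 * t)) ∂μ
        ≤ ∫ _y in Icc (-r) r, c ∂μ := by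
          apply setIntegral_mono_on hyxK.integrableOn
            (integrableOn_const) measurableSet_Icc hpt
      _ = (μ (Icc (-r) r)).toReal * c := by rw [setIntegral_const]; simp [smul_eq_mul]; left; rfl
      _ ≤ c * (1/2) := by nlinarith [hbulk, hc0]
  have boundA : ∫ y in Iic x, (y - x) * Real.exp (-(x - y) ^ 2 / (2 * t)) ∂μ ≤ c * (1/2) := by
    have hsub : Icc (-r) r ⊆ Iic x := fun y hy => le_trans hy.2 (by linarith)
    have hdiff : ∫ y in Iic x \ Icc (-r) r, (y - x) * Real.exp (-(x - y) ^ 2 / (2 * t)) ∂μ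
        = (∫ y in Iic x, (y - x) * Real.exp (-(x - y) ^ 2 / (2 * t)) ∂μ)
          - ∫ y in Icc (-r) r, (y - x) * Real.exp (-(x - y) ^ 2 / (2 * t)) ∂μ :=
      integral_diff measurableSet_Icc hyxK.integrableOn hsub
    have hnonpos : ∫ y in Iic x \ Icc (-r) r, (y - x) * Real.exp (-(x - y) ^ 2 / (2 * t)) ∂μ
        ≤ 0 := by
      apply setIntegral_nonpos (measurableSet_Iic.diff measurableSet_Icc)
      intro y hy
      exact mul_nonpos_of_nonpos_of_nonneg (by have := hy.1; simp at this; linarith)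
        (Real.exp_pos _).le
    linarith [boundIcc, hdiff, hnonpos]
  have boundB : ∫ y in Ioi x, (y - x) * Real.exp (-(x - y) ^ 2 / (2 * t)) ∂μ
      ≤ α * (x * Real.exp (-(ε * x ^ 2))) := by
    set C := x * Real.exp (-(ε * x ^ 2)) with hC
    have hC0 : 0 < C := by positivity
    have hpt : ∀ y ∈ Ioi x, (y - x) * Real.exp (-(x - y) ^ 2 / (2 * t))
        ≤ C * Real.exp (ε * y ^ 2) := by
      intro y hy
      rw [mem_Ioi] at hy
      have hy0 : 0 < y := lt_trans hx0 hy
      have h2ex : 1 ≤ 2 * ε * x ^ 2 := by nlinarith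
      have hd := decay_mono' hε hx0 h2ex hy.le
      calc (y - x) * Real.exp (-(x - y) ^ 2 / (2 * t))
          ≤ y * Real.exp (-(x - y) ^ 2 / (2 * t)) := by
            apply mul_le_mul_of_nonneg_right (by linarith) (Real.exp_pos _).le
        _ ≤ y * 1 := mul_le_mul_of_nonneg_left (K_le_one ht0 x y) hy0.le
        _ = (y * Real.exp (-(ε * y ^ 2))) * Real.exp (ε * y ^ 2) := by
            rw [mul_assoc, ← Real.exp_add]; simp
        _ ≤ C * Real.exp (ε * y ^ 2) :=
            mul_le_mul_of_nonneg_right hd (Real.exp_pos _).le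
    calc ∫ y in Ioi x, (y - x) * Real.exp (-(x - y) ^ 2 / (2 * t)) ∂μ
        ≤ ∫ y in Ioi x, C * Real.exp (ε * y ^ 2) ∂μ := by
          apply setIntegral_mono_on hyxK.integrableOn
            ((hint.const_mul C).integrableOn) measurableSet_Ioi hpt
      _ ≤ ∫ y, C * Real.exp (ε * y ^ 2) ∂μ := by
          apply setIntegral_le_integral (hint.const_mul C)
          exact ae_of_all _ fun y => by positivity
      _ = α * C := by rw [integral_const_mul, ← hα]; ring
      _ = α * (x * Real.exp (-(ε * x ^ 2))) := by rw [hC]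
  have hnum := step1num hε hα1 hr0' hr2 ht hx
  have hsplit : ∫ y, (y - x) * Real.exp (-(x - y) ^ 2 / (2 * t)) ∂μ
      = (∫ y in Iic x, (y - x) * Real.exp (-(x - y) ^ 2 / (2 * t)) ∂μ)
        + ∫ y in Ioi x, (y - x) * Real.exp (-(x - y) ^ 2 / (2 * t)) ∂μ := by
    rw [← compl_Iic]
    exact (integral_add_compl measurableSet_Iic hyxK).symm
  rw [hsplit]
  have : c * (1/2) = -((x - r)/2 * emin) := by rw [hc]; ring
  linarith
section Step1c

open MeasureTheory Real Set Filter Topology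

variable {μ : Measure ℝ} [IsProbabilityMeasure μ] {ε t : ℝ}

lemma step1neg (hε : 0 < ε) (hint : Integrable (fun y => Real.exp (ε * y ^ 2)) μ)
    {α r : ℝ} (hα : α = ∫ y, Real.exp (ε * y ^ 2) ∂μ)
    (hr0 : 0 ≤ r) (hr2 : ε * r ^ 2 = Real.log (2 * α)) (ht : 36 * r ^ 2 ≤ t)
    {x : ℝ} (hx : x ≤ -(5 * r)) :
    0 < ∫ y, (y - x) * Real.exp (-(x - y) ^ 2 / (2 * t)) ∂μ := by
  have hα1 : 1 ≤ α := hα ▸ alpha_ge_one hint hε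
  have hL2 : (0.69:ℝ) ≤ Real.log (2 * α) := by
    have h1 : Real.log 2 ≤ Real.log (2 * α) := Real.log_le_log (by norm_num) (by linarith)
    have := Real.log_two_gt_d9; linarith
  have hr0' : 0 < r := by
    rcases lt_or_eq_of_le hr0 with h | h
    · exact h
    · exfalso; rw [← h] at hr2; simp at hr2; linarith
  have ht0 : 0 < t := lt_of_lt_of_le (by positivity) ht
  set b := -x with hb_def
  have hb : 5 * r ≤ b := by rw [hb_def]; linarith
  have hb0 : 0 < b := by linarith
  have hx0 : x < 0 := by linarith
  have hεr : (0.69:ℝ) ≤ ε * r ^ 2 := by rw [hr2]; exact hL2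
  have hεb : 25 * (ε * r ^ 2) ≤ ε * b ^ 2 := by
    nlinarith [mul_nonneg (mul_nonneg hε.le (sub_nonneg.2 hb)) (show (0:ℝ) ≤ b + 5*r by linarith)]
  have hyxK := integrable_yxK (μ := μ) hε ht0 hint x
  have hK := integrable_K (μ := μ) hε ht0 hint x
  set emin := Real.exp (-(b + r) ^ 2 / (2 * t)) with hemin
  set c := (b - r) * emin with hc
  have hc0 : 0 ≤ c := mul_nonneg (by linarith) (Real.exp_pos _).le
  have hbulk := half_le_bulk hε hint hα hr0 hr2
  -- lower bound on the Icc part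
  have boundIcc : c * (1/2)
      ≤ ∫ y in Icc (-r) r, (y - x) * Real.exp (-(x - y) ^ 2 / (2 * t)) ∂μ := by
    have hpt : ∀ y ∈ Icc (-r) r, c ≤ (y - x) * Real.exp (-(x - y) ^ 2 / (2 * t)) := by
      intro y hy
      obtain ⟨hy1, hy2⟩ := hy
      have hK_ge : emin ≤ Real.exp (-(x - y) ^ 2 / (2 * t)) := by
        apply Real.exp_le_exp.2
        rw [div_le_div_iff₀ (by positivity) (by positivity)]
        have : (x - y)^2 ≤ (b + r)^2 := by nlinarith
        nlinarith
      have hyx : 0 ≤ y - x := by linarith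
      calc c = (b - r) * emin := hc
        _ ≤ (y - x) * emin := by
            apply mul_le_mul_of_nonneg_right (by linarith) (Real.exp_pos _).le
        _ ≤ (y - x) * Real.exp (-(x - y) ^ 2 / (2 * t)) :=
            mul_le_mul_of_nonneg_left hK_ge hyx
    calc c * (1/2) ≤ c * (μ (Icc (-r) r)).toReal := by nlinarith [hbulk, hc0]
      _ = ∫ _y in Icc (-r) r, c ∂μ := by rw [setIntegral_const]; simp [smul_eq_mul]; exact mul_comm _ _
      _ ≤ ∫ y in Icc (-r) r, (y - x) * Real.exp (-(x - y) ^ 2 / (2 * t)) ∂μ := by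
          apply setIntegral_mono_on (integrableOn_const)
            hyxK.integrableOn measurableSet_Icc hpt
  have boundA : c * (1/2)
      ≤ ∫ y in Ici x, (y - x) * Real.exp (-(x - y) ^ 2 / (2 * t)) ∂μ := by
    have hsub : Icc (-r) r ⊆ Ici x := fun y hy => le_trans (by linarith : x ≤ -r) hy.1
    have hdiff : ∫ y in Ici x \ Icc (-r) r, (y - x) * Real.exp (-(x - y) ^ 2 / (2 * t)) ∂μ
        = (∫ y in Ici x, (y - x) * Real.exp (-(x - y) ^ 2 / (2 * t)) ∂μ)
          - ∫ y in Icc (-r) r, (y - x) * Real.exp (-(x - y) ^ 2 / (2 * t)) ∂μ :=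
      integral_diff measurableSet_Icc hyxK.integrableOn hsub
    have hnonneg : 0 ≤ ∫ y in Ici x \ Icc (-r) r, (y - x) * Real.exp (-(x - y) ^ 2 / (2 * t)) ∂μ := by
      apply setIntegral_nonneg (measurableSet_Ici.diff measurableSet_Icc)
      intro y hy
      apply mul_nonneg _ (Real.exp_pos _).le
      have := hy.1; simp at this; linarith
    linarith [boundIcc, hdiff, hnonneg]
  have boundB : -(α * (b * Real.exp (-(ε * b ^ 2))))
      ≤ ∫ y in Iio x, (y - x) * Real.exp (-(x - y) ^ 2 / (2 * t)) ∂μ := by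
    set C := b * Real.exp (-(ε * b ^ 2)) with hC
    have hC0 : 0 < C := by positivity
    have hpt : ∀ y ∈ Iio x, -(C * Real.exp (ε * y ^ 2))
        ≤ (y - x) * Real.exp (-(x - y) ^ 2 / (2 * t)) := by
      intro y hy
      rw [mem_Iio] at hy
      have hy0 : y < 0 := lt_trans hy hx0
      have h2eb : 1 ≤ 2 * ε * b ^ 2 := by linarith
      have hby : b ≤ -y := by rw [hb_def]; linarith
      have hd := decay_mono' hε hb0 h2eb hby
      have hyy : (-y) ^ 2 = y ^ 2 := by ring
      rw [hyy] at hd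
      have key : (x - y) * Real.exp (-(x - y) ^ 2 / (2 * t)) ≤ C * Real.exp (ε * y ^ 2) := by
        calc (x - y) * Real.exp (-(x - y) ^ 2 / (2 * t))
            ≤ (-y) * Real.exp (-(x - y) ^ 2 / (2 * t)) := by
              apply mul_le_mul_of_nonneg_right (by linarith) (Real.exp_pos _).le
          _ ≤ (-y) * 1 := mul_le_mul_of_nonneg_left (K_le_one ht0 x y) (by linarith)
          _ = ((-y) * Real.exp (-(ε * y ^ 2))) * Real.exp (ε * y ^ 2) := by
              rw [mul_assoc, ← Real.exp_add]; simp
          _ ≤ C * Real.exp (ε * y ^ 2) :=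
              mul_le_mul_of_nonneg_right hd (Real.exp_pos _).le
      have hre : (y - x) * Real.exp (-(x - y) ^ 2 / (2 * t))
          = -((x - y) * Real.exp (-(x - y) ^ 2 / (2 * t))) := by ring
      rw [hre]
      linarith [key]
    calc -(α * C) = -(∫ y, C * Real.exp (ε * y ^ 2) ∂μ) := by
          rw [integral_const_mul, ← hα]; ring_nf
      _ ≤ -(∫ y in Iio x, C * Real.exp (ε * y ^ 2) ∂μ) := by
          apply neg_le_neg
          apply setIntegral_le_integral (hint.const_mul C)
          exact ae_of_all _ fun y => by positivity
      _ = ∫ y in Iio x, -(C * Real.exp (ε * y ^ 2)) ∂μ := by rw [integral_neg]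
      _ ≤ ∫ y in Iio x, (y - x) * Real.exp (-(x - y) ^ 2 / (2 * t)) ∂μ := by
          apply setIntegral_mono_on ((hint.const_mul C).integrableOn).neg
            hyxK.integrableOn measurableSet_Iio hpt
  have hnum := step1num hε hα1 hr0' hr2 ht hb
  have hsplit : ∫ y, (y - x) * Real.exp (-(x - y) ^ 2 / (2 * t)) ∂μ
      = (∫ y in Ici x, (y - x) * Real.exp (-(x - y) ^ 2 / (2 * t)) ∂μ)
        + ∫ y in Iio x, (y - x) * Real.exp (-(x - y) ^ 2 / (2 * t)) ∂μ := by
    rw [← compl_Ici]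
    exact (integral_add_compl measurableSet_Ici hyxK).symm
  rw [hsplit]
  have : c * (1/2) = (b - r)/2 * emin := by rw [hc]; ring
  linarith

end Step1c
section Crit

open MeasureTheory Real Set Filter Topology

variable {μ : Measure ℝ} [IsProbabilityMeasure μ] {ε t : ℝ}

lemma integrable_yK (hε : 0 < ε) (ht0 : 0 < t)
    (hint : Integrable (fun y => Real.exp (ε * y ^ 2)) μ) (x : ℝ) :
    Integrable (fun y => y * Real.exp (-(x - y) ^ 2 / (2 * t))) μ := by
  apply integrable_of_le_exp hint
    (((by fun_prop : Continuous fun y : ℝ => y).mul (K_cont t x)).aestronglyMeasurable) (1 + 1/ε)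
  intro y
  show |y * Real.exp (-(x - y) ^ 2 / (2 * t))| ≤ _
  rw [abs_mul, abs_of_pos (Real.exp_pos _)]
  have h1 : ε * y ^ 2 ≤ Real.exp (ε * y ^ 2) := by
    linarith [Real.add_one_le_exp (ε * y ^ 2)]
  have h2 : (1:ℝ) ≤ Real.exp (ε * y ^ 2) := Real.one_le_exp (by positivity)
  have h3 : |y| ≤ 1 + y ^ 2 := by nlinarith [sq_nonneg (|y| - 1), sq_abs y]
  have h4 : y ^ 2 ≤ (1/ε) * Real.exp (ε * y ^ 2) := by
    rw [div_mul_eq_mul_div, le_div_iff₀ hε]; nlinarith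
  calc |y| * Real.exp (-(x - y) ^ 2 / (2 * t)) ≤ |y| * 1 :=
        mul_le_mul_of_nonneg_left (K_le_one ht0 x y) (abs_nonneg y)
    _ = |y| := mul_one _
    _ ≤ (1 + 1/ε) * Real.exp (ε * y ^ 2) := by
        rw [add_mul, one_mul]; nlinarith
lemma integrable_y2K (hε : 0 < ε) (ht0 : 0 < t)
    (hint : Integrable (fun y => Real.exp (ε * y ^ 2)) μ) (x : ℝ) :
    Integrable (fun y => y ^ 2 * Real.exp (-(x - y) ^ 2 / (2 * t))) μ := by
  apply integrable_of_le_exp hint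
    (((continuous_pow 2).mul (K_cont t x)).aestronglyMeasurable) (1/ε)
  intro y
  show |y ^ 2 * Real.exp (-(x - y) ^ 2 / (2 * t))| ≤ _
  rw [abs_mul, abs_of_pos (Real.exp_pos _), abs_of_nonneg (sq_nonneg y)]
  have h1 : ε * y ^ 2 ≤ Real.exp (ε * y ^ 2) := by
    linarith [Real.add_one_le_exp (ε * y ^ 2)]
  calc y ^ 2 * Real.exp (-(x - y) ^ 2 / (2 * t)) ≤ y ^ 2 * 1 :=
        mul_le_mul_of_nonneg_left (K_le_one ht0 x y) (sq_nonneg y)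
    _ = y ^ 2 := mul_one _
    _ ≤ 1/ε * Real.exp (ε * y ^ 2) := by
        rw [div_mul_eq_mul_div, le_div_iff₀ hε]; nlinarith
lemma integrable_xy2K (hε : 0 < ε) (ht0 : 0 < t)
    (hint : Integrable (fun y => Real.exp (ε * y ^ 2)) μ) (x : ℝ) :
    Integrable (fun y => (x - y) ^ 2 * Real.exp (-(x - y) ^ 2 / (2 * t))) μ := by
  apply integrable_of_le_exp hint
    (((by fun_prop : Continuous fun y : ℝ => (x - y) ^ 2).mul (K_cont t x)).aestronglyMeasurable) (2*t)
  intro y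
  show |(x - y) ^ 2 * Real.exp (-(x - y) ^ 2 / (2 * t))| ≤ _
  rw [abs_mul, abs_of_pos (Real.exp_pos _), abs_of_nonneg (sq_nonneg _)]
  have h2 : (1:ℝ) ≤ Real.exp (ε * y ^ 2) := Real.one_le_exp (by positivity)
  nlinarith [sq_mul_exp_le ht0 (x - y)]

set_option maxHeartbeats 1000000 in
/-- The key estimate: at a critical point, the second derivative integrand has
negative integral. -/
lemma crit_lemma (hε : 0 < ε) (hint : Integrable (fun y => Real.exp (ε * y ^ 2)) μ)
    {α r : ℝ} (hα : α = ∫ y, Real.exp (ε * y ^ 2) ∂μ)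
    (hr0 : 0 ≤ r) (hr2 : ε * r ^ 2 = Real.log (2 * α)) (ht : 36 * r ^ 2 ≤ t)
    {x : ℝ} (hmean : ∫ y, (y - x) * Real.exp (-(x - y) ^ 2 / (2 * t)) ∂μ = 0) :
    ∫ y, ((x - y) ^ 2 / t ^ 2 - 1 / t) * Real.exp (-(x - y) ^ 2 / (2 * t)) ∂μ < 0 := by
  have hα1 : 1 ≤ α := hα ▸ alpha_ge_one hint hε
  have hL2 : (0.69:ℝ) ≤ Real.log (2 * α) := by
    have h1 : Real.log 2 ≤ Real.log (2 * α) := Real.log_le_log (by norm_num) (by linarith)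
    have := Real.log_two_gt_d9; linarith
  have hεr : (0.69:ℝ) ≤ ε * r ^ 2 := by rw [hr2]; exact hL2
  have hr0' : 0 < r := by
    rcases lt_or_eq_of_le hr0 with h | h
    · exact h
    · exfalso; rw [← h] at hεr; simp at hεr; linarith
  have ht0 : 0 < t := lt_of_lt_of_le (by positivity) ht
  have hεt : 36 * (ε * r ^ 2) ≤ ε * t := by
    have := mul_le_mul_of_nonneg_left ht hε.le; nlinarith
  have hK := integrable_K (μ := μ) hε ht0 hint x
  have hyxK := integrable_yxK (μ := μ) hε ht0 hint x
  have hyK := integrable_yK (μ := μ) hε ht0 hint x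
  have hy2K := integrable_y2K (μ := μ) hε ht0 hint x
  have hxy2K := integrable_xy2K (μ := μ) hε ht0 hint x
  -- |x| < 5r from the mean condition
  have hxub : x < 5 * r := by
    by_contra h
    push_neg at h
    exact absurd hmean (ne_of_lt (step1pos hε hint hα hr0 hr2 ht h))
  have hxlb : -(5 * r) < x := by
    by_contra h
    push_neg at h
    exact absurd hmean.symm (ne_of_lt (step1neg hε hint hα hr0 hr2 ht h))
  -- lower bound on ∫ K
  have hexphalf : Real.exp (-(1/2) : ℝ) ≥ 1/2 := by
    have h1 : Real.exp ((1:ℝ)/2) ^ 2 = Real.exp 1 := by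
      rw [sq, ← Real.exp_add]; norm_num
    have h2 : Real.exp ((1:ℝ)/2) ≤ 2 := by
      nlinarith [Real.exp_one_lt_d9, Real.exp_pos ((1:ℝ)/2)]
    rw [Real.exp_neg]
    rw [ge_iff_le, le_inv_comm₀ (by norm_num) (Real.exp_pos _)]
    linarith
  have hBlow : (1:ℝ)/4 ≤ ∫ y, Real.exp (-(x - y) ^ 2 / (2 * t)) ∂μ := by
    have hbulk := half_le_bulk hε hint hα hr0 hr2
    set c₀ := Real.exp (-(36 * r ^ 2) / (2 * t)) with hc₀
    have hc₀half : 1/2 ≤ c₀ := by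
      calc (1:ℝ)/2 ≤ Real.exp (-(1/2):ℝ) := hexphalf
        _ ≤ c₀ := by
            apply Real.exp_le_exp.2
            rw [neg_div, neg_le_neg_iff, div_le_div_iff₀ (by positivity) (by norm_num)]
            linarith
    have hpt : ∀ y ∈ Icc (-r) r, c₀ ≤ Real.exp (-(x - y) ^ 2 / (2 * t)) := by
      intro y hy
      obtain ⟨hy1, hy2⟩ := hy
      apply Real.exp_le_exp.2
      rw [div_le_div_iff₀ (by positivity) (by positivity)]
      have h1 : (x - y) ^ 2 ≤ 36 * r ^ 2 := by nlinarith
      nlinarith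
    have h1 : c₀ * (μ (Icc (-r) r)).toReal
        ≤ ∫ y in Icc (-r) r, Real.exp (-(x - y) ^ 2 / (2 * t)) ∂μ := by
        have := setIntegral_ge_of_const_le measurableSet_Icc (measure_lt_top μ _).ne hpt
          hK.integrableOn
        rw [smul_eq_mul, mul_comm] at this; exact this
    have h2 : ∫ y in Icc (-r) r, Real.exp (-(x - y) ^ 2 / (2 * t)) ∂μ
        ≤ ∫ y, Real.exp (-(x - y) ^ 2 / (2 * t)) ∂μ :=
      setIntegral_le_integral hK (ae_of_all _ fun y => (Real.exp_pos _).le)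
    nlinarith [hbulk, hc₀half]
  set B := ∫ y, Real.exp (-(x - y) ^ 2 / (2 * t)) ∂μ with hB
  -- tail bound for ∫ y² K
  have htail : ∫ y, y ^ 2 * Real.exp (-(x - y) ^ 2 / (2 * t)) ∂μ ≤ (13/25) * t * B := by
    set S := {y : ℝ | t/2 ≤ y ^ 2} with hS
    have hSm : MeasurableSet S := measurableSet_le measurable_const ((continuous_pow 2).measurable)
    have hsplit : ∫ y, y ^ 2 * Real.exp (-(x - y) ^ 2 / (2 * t)) ∂μ
        = (∫ y in S, y ^ 2 * Real.exp (-(x - y) ^ 2 / (2 * t)) ∂μ)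
          + ∫ y in Sᶜ, y ^ 2 * Real.exp (-(x - y) ^ 2 / (2 * t)) ∂μ :=
      (integral_add_compl hSm hy2K).symm
    have hcompl : ∫ y in Sᶜ, y ^ 2 * Real.exp (-(x - y) ^ 2 / (2 * t)) ∂μ
        ≤ (t/2) * B := by
      calc ∫ y in Sᶜ, y ^ 2 * Real.exp (-(x - y) ^ 2 / (2 * t)) ∂μ
          ≤ ∫ y in Sᶜ, (t/2) * Real.exp (-(x - y) ^ 2 / (2 * t)) ∂μ := by
            apply setIntegral_mono_on hy2K.integrableOn
              ((hK.const_mul _).integrableOn) hSm.compl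
            intro y hy
            have : ¬ (t/2 ≤ y ^ 2) := hy
            push_neg at this
            apply mul_le_mul_of_nonneg_right this.le (Real.exp_pos _).le
        _ = (t/2) * ∫ y in Sᶜ, Real.exp (-(x - y) ^ 2 / (2 * t)) ∂μ := integral_const_mul _ _
        _ ≤ (t/2) * B := by
            apply mul_le_mul_of_nonneg_left _ (by positivity)
            exact setIntegral_le_integral hK (ae_of_all _ fun y => (Real.exp_pos _).le)
    have hαE : α * Real.exp (-(ε * (t/2))) ≤ 1/100 := by
      have hL18 : 18 * (ε * r ^ 2) ≤ ε * (t/2) := by linarith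
      have h18 : Real.exp (18 * (ε * r ^ 2)) = (2 * α) ^ 18 := by
        rw [hr2]
        rw [show (18:ℝ) * Real.log (2*α) = (18:ℕ) * Real.log (2*α) by norm_num]
        rw [Real.exp_nat_mul, Real.exp_log (by linarith)]
      have hpow : α ≤ α ^ 18 := le_self_pow₀ (by linarith) (by norm_num)
      have hpow2 : (2*α) ^ 18 = 262144 * α ^ 18 := by rw [mul_pow]; norm_num
      have hE : Real.exp (-(ε * (t/2))) ≤ ((2*α) ^ 18)⁻¹ := by
        rw [← h18, ← Real.exp_neg]
        exact Real.exp_le_exp.2 (by linarith)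
      have h2α : (0:ℝ) < (2*α) ^ 18 := by positivity
      calc α * Real.exp (-(ε * (t/2))) ≤ α * ((2*α) ^ 18)⁻¹ := by
            apply mul_le_mul_of_nonneg_left hE (by linarith)
        _ ≤ 1/100 := by
            rw [mul_inv_le_iff₀ h2α]
            calc α ≤ α ^ 18 := hpow
              _ ≤ 1/100 * (2*α) ^ 18 := by rw [hpow2]; nlinarith [pow_nonneg (show (0:ℝ) ≤ α by linarith) 18]
    have htailS : ∫ y in S, y ^ 2 * Real.exp (-(x - y) ^ 2 / (2 * t)) ∂μ
        ≤ (t/2) * (α * Real.exp (-(ε * (t/2)))) := by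
      have hpt : ∀ y ∈ S, y ^ 2 * Real.exp (-(x - y) ^ 2 / (2 * t))
          ≤ ((t/2) * Real.exp (-(ε * (t/2)))) * Real.exp (ε * y ^ 2) := by
        intro y hy
        have hy' : t/2 ≤ y ^ 2 := hy
        have hd := decay_mono hε (by linarith : 1 ≤ ε * (t/2)) hy'
        calc y ^ 2 * Real.exp (-(x - y) ^ 2 / (2 * t)) ≤ y ^ 2 * 1 :=
              mul_le_mul_of_nonneg_left (K_le_one ht0 x y) (sq_nonneg y)
          _ = (y ^ 2 * Real.exp (-(ε * y ^ 2))) * Real.exp (ε * y ^ 2) := by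
              rw [mul_assoc, ← Real.exp_add]; simp
          _ ≤ ((t/2) * Real.exp (-(ε * (t/2)))) * Real.exp (ε * y ^ 2) :=
              mul_le_mul_of_nonneg_right hd (Real.exp_pos _).le
      calc ∫ y in S, y ^ 2 * Real.exp (-(x - y) ^ 2 / (2 * t)) ∂μ
          ≤ ∫ y in S, ((t/2) * Real.exp (-(ε * (t/2)))) * Real.exp (ε * y ^ 2) ∂μ :=
            setIntegral_mono_on hy2K.integrableOn ((hint.const_mul _).integrableOn) hSm hpt
        _ ≤ ∫ y, ((t/2) * Real.exp (-(ε * (t/2)))) * Real.exp (ε * y ^ 2) ∂μ :=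
            setIntegral_le_integral (hint.const_mul _) (ae_of_all _ fun y => by positivity)
        _ = (t/2) * (α * Real.exp (-(ε * (t/2)))) := by
            rw [integral_const_mul, ← hα]; ring
    have hquarter : 1 ≤ 4 * B := by linarith
    have : (t/2) * (α * Real.exp (-(ε * (t/2)))) ≤ (t/2) * (1/100) := by
      apply mul_le_mul_of_nonneg_left hαE (by positivity)
    have h4 : (t/2) * (1/100) ≤ (t/2) * (1/100) * (4 * B) := by
      nlinarith [hquarter, ht0]
    rw [hsplit]
    nlinarith [hcompl, htailS]
  -- mean condition: ∫ y K = x ∫ K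
  have hmean2 : ∫ y, y * Real.exp (-(x - y) ^ 2 / (2 * t)) ∂μ = x * B := by
    have he : (fun y => (y - x) * Real.exp (-(x - y) ^ 2 / (2 * t)))
        = fun y => y * Real.exp (-(x - y) ^ 2 / (2 * t))
          - x * Real.exp (-(x - y) ^ 2 / (2 * t)) := by
      funext y; ring
    rw [he, integral_sub hyK (hK.const_mul x), integral_const_mul] at hmean
    rw [hB]; linarith
  -- second moment identity
  have hid : ∫ y, (x - y) ^ 2 * Real.exp (-(x - y) ^ 2 / (2 * t)) ∂μ
      = (∫ y, y ^ 2 * Real.exp (-(x - y) ^ 2 / (2 * t)) ∂μ) - x ^ 2 * B := by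
    have he : (fun y => (x - y) ^ 2 * Real.exp (-(x - y) ^ 2 / (2 * t)))
        = fun y => (y ^ 2 * Real.exp (-(x - y) ^ 2 / (2 * t))
            - (2*x) * (y * Real.exp (-(x - y) ^ 2 / (2 * t))))
          + x ^ 2 * Real.exp (-(x - y) ^ 2 / (2 * t)) := by
      funext y; ring
    rw [he]
    have hi1 : Integrable (fun y => y ^ 2 * Real.exp (-(x - y) ^ 2 / (2 * t))
        - 2 * x * (y * Real.exp (-(x - y) ^ 2 / (2 * t)))) μ := hy2K.sub (hyK.const_mul (2*x))
    have hi2 : Integrable (fun y => x ^ 2 * Real.exp (-(x - y) ^ 2 / (2 * t))) μ :=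
      hK.const_mul _
    rw [integral_add hi1 hi2, integral_sub hy2K (hyK.const_mul (2*x)),
      integral_const_mul, integral_const_mul, hmean2, ← hB]
    ring
  -- conclude
  have hfinal : ∫ y, (x - y) ^ 2 * Real.exp (-(x - y) ^ 2 / (2 * t)) ∂μ < t * B := by
    rw [hid]
    nlinarith [sq_nonneg x, hBlow, ht0]
  have he3 : (fun y => ((x - y) ^ 2 / t ^ 2 - 1 / t) * Real.exp (-(x - y) ^ 2 / (2 * t)))
      = fun y => (1/t^2) * ((x - y) ^ 2 * Real.exp (-(x - y) ^ 2 / (2 * t)))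
        - (1/t) * Real.exp (-(x - y) ^ 2 / (2 * t)) := by
    funext y; field_simp
  rw [he3, integral_sub (hxy2K.const_mul _) (hK.const_mul _), integral_const_mul,
    integral_const_mul, ← hB]
  have ht2 : (0:ℝ) < t ^ 2 := by positivity
  rw [sub_neg]
  calc 1/t^2 * ∫ y, (x - y) ^ 2 * Real.exp (-(x - y) ^ 2 / (2 * t)) ∂μ
      < 1/t^2 * (t * B) := by
        apply mul_lt_mul_of_pos_left hfinal (by positivity)
    _ = 1/t * B := by field_simp
  -- done

end Crit
section Deriv

open MeasureTheory Real Set Filter Topology Metric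

variable {μ : Measure ℝ} [IsProbabilityMeasure μ] {ε t : ℝ}

lemma hasDerivAt_f (hε : 0 < ε) (ht0 : 0 < t)
    (hint : Integrable (fun y => Real.exp (ε * y ^ 2)) μ) (x₀ : ℝ) :
    HasDerivAt (fun x => ∫ y, Real.exp (-(x - y) ^ 2 / (2 * t)) ∂μ)
      (∫ y, (y - x₀)/t * Real.exp (-(x₀ - y) ^ 2 / (2 * t)) ∂μ) x₀ := by
  have key := hasDerivAt_integral_of_dominated_loc_of_deriv_le (μ := μ) (𝕜 := ℝ)
    (F := fun x y => Real.exp (-(x - y) ^ 2 / (2 * t)))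
    (F' := fun x y => (y - x)/t * Real.exp (-(x - y) ^ 2 / (2 * t)))
    (x₀ := x₀) (bound := fun _ => Real.sqrt t / t) (Metric.ball_mem_nhds x₀ one_pos)
    (Eventually.of_forall fun x => (K_cont t x).aestronglyMeasurable)
    (integrable_K hε ht0 hint x₀)
    ((by fun_prop : Continuous fun y : ℝ => (y - x₀)/t * Real.exp (-(x₀ - y) ^ 2 / (2 * t))).aestronglyMeasurable)
    (ae_of_all _ fun y x _ => ?_) (integrable_const _)
    (ae_of_all _ fun y x _ => ?_)
  · exact key.2
  · -- bound
    rw [Real.norm_eq_abs, abs_mul, abs_of_pos (Real.exp_pos _), abs_div,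
      abs_of_pos ht0]
    rw [div_mul_eq_mul_div, div_le_div_iff₀ ht0 ht0]
    have h1 : (x - y)^2 = (y - x)^2 := by ring
    have := abs_mul_exp_le_sqrt ht0 (y - x)
    rw [← h1] at this
    nlinarith [ht0]
  · -- differentiability
    have h1 : HasDerivAt (fun x : ℝ => -(x - y) ^ 2 / (2 * t))
        (-(2 * (x - y)) / (2 * t)) x := by
      have h2 : HasDerivAt (fun x : ℝ => x - y) 1 x := (hasDerivAt_id x).sub_const y
      have h3 := (h2.pow 2).neg.div_const (2 * t)
      simpa using h3
    have h4 := h1.exp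
    refine h4.congr_deriv ?_
    ring

lemma hasDerivAt_g (hε : 0 < ε) (ht0 : 0 < t)
    (hint : Integrable (fun y => Real.exp (ε * y ^ 2)) μ) (x₀ : ℝ) :
    HasDerivAt (fun x => ∫ y, (y - x)/t * Real.exp (-(x - y) ^ 2 / (2 * t)) ∂μ)
      (∫ y, ((x₀ - y) ^ 2 / t ^ 2 - 1 / t) * Real.exp (-(x₀ - y) ^ 2 / (2 * t)) ∂μ) x₀ := by
  have key := hasDerivAt_integral_of_dominated_loc_of_deriv_le (μ := μ) (𝕜 := ℝ)
    (F := fun x y => (y - x)/t * Real.exp (-(x - y) ^ 2 / (2 * t)))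
    (F' := fun x y => ((x - y) ^ 2 / t ^ 2 - 1 / t) * Real.exp (-(x - y) ^ 2 / (2 * t)))
    (x₀ := x₀) (bound := fun _ => 3 / t) (Metric.ball_mem_nhds x₀ one_pos)
    (Eventually.of_forall fun x =>
      (by fun_prop : Continuous fun y : ℝ => (y - x)/t * Real.exp (-(x - y) ^ 2 / (2 * t))).aestronglyMeasurable)
    ((integrable_yxK hε ht0 hint x₀).div_const t |>.congr ?_)
    ((by fun_prop : Continuous fun y : ℝ => ((x₀ - y) ^ 2 / t ^ 2 - 1 / t) * Real.exp (-(x₀ - y) ^ 2 / (2 * t))).aestronglyMeasurable)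
    (ae_of_all _ fun y x _ => ?_) (integrable_const _)
    (ae_of_all _ fun y x _ => ?_)
  · exact key.2
  · exact ae_of_all _ fun y => by
      show (y - x₀) * Real.exp (-(x₀ - y) ^ 2 / (2 * t)) / t
        = (y - x₀)/t * Real.exp (-(x₀ - y) ^ 2 / (2 * t))
      ring
  · -- bound
    rw [Real.norm_eq_abs, abs_mul, abs_of_pos (Real.exp_pos _)]
    have h1 : |(x - y) ^ 2 / t ^ 2 - 1 / t| ≤ (x - y) ^ 2 / t ^ 2 + 1 / t := by
      have := abs_sub ((x - y) ^ 2 / t ^ 2) (1 / t)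
      calc |(x - y) ^ 2 / t ^ 2 - 1 / t| ≤ |(x - y) ^ 2 / t ^ 2| + |1 / t| := abs_sub _ _
        _ = (x - y) ^ 2 / t ^ 2 + 1 / t := by
            rw [abs_of_nonneg (by positivity), abs_of_pos (by positivity)]
    have hKpos := Real.exp_pos (-(x - y) ^ 2 / (2 * t))
    have hK1 := K_le_one ht0 x y
    have hsq := sq_mul_exp_le ht0 (x - y)
    calc |(x - y) ^ 2 / t ^ 2 - 1 / t| * Real.exp (-(x - y) ^ 2 / (2 * t))
        ≤ ((x - y) ^ 2 / t ^ 2 + 1 / t) * Real.exp (-(x - y) ^ 2 / (2 * t)) :=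
          mul_le_mul_of_nonneg_right h1 hKpos.le
      _ = (1/t^2) * ((x - y) ^ 2 * Real.exp (-(x - y) ^ 2 / (2 * t)))
          + (1/t) * Real.exp (-(x - y) ^ 2 / (2 * t)) := by ring
      _ ≤ (1/t^2) * (2 * t) + (1/t) * 1 := by
          have ht2 : (0:ℝ) < 1/t^2 := by positivity
          have ht1 : (0:ℝ) < 1/t := by positivity
          nlinarith
      _ = 3 / t := by field_simp; ring
  · -- differentiability
    have h2 : HasDerivAt (fun x : ℝ => (y - x)/t) (-1/t) x := by
      simpa using ((hasDerivAt_id x).const_sub y).div_const t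
    have h1 : HasDerivAt (fun x : ℝ => -(x - y) ^ 2 / (2 * t))
        (-(2 * (x - y)) / (2 * t)) x := by
      have h2' : HasDerivAt (fun x : ℝ => x - y) 1 x := (hasDerivAt_id x).sub_const y
      have h3 := (h2'.pow 2).neg.div_const (2 * t)
      simpa using h3
    have h4 := h2.mul h1.exp
    refine h4.congr_deriv ?_
    ring

end Deriv
section Sign

open MeasureTheory Real Set Filter Topology

/-- If every zero of `g = f'` has a strictly negative derivative, and `f` has a global max
at `a`, then `g ≥ 0` left of `a`. -/
lemma deriv_nonneg_left {f g : ℝ → ℝ} (hf : ∀ x, HasDerivAt f (g x) x)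
    (hg : Continuous g)
    (hcrit : ∀ x, g x = 0 → ∃ h', h' < 0 ∧ HasDerivAt g h' x)
    {a : ℝ} (ha : ∀ y, f y ≤ f a) : ∀ x, x < a → 0 ≤ g x := by
  intro x₀ hx₀a
  by_contra hneg
  push_neg at hneg
  -- there is a point in [x₀, a] where g ≥ 0
  have hz : ∃ z ∈ Icc x₀ a, 0 ≤ g z := by
    by_contra h
    push_neg at h
    have hanti : StrictAntiOn f (Icc x₀ a) := by
      apply strictAntiOn_of_deriv_neg (convex_Icc x₀ a)
        (fun x _ => (hf x).continuousAt.continuousWithinAt)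
      intro x hx
      rw [interior_Icc] at hx
      rw [(hf x).deriv]
      exact h x ⟨hx.1.le, hx.2.le⟩
    have := hanti (left_mem_Icc.2 hx₀a.le) (right_mem_Icc.2 hx₀a.le) hx₀a
    exact absurd (ha x₀) (by linarith)
  obtain ⟨z, hzmem, hz0⟩ := hz
  have hx₀z : x₀ < z := by
    rcases lt_or_eq_of_le hzmem.1 with h | h
    · exact h
    · exfalso; rw [← h] at hz0; linarith
  -- zero set
  set Z := Icc x₀ z ∩ g ⁻¹' {0} with hZ
  have hZne : Z.Nonempty := by
    have hiv := intermediate_value_Icc hx₀z.le hg.continuousOn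
    have h0 : (0:ℝ) ∈ Icc (g x₀) (g z) := ⟨hneg.le, hz0⟩
    obtain ⟨w, hw, hw0⟩ := hiv h0
    exact ⟨w, hw, hw0⟩
  have hZclosed : IsClosed Z := isClosed_Icc.inter (isClosed_singleton.preimage hg)
  have hZbdd : BddBelow Z := (bddBelow_Icc).mono inter_subset_left
  set m := sInf Z with hm
  have hmZ : m ∈ Z := hZclosed.csInf_mem hZne hZbdd
  have hgm : g m = 0 := hmZ.2
  have hx₀m : x₀ < m := by
    rcases lt_or_eq_of_le hmZ.1.1 with h | h
    · exact h
    · exfalso; rw [← h] at hgm; exact hneg.ne hgm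
  -- g < 0 on [x₀, m)
  have hneg_on : ∀ w, x₀ ≤ w → w < m → g w < 0 := by
    intro w hw1 hw2
    by_contra h
    push_neg at h
    obtain ⟨w', hw', hw'0⟩ := intermediate_value_Icc hw1 hg.continuousOn ⟨hneg.le, h⟩
    have : w' ∈ Z := ⟨⟨hw'.1, le_trans hw'.2 (le_trans hw2.le (hmZ.1.2))⟩, hw'0⟩
    have := csInf_le hZbdd this
    rw [← hm] at this
    linarith [hw'.2]
  -- derivative at m is negative, so g > 0 just left of m
  obtain ⟨h', hh'neg, hd⟩ := hcrit m hgm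
  have hslope := hasDerivAt_iff_tendsto_slope.1 hd
  have hev : ∀ᶠ w in 𝓝[≠] m, slope g m w < 0 :=
    hslope.eventually (tendsto_id.eventually_lt_const hh'neg)
  have hev' : ∀ᶠ w in 𝓝[<] m, slope g m w < 0 :=
    hev.filter_mono (nhdsWithin_mono m fun w hw => ne_of_lt hw)
  have hIoo : Ioo x₀ m ∈ 𝓝[<] m := Ioo_mem_nhdsLT hx₀m
  obtain ⟨w, hw1, hw2⟩ := (hev'.and (eventually_of_mem hIoo fun w hw => hw)).exists
  rw [slope_def_field, hgm, sub_zero] at hw1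
  have hwm : w - m < 0 := by linarith [hw2.2]
  have hgw : 0 < g w := by
    have := div_neg_iff.1 hw1
    rcases this with ⟨h1, h2⟩ | ⟨h1, h2⟩
    · linarith
    · linarith
  exact absurd (hneg_on w hw2.1.le hw2.2) (by linarith)

lemma deriv_nonpos_right {f g : ℝ → ℝ} (hf : ∀ x, HasDerivAt f (g x) x)
    (hg : Continuous g)
    (hcrit : ∀ x, g x = 0 → ∃ h', h' < 0 ∧ HasDerivAt g h' x)
    {a : ℝ} (ha : ∀ y, f y ≤ f a) : ∀ x, a < x → g x ≤ 0 := by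
  intro x hax
  have hf' : ∀ s, HasDerivAt (fun s => f (-s)) (-g (-s)) s := by
    intro s
    have := (hf (-s)).comp s (hasDerivAt_neg s)
    simpa [mul_comm, Function.comp_def] using this
  have hg' : Continuous fun s => -g (-s) := (hg.comp continuous_neg).neg
  have hcrit' : ∀ s, -g (-s) = 0 → ∃ h', h' < 0 ∧ HasDerivAt (fun s => -g (-s)) h' s := by
    intro s hs
    have hgs : g (-s) = 0 := by linarith [neg_eq_zero.1 hs]
    obtain ⟨h', hh', hd⟩ := hcrit (-s) hgs
    refine ⟨h', hh', ?_⟩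
    have := (hd.comp s (hasDerivAt_neg s)).neg
    simp at this; exact this
  have ha' : ∀ y, (fun s => f (-s)) y ≤ (fun s => f (-s)) (-a) := by
    intro y; simp only [neg_neg]; exact ha (-y)
  have key := deriv_nonneg_left hf' hg' hcrit' ha' (-x) (by linarith)
  simp only [neg_neg] at key
  linarith

end Sign
section Final

open MeasureTheory Real Set Filter Topology

variable {μ : Measure ℝ} [IsProbabilityMeasure μ] {ε t : ℝ}

lemma tendsto_K_zero_aux (ht0 : 0 < t) (y : ℝ) {l : Filter ℝ}
    (hsq : Tendsto (fun x => (x - y) ^ 2) l atTop) :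
    Tendsto (fun x => Real.exp (-(x - y) ^ 2 / (2 * t))) l (𝓝 0) := by
  have h1 : Tendsto (fun s : ℝ => -s / (2 * t)) atTop atBot := by
    apply Tendsto.atBot_div_const (by positivity)
    exact tendsto_neg_atTop_atBot
  exact Real.tendsto_exp_atBot.comp (h1.comp hsq)

lemma tendsto_f_cocompact (hε : 0 < ε) (ht0 : 0 < t)
    (hint : Integrable (fun y => Real.exp (ε * y ^ 2)) μ) :
    Tendsto (fun x => ∫ y, Real.exp (-(x - y) ^ 2 / (2 * t)) ∂μ) (cocompact ℝ) (𝓝 0) := by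
  rw [cocompact_eq_atBot_atTop, tendsto_sup]
  constructor <;>
  · have h0 : (0:ℝ) = ∫ _y, (0:ℝ) ∂μ := by simp
    rw [h0]
    apply tendsto_integral_filter_of_dominated_convergence (fun _ => (1:ℝ))
    · exact Eventually.of_forall fun x => (K_cont t x).aestronglyMeasurable
    · apply Eventually.of_forall fun x => (ae_of_all _ fun y => ?_)
      rw [Real.norm_eq_abs, abs_of_pos (Real.exp_pos _)]
      exact K_le_one ht0 x y
    · exact integrable_const 1
    · apply ae_of_all _ fun y => ?_
      apply tendsto_K_zero_aux ht0
      first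
      | · -- atBot case
          have harg : Tendsto (fun x : ℝ => y - x) atBot atTop :=
            tendsto_atTop_add_const_left _ y tendsto_neg_atBot_atTop
          have hsq := (tendsto_pow_atTop (two_ne_zero)).comp harg
          apply hsq.congr fun x => by simp; ring
      | · -- atTop case
          have harg : Tendsto (fun x : ℝ => x - y) atTop atTop :=
            tendsto_atTop_add_const_right _ (-y) tendsto_id
          exact (tendsto_pow_atTop (two_ne_zero)).comp harg

end Final
/-- A function `f : ℝ → ℝ` is unimodal if there is a mode `a` such that `f` is
nondecreasing on `(-∞, a]` and nonincreasing on `[a, ∞)`. -/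
def Unimodal (f : ℝ → ℝ) : Prop :=
  ∃ a : ℝ, MonotoneOn f (Set.Iic a) ∧ AntitoneOn f (Set.Ici a)

theorem gaussian_convolution_unimodal_large_time
    (μ : Measure ℝ) [IsProbabilityMeasure μ] (ε : ℝ) (hε : 0 < ε)
    (hint : Integrable (fun x => Real.exp (ε * x ^ 2)) μ)
    (α : ℝ) (hα : α = ∫ x, Real.exp (ε * x ^ 2) ∂μ)
    (t : ℝ) (ht : 36 * Real.log (2 * α) / ε ≤ t) :
    Unimodal (fun x => ∫ y, Real.exp (-(x - y) ^ 2 / (2 * t)) ∂μ) := by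
  have hα1 : 1 ≤ α := hα ▸ alpha_ge_one hint hε
  have hL2 : (0.69:ℝ) ≤ Real.log (2 * α) := by
    have h1 : Real.log 2 ≤ Real.log (2 * α) := Real.log_le_log (by norm_num) (by linarith)
    have := Real.log_two_gt_d9; linarith
  set r := Real.sqrt (Real.log (2 * α) / ε) with hrdef
  have hr0 : 0 ≤ r := Real.sqrt_nonneg _
  have hr2 : ε * r ^ 2 = Real.log (2 * α) := by
    rw [hrdef, Real.sq_sqrt (by positivity)]
    field_simp
  have ht36 : 36 * r ^ 2 ≤ t := by
    have : r ^ 2 = Real.log (2 * α) / ε := by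
      rw [hrdef]; exact Real.sq_sqrt (by positivity)
    rw [this]
    calc 36 * (Real.log (2 * α) / ε) = 36 * Real.log (2 * α) / ε := by ring
      _ ≤ t := ht
  have ht0 : 0 < t := by
    have h1 : (0.69:ℝ) ≤ ε * r ^ 2 := hr2 ▸ hL2
    nlinarith [sq_nonneg r, hε]
  set f := fun x => ∫ y, Real.exp (-(x - y) ^ 2 / (2 * t)) ∂μ with hfdef
  set g := fun x => ∫ y, (y - x)/t * Real.exp (-(x - y) ^ 2 / (2 * t)) ∂μ with hgdef
  have hf : ∀ x, HasDerivAt f (g x) x := fun x => hasDerivAt_f hε ht0 hint x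
  have hgd : ∀ x, HasDerivAt g
      (∫ y, ((x - y) ^ 2 / t ^ 2 - 1 / t) * Real.exp (-(x - y) ^ 2 / (2 * t)) ∂μ) x :=
    fun x => hasDerivAt_g hε ht0 hint x
  have hgc : Continuous g := continuous_iff_continuousAt.2 fun x => (hgd x).continuousAt
  have hfc : Continuous f := continuous_iff_continuousAt.2 fun x => (hf x).continuousAt
  have hcrit : ∀ x, g x = 0 → ∃ h', h' < 0 ∧ HasDerivAt g h' x := by
    intro x hgx
    refine ⟨_, ?_, hgd x⟩
    apply crit_lemma hε hint hα hr0 hr2 ht36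
    have he : ∫ y, (y - x)/t * Real.exp (-(x - y) ^ 2 / (2 * t)) ∂μ
        = (1/t) * ∫ y, (y - x) * Real.exp (-(x - y) ^ 2 / (2 * t)) ∂μ := by
      rw [← integral_const_mul]
      congr 1
      funext y
      ring
    have hgx' : ∫ y, (y - x)/t * Real.exp (-(x - y) ^ 2 / (2 * t)) ∂μ = 0 := hgx
    rw [he] at hgx'
    have ht' : (1:ℝ)/t ≠ 0 := by positivity
    exact (mul_eq_zero.1 hgx').resolve_left ht'
  have hfpos : 0 < f 0 := by
    rw [hfdef]
    rw [integral_pos_iff_support_of_nonneg (fun y => (Real.exp_pos _).le)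
      (integrable_K hε ht0 hint 0)]
    have hsupp : (Function.support fun y => Real.exp (-((0:ℝ) - y) ^ 2 / (2 * t))) = Set.univ :=
      Set.eq_univ_iff_forall.2 fun y => (Real.exp_pos _).ne'
    rw [hsupp]
    simp
  have hmax : ∃ a, ∀ y, f y ≤ f a := by
    apply hfc.exists_forall_ge' 0
    have hten := tendsto_f_cocompact hε ht0 hint
    have := hten.eventually_lt_const hfpos
    exact this.mono fun x hx => hx.le
  obtain ⟨a, ha⟩ := hmax
  have S1 := deriv_nonneg_left hf hgc hcrit ha
  have S2 := deriv_nonpos_right hf hgc hcrit ha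
  refine ⟨a, ?_, ?_⟩
  · apply monotoneOn_of_deriv_nonneg (convex_Iic a) hfc.continuousOn
    · intro x _
      exact (hf x).differentiableAt.differentiableWithinAt
    · intro x hx
      rw [interior_Iic] at hx
      rw [(hf x).deriv]
      exact S1 x hx
  · apply antitoneOn_of_deriv_nonpos (convex_Ici a) hfc.continuousOn
    · intro x _
      exact (hf x).differentiableAt.differentiableWithinAt
    · intro x hx
      rw [interior_Ici] at hx
      rw [(hf x).deriv]
      exact S2 x hx
end Step1b
end

section
/- Let μ be a Borel probability measure on ℝ and let ε > 0 be such that α := ∫_ℝ exp(ε x²) dμ(x) < ∞. Then for every t ≥ 36·log(2α)/ε, the function f_{μ,t}(x) = ∫_ℝ exp(-(x-y)²/(2t)) dμ(y) is differentiable on ℝ, and its derivative satisfies f_{μ,t}'(x) < 0 for every x ≥ √t/2 and f_{μ,t}'(x) > 0 for every x ≤ -√t/2. -/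
open MeasureTheory Real Set Filter Topology

lemma gcds_bound (t s : ℝ) (ht : 0 < t) :
    |s| * Real.exp (-s ^ 2 / (2 * t)) ≤ 2 * Real.sqrt t := by
  have hst : 0 < Real.sqrt t := Real.sqrt_pos.mpr ht
  have hsq : Real.sqrt t ^ 2 = t := Real.sq_sqrt ht.le
  have hexp0 : -s ^ 2 / (2 * t) ≤ 0 := by
    rw [neg_div]; have : (0:ℝ) ≤ s ^ 2 / (2 * t) := by positivity
    linarith
  rcases le_or_gt |s| (Real.sqrt t) with h | h
  · calc |s| * Real.exp (-s ^ 2 / (2 * t)) ≤ Real.sqrt t * 1 :=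
          mul_le_mul h (Real.exp_le_one_iff.mpr hexp0) (Real.exp_nonneg _) hst.le
      _ ≤ 2 * Real.sqrt t := by nlinarith
  · have hs0 : 0 < |s| := lt_trans hst h
    have hs2 : (0:ℝ) < s ^ 2 := by rw [← sq_abs]; positivity
    have he : Real.exp (-s ^ 2 / (2 * t)) ≤ 2 * t / s ^ 2 := by
      rw [neg_div, Real.exp_neg]
      have h1 : s ^ 2 / (2 * t) ≤ Real.exp (s ^ 2 / (2 * t)) := by
        linarith [Real.add_one_le_exp (s ^ 2 / (2 * t))]
      have h2 : (Real.exp (s ^ 2 / (2 * t)))⁻¹ ≤ (s ^ 2 / (2 * t))⁻¹ :=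
        inv_anti₀ (by positivity) h1
      calc (Real.exp (s ^ 2 / (2 * t)))⁻¹ ≤ (s ^ 2 / (2 * t))⁻¹ := h2
        _ = 2 * t / s ^ 2 := by field_simp
    calc |s| * Real.exp (-s ^ 2 / (2 * t)) ≤ |s| * (2 * t / s ^ 2) :=
          mul_le_mul_of_nonneg_left he hs0.le
      _ = 2 * t / |s| := by rw [← sq_abs]; field_simp
      _ ≤ 2 * t / Real.sqrt t := by apply div_le_div_of_nonneg_left (by positivity) hst h.le
      _ = 2 * Real.sqrt t := by rw [div_eq_iff hst.ne']; nlinarith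

lemma gcds_hasDerivAt (t : ℝ) (ht : t ≠ 0) (y x : ℝ) :
    HasDerivAt (fun x => Real.exp (-(x - y) ^ 2 / (2 * t)))
      (-((x - y) / t) * Real.exp (-(x - y) ^ 2 / (2 * t))) x := by
  have h1 : HasDerivAt (fun x : ℝ => x - y) 1 x := (hasDerivAt_id x).sub_const y
  have h2 : HasDerivAt (fun x : ℝ => -(x - y) ^ 2 / (2 * t)) (-((x - y) / t)) x := by
    have := ((h1.fun_pow 2).fun_neg).div_const (2 * t)
    refine this.congr_deriv ?_
    field_simp; ring
  have := h2.exp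
  convert this using 1
  ring

lemma gcds_deriv (μ : Measure ℝ) [IsProbabilityMeasure μ] (t : ℝ) (ht : 0 < t) (x : ℝ) :
    HasDerivAt (fun x : ℝ => ∫ y, Real.exp (-(x - y) ^ 2 / (2 * t)) ∂μ)
      (∫ y, -((x - y) / t) * Real.exp (-(x - y) ^ 2 / (2 * t)) ∂μ) x := by
  have hcont : ∀ x : ℝ, Continuous (fun y : ℝ => Real.exp (-(x - y) ^ 2 / (2 * t))) := by
    intro x; continuity
  have hcont' : ∀ x : ℝ, Continuous (fun y : ℝ =>
      -((x - y) / t) * Real.exp (-(x - y) ^ 2 / (2 * t))) := by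
    intro x; continuity
  have key := hasDerivAt_integral_of_dominated_loc_of_deriv_le (μ := μ)
    (F := fun x y => Real.exp (-(x - y) ^ 2 / (2 * t)))
    (F' := fun x y => -((x - y) / t) * Real.exp (-(x - y) ^ 2 / (2 * t)))
    (x₀ := x) (bound := fun _ => 2 * Real.sqrt t / t) (Metric.ball_mem_nhds x one_pos)
    (Eventually.of_forall fun x => (hcont x).aestronglyMeasurable)
    ?_ ((hcont' x).aestronglyMeasurable) ?_ (integrable_const _) ?_
  · exact key.2
  · exact (integrable_const (1:ℝ)).mono' (hcont x).aestronglyMeasurable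
      (Eventually.of_forall fun y => by
        rw [Real.norm_eq_abs, Real.abs_exp]
        apply Real.exp_le_one_iff.mpr
        rw [neg_div]
        have : (0:ℝ) ≤ (x - y) ^ 2 / (2 * t) := by positivity
        linarith)
  · exact Eventually.of_forall fun y x' _ => by
      have := gcds_bound t (x' - y) ht
      rw [norm_mul, norm_neg, norm_div, Real.norm_eq_abs, Real.norm_eq_abs, Real.norm_eq_abs,
        abs_of_pos ht]
      rw [Real.abs_exp]
      rw [div_mul_eq_mul_div, div_le_div_iff₀ ht ht]
      nlinarith [Real.exp_pos (-(x' - y) ^ 2 / (2 * t))]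
  · exact Eventually.of_forall fun y x' _ => gcds_hasDerivAt t ht.ne' y x'

set_option maxHeartbeats 2000000 in
lemma gcds_key (μ : Measure ℝ) [IsProbabilityMeasure μ] (ε : ℝ) (hε : 0 < ε)
    (hint : Integrable (fun x => Real.exp (ε * x ^ 2)) μ)
    (α : ℝ) (hα : α = ∫ x, Real.exp (ε * x ^ 2) ∂μ)
    (t : ℝ) (ht : 36 * Real.log (2 * α) / ε ≤ t)
    (x : ℝ) (hx : Real.sqrt t / 2 ≤ x) :
    ∫ y, (y - x) * Real.exp (-(x - y) ^ 2 / (2 * t)) ∂μ < 0 := by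
  -- basic facts
  have hα1 : 1 ≤ α := by
    rw [hα]
    calc (1:ℝ) = ∫ _, (1:ℝ) ∂μ := by simp
      _ ≤ ∫ x, Real.exp (ε * x ^ 2) ∂μ :=
        integral_mono (integrable_const 1) hint fun y =>
          Real.one_le_exp (by positivity)
  have hα0 : 0 < α := by linarith
  have hL : 0 < Real.log (2 * α) := Real.log_pos (by linarith)
  have hlog2 : (0.6931:ℝ) < Real.log 2 := by
    linarith [Real.log_two_gt_d9]
  have hL2 : Real.log 2 ≤ Real.log (2 * α) := by
    apply Real.log_le_log (by norm_num); linarith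
  have ht0 : 0 < t := lt_of_lt_of_le (by positivity) ht
  have hst : 0 < Real.sqrt t := Real.sqrt_pos.mpr ht0
  have hsq : Real.sqrt t ^ 2 = t := Real.sq_sqrt ht0.le
  have hx0 : 0 < x := lt_of_lt_of_le (by positivity) hx
  have hεt : 36 * Real.log (2 * α) ≤ ε * t := by
    rw [div_le_iff₀ hε] at ht; linarith
  obtain ⟨R, hRdef⟩ : ∃ R : ℝ, R = Real.sqrt (Real.log (2 * α) / ε) := ⟨_, rfl⟩
  have hR0 : 0 < R := hRdef ▸ Real.sqrt_pos.mpr (by positivity)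
  have hR2 : R ^ 2 = Real.log (2 * α) / ε := hRdef ▸ Real.sq_sqrt (by positivity)
  have hεR2 : ε * R ^ 2 = Real.log (2 * α) := by rw [hR2]; field_simp
  have h36 : 36 * R ^ 2 ≤ t := by
    have h1 : ε * (36 * R ^ 2) ≤ ε * t := by nlinarith [hεR2, hεt]
    exact le_of_mul_le_mul_left h1 hε
  have h6R : 6 * R ≤ Real.sqrt t := by
    nlinarith [h36, hsq, sq_nonneg (6 * R - Real.sqrt t), mul_pos hR0 hst]
  have hRx : R ≤ x / 3 := by linarith
  -- constants
  obtain ⟨E₁, hE₁⟩ : ∃ E : ℝ, E = Real.exp (-(x + R) ^ 2 / (2 * t)) := ⟨_, rfl⟩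
  have hE₁0 : 0 < E₁ := hE₁ ▸ Real.exp_pos _
  obtain ⟨a, ha⟩ : ∃ a : ℝ, a = Real.sqrt t / 3 * E₁ := ⟨_, rfl⟩
  have ha0 : 0 < a := by rw [ha]; positivity
  obtain ⟨b, hb⟩ : ∃ b : ℝ, b = 2 * Real.sqrt t := ⟨_, rfl⟩
  have hb0 : 0 < b := by rw [hb]; positivity
  -- the dominating simple function
  obtain ⟨φ, hφ⟩ : ∃ φ : ℝ → ℝ, φ = fun y =>
    (Icc (-R) R).indicator (fun _ => -a) y + (Ioi x).indicator (fun _ => b) y := ⟨_, rfl⟩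
  have hmIcc : MeasurableSet (Icc (-R) R) := measurableSet_Icc
  have hmIoi : MeasurableSet (Ioi x) := measurableSet_Ioi
  have hφint : Integrable φ μ := by
    rw [hφ]
    exact ((integrable_const (-a)).indicator hmIcc).add ((integrable_const b).indicator hmIoi)
  have hgcont : Continuous (fun y : ℝ => (y - x) * Real.exp (-(x - y) ^ 2 / (2 * t))) :=
    (continuous_id.sub continuous_const).mul (Real.continuous_exp.comp
      ((((continuous_const.sub continuous_id).pow 2).neg).div_const (2 * t)))
  have hgint : Integrable (fun y : ℝ => (y - x) * Real.exp (-(x - y) ^ 2 / (2 * t))) μ := by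
    apply (integrable_const (2 * Real.sqrt t)).mono' hgcont.aestronglyMeasurable
    refine Eventually.of_forall fun y => ?_
    rw [Real.norm_eq_abs, abs_mul, Real.abs_exp]
    have := gcds_bound t (x - y) ht0
    rw [abs_sub_comm] at this
    exact this
  -- pointwise bound
  have hpt : ∀ y : ℝ, (y - x) * Real.exp (-(x - y) ^ 2 / (2 * t)) ≤ φ y := by
    intro y
    rcases le_or_gt y x with hyx | hyx
    · have hIoi : y ∉ Ioi x := by simpa using hyx
      by_cases hyI : y ∈ Icc (-R) R
      · -- y in [-R, R]: integrand ≤ -a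
        rw [hφ]
        simp only [Set.indicator_of_mem hyI, Set.indicator_of_notMem hIoi, add_zero]
        obtain ⟨hy1, hy2⟩ := hyI
        have hxy : Real.sqrt t / 3 ≤ x - y := by linarith
        have hee : E₁ ≤ Real.exp (-(x - y) ^ 2 / (2 * t)) := by
          rw [hE₁]
          apply Real.exp_le_exp.mpr
          rw [div_le_div_iff₀ (by positivity) (by positivity)]
          nlinarith [ht0, mul_nonneg (show (0:ℝ) ≤ y + R by linarith)
            (show (0:ℝ) ≤ 2 * x + R - y by linarith)]
        have : a ≤ (x - y) * Real.exp (-(x - y) ^ 2 / (2 * t)) := by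
          rw [ha]
          apply mul_le_mul hxy hee hE₁0.le (by linarith)
        nlinarith
      · -- R < y ≤ x : integrand ≤ 0 = φ y
        rw [hφ]
        simp only [Set.indicator_of_notMem hyI, Set.indicator_of_notMem hIoi, add_zero]
        have h0 : 0 ≤ (x - y) * Real.exp (-(x - y) ^ 2 / (2 * t)) :=
          mul_nonneg (by linarith) (Real.exp_nonneg _)
        nlinarith [h0]
    · -- y > x : integrand ≤ b
      have hIoi : y ∈ Ioi x := hyx
      have hyI : y ∉ Icc (-R) R := by
        intro h; exact absurd h.2 (by nlinarith)
      rw [hφ]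
      simp only [Set.indicator_of_notMem hyI, Set.indicator_of_mem hIoi, zero_add]
      have := gcds_bound t (x - y) ht0
      rw [abs_sub_comm, abs_of_pos (by linarith : 0 < y - x)] at this
      rw [hb]; exact this
  -- the integral of φ
  have hφval : ∫ y, φ y ∂μ =
      (μ (Icc (-R) R)).toReal * (-a) + (μ (Ioi x)).toReal * b := by
    rw [hφ, integral_add ((integrable_const (-a)).indicator hmIcc)
      ((integrable_const b).indicator hmIoi),
      integral_indicator_const _ hmIcc, integral_indicator_const _ hmIoi,
      smul_eq_mul, smul_eq_mul]
    rfl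
  -- Markov bounds
  have hmarkov : ∀ c : ℝ, Real.exp (ε * c ^ 2) *
      (μ {y : ℝ | Real.exp (ε * c ^ 2) ≤ Real.exp (ε * y ^ 2)}).toReal ≤ α := by
    intro c
    rw [hα]
    exact mul_meas_ge_le_integral_of_nonneg
      (Eventually.of_forall fun y => (Real.exp_pos _).le) hint _
  have hm2 : (μ (Ioi x)).toReal ≤ α * Real.exp (-(ε * x ^ 2)) := by
    have hsub : Ioi x ⊆ {y : ℝ | Real.exp (ε * x ^ 2) ≤ Real.exp (ε * y ^ 2)} := by
      intro y hy
      have hxy : x < y := hy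
      simp only [mem_setOf_eq]
      have hsq2 : x ^ 2 <= y ^ 2 := by nlinarith
      exact Real.exp_le_exp.mpr (mul_le_mul_of_nonneg_left hsq2 hε.le)
    have h1 : (μ (Ioi x)).toReal ≤
        (μ {y : ℝ | Real.exp (ε * x ^ 2) ≤ Real.exp (ε * y ^ 2)}).toReal :=
      ENNReal.toReal_mono (measure_ne_top μ _) (measure_mono hsub)
    have h2 := hmarkov x
    have hE : 0 < Real.exp (ε * x ^ 2) := Real.exp_pos _
    have h3 : (μ {y : ℝ | Real.exp (ε * x ^ 2) ≤ Real.exp (ε * y ^ 2)}).toReal ≤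
        α * Real.exp (-(ε * x ^ 2)) := by
      rw [Real.exp_neg, ← div_eq_mul_inv, le_div_iff₀ hE]
      linarith [h2, mul_comm (Real.exp (ε * x ^ 2))
        (μ {y : ℝ | Real.exp (ε * x ^ 2) ≤ Real.exp (ε * y ^ 2)}).toReal]
    linarith
  have hexpR : Real.exp (ε * R ^ 2) = 2 * α := by
    rw [hεR2, Real.exp_log (by linarith)]
  have hm1 : (1:ℝ) / 2 ≤ (μ (Icc (-R) R)).toReal := by
    have hsub : (Icc (-R) R)ᶜ ⊆ {y : ℝ | Real.exp (ε * R ^ 2) ≤ Real.exp (ε * y ^ 2)} := by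
      intro y hy
      simp only [mem_compl_iff, mem_Icc, not_and_or, not_le] at hy
      simp only [mem_setOf_eq]
      apply Real.exp_le_exp.mpr
      rcases hy with hy | hy
      · have hsq2 : R ^ 2 ≤ y ^ 2 := by nlinarith
        exact mul_le_mul_of_nonneg_left hsq2 hε.le
      · have hsq2 : R ^ 2 ≤ y ^ 2 := by nlinarith
        exact mul_le_mul_of_nonneg_left hsq2 hε.le
    have h1 : (μ (Icc (-R) R)ᶜ).toReal ≤
        (μ {y : ℝ | Real.exp (ε * R ^ 2) ≤ Real.exp (ε * y ^ 2)}).toReal :=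
      ENNReal.toReal_mono (measure_ne_top μ _) (measure_mono hsub)
    have h2 := hmarkov R
    nth_rewrite 1 [hexpR] at h2
    have hc : (μ (Icc (-R) R)ᶜ).toReal ≤ 1 / 2 := by
      by_contra hcon
      push_neg at hcon
      have h4 := mul_lt_mul_of_pos_left hcon (show (0:ℝ) < 2 * α by linarith)
      have h5 := mul_le_mul_of_nonneg_left h1 (show (0:ℝ) ≤ 2 * α by linarith)
      linarith [h4, h5, h2]
    have hcompl : (μ (Icc (-R) R)).toReal + (μ (Icc (-R) R)ᶜ).toReal = 1 := by
      rw [← ENNReal.toReal_add (measure_ne_top μ _) (measure_ne_top μ _),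
        prob_add_prob_compl hmIcc, ENNReal.toReal_one]
    linarith
  -- analytic estimate
  have hxt : t / 4 ≤ x ^ 2 := by nlinarith [hsq, hx, hst]
  have hlog6 : Real.log 6 < 2 := by
    rw [Real.log_lt_iff_lt_exp (by norm_num), show (2:ℝ) = 1 + 1 by norm_num, Real.exp_add]
    have h27 : (2.7:ℝ) < Real.exp 1 := by linarith [Real.exp_one_gt_d9]
    nlinarith [h27]
  have hlog12 : Real.log (12 * α) = Real.log 6 + Real.log (2 * α) := by
    rw [show (12:ℝ) * α = 6 * (2 * α) by ring, Real.log_mul (by norm_num) (by linarith)]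
  obtain ⟨u, hu⟩ : ∃ u : ℝ, u = x ^ 2 / t := ⟨_, rfl⟩
  have hu14 : 1 / 4 ≤ u := by rw [hu, le_div_iff₀ ht0]; linarith
  have hx2u : x ^ 2 = u * t := by rw [hu]; field_simp
  have hεxu : ε * x ^ 2 = ε * t * u := by rw [hx2u]; ring
  have h169 : (x + R) ^ 2 ≤ 16 / 9 * x ^ 2 := by
    have p1 : R * R ≤ (x / 3) * (x / 3) := mul_le_mul hRx hRx hR0.le (by positivity)
    have p2 : x * R ≤ x * (x / 3) := mul_le_mul_of_nonneg_left hRx hx0.le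
    nlinarith [p1, p2]
  have h1 : (x + R) ^ 2 / (2 * t) ≤ 8 / 9 * u := by
    rw [div_le_iff₀ (by positivity)]
    linarith [h169, hx2u]
  have hεt89 : (8:ℝ) / 9 < ε * t := by linarith [hεt, hL2, hlog2]
  have hmain : Real.log (12 * α) < ε * x ^ 2 - (x + R) ^ 2 / (2 * t) := by
    rw [hlog12, hεxu]
    have hprod : 0 ≤ (u - 1 / 4) * (ε * t - 8 / 9) :=
      mul_nonneg (by linarith) (by linarith)
    have hB : 9 * Real.log (2 * α) - 2 / 9 ≤ ε * t * u - 8 / 9 * u := by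
      linarith [hprod, hεt, hu14]
    linarith [h1, hB, hL2, hlog2, hlog6]
  have hkey : 12 * α * Real.exp (-(ε * x ^ 2)) < E₁ := by
    have h2 : 12 * α < Real.exp (ε * x ^ 2 - (x + R) ^ 2 / (2 * t)) :=
      (Real.log_lt_iff_lt_exp (by linarith)).mp hmain
    have h3 : Real.exp (ε * x ^ 2 - (x + R) ^ 2 / (2 * t)) = Real.exp (ε * x ^ 2) * E₁ := by
      rw [hE₁, ← Real.exp_add]; congr 1; ring
    calc 12 * α * Real.exp (-(ε * x ^ 2))
        < Real.exp (ε * x ^ 2) * E₁ * Real.exp (-(ε * x ^ 2)) := by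
          apply mul_lt_mul_of_pos_right _ (Real.exp_pos _)
          rw [← h3]; exact h2
      _ = E₁ * (Real.exp (ε * x ^ 2) * Real.exp (-(ε * x ^ 2))) := by ring
      _ = E₁ := by rw [← Real.exp_add]; simp
  -- conclusion
  have hfin : ∫ y, (y - x) * Real.exp (-(x - y) ^ 2 / (2 * t)) ∂μ ≤ ∫ y, φ y ∂μ :=
    integral_mono hgint hφint hpt
  apply lt_of_le_of_lt hfin
  rw [hφval]
  have hm20 : 0 ≤ (μ (Ioi x)).toReal := ENNReal.toReal_nonneg
  have hh1 : (1:ℝ) / 2 * a ≤ (μ (Icc (-R) R)).toReal * a :=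
    mul_le_mul_of_nonneg_right hm1 ha0.le
  have hh2 : (μ (Ioi x)).toReal * b ≤ α * Real.exp (-(ε * x ^ 2)) * b :=
    mul_le_mul_of_nonneg_right hm2 hb0.le
  have hh3 : Real.sqrt t / 6 * (12 * α * Real.exp (-(ε * x ^ 2))) < Real.sqrt t / 6 * E₁ :=
    mul_lt_mul_of_pos_left hkey (by positivity)
  have heq1 : (1:ℝ) / 2 * a = Real.sqrt t / 6 * E₁ := by rw [ha]; ring
  have heq2 : α * Real.exp (-(ε * x ^ 2)) * b
      = Real.sqrt t / 6 * (12 * α * Real.exp (-(ε * x ^ 2))) := by rw [hb]; ring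
  linarith [hh1, hh2, hh3, heq1, heq2]

theorem gaussian_convolution_deriv_sign_large_time
    (μ : Measure ℝ) [IsProbabilityMeasure μ] (ε : ℝ) (hε : 0 < ε)
    (hint : Integrable (fun x => Real.exp (ε * x ^ 2)) μ)
    (α : ℝ) (hα : α = ∫ x, Real.exp (ε * x ^ 2) ∂μ)
    (t : ℝ) (ht : 36 * Real.log (2 * α) / ε ≤ t) :
    Differentiable ℝ (fun x : ℝ => ∫ y, Real.exp (-(x - y) ^ 2 / (2 * t)) ∂μ) ∧
    (∀ x : ℝ, Real.sqrt t / 2 ≤ x →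
      deriv (fun x : ℝ => ∫ y, Real.exp (-(x - y) ^ 2 / (2 * t)) ∂μ) x < 0) ∧
    (∀ x : ℝ, x ≤ -(Real.sqrt t / 2) →
      0 < deriv (fun x : ℝ => ∫ y, Real.exp (-(x - y) ^ 2 / (2 * t)) ∂μ) x) := by
  have hα1 : 1 ≤ α := by
    rw [hα]
    calc (1:ℝ) = ∫ _, (1:ℝ) ∂μ := by simp
      _ ≤ ∫ x, Real.exp (ε * x ^ 2) ∂μ :=
        integral_mono (integrable_const 1) hint fun y =>
          Real.one_le_exp (by positivity)
  have hL : 0 < Real.log (2 * α) := Real.log_pos (by linarith)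
  have ht0 : 0 < t := lt_of_lt_of_le (div_pos (by linarith) hε) ht
  have hderiv := gcds_deriv μ t ht0
  have htrans : ∀ x : ℝ, (∫ y, -((x - y) / t) * Real.exp (-(x - y) ^ 2 / (2 * t)) ∂μ)
      = t⁻¹ * ∫ y, (y - x) * Real.exp (-(x - y) ^ 2 / (2 * t)) ∂μ := by
    intro x
    rw [← integral_const_mul]
    congr 1
    funext y
    rw [div_eq_mul_inv]
    ring
  refine ⟨fun x => (hderiv x).differentiableAt, fun x hx => ?_, fun x hx => ?_⟩
  · rw [(hderiv x).deriv, htrans]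
    exact mul_neg_of_pos_of_neg (inv_pos.mpr ht0)
      (gcds_key μ ε hε hint α hα t ht x hx)
  · rw [(hderiv x).deriv, htrans]
    apply mul_pos (inv_pos.mpr ht0)
    -- use the reflected measure
    set ν : Measure ℝ := Measure.map (Neg.neg : ℝ → ℝ) μ with hν
    haveI : IsProbabilityMeasure ν := Measure.isProbabilityMeasure_map measurable_neg.aemeasurable
    have hcexp : Continuous (fun x : ℝ => Real.exp (ε * x ^ 2)) :=
      Real.continuous_exp.comp (continuous_const.mul (continuous_pow 2))
    have hintν : Integrable (fun x => Real.exp (ε * x ^ 2)) ν := by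
      rw [hν, integrable_map_measure hcexp.aestronglyMeasurable
        measurable_neg.aemeasurable]
      have hco : ((fun x : ℝ => Real.exp (ε * x ^ 2)) ∘ Neg.neg) = fun x : ℝ => Real.exp (ε * x ^ 2) := by
        funext y; simp
      rw [hco]; exact hint
    have hαν : α = ∫ x, Real.exp (ε * x ^ 2) ∂ν := by
      rw [hν, integral_map measurable_neg.aemeasurable hcexp.aestronglyMeasurable]
      simpa [Function.comp, neg_sq] using hα
    have key := gcds_key ν ε hε hintν α hαν t ht (-x) (by linarith)
    have hmeas' : AEStronglyMeasurable
        (fun y : ℝ => (y - -x) * Real.exp (-(-x - y) ^ 2 / (2 * t))) ν :=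
      ((continuous_id.sub continuous_const).mul (Real.continuous_exp.comp
        ((((continuous_const.sub continuous_id).pow 2).neg).div_const (2 * t)))).aestronglyMeasurable
    rw [hν, integral_map measurable_neg.aemeasurable (hν ▸ hmeas')] at key
    have hmap : (fun y : ℝ => (-y - -x) * Real.exp (-(-x - -y) ^ 2 / (2 * t)))
        = fun y : ℝ => -((y - x) * Real.exp (-(x - y) ^ 2 / (2 * t))) := by
      funext y
      rw [show (-x - -y : ℝ) = -(x - y) by ring, neg_sq]
      ring
    rw [hmap, integral_neg] at key
    linarith
end

section
/- Let μ be a Borel probability measure on ℝ and let ε > 0 be such that α := ∫_ℝ exp(ε x²) dμ(x) < ∞. Then for every t ≥ 36·log(2α)/ε, the function f_{μ,t}(x) = ∫_ℝ exp(-(x-y)²/(2t)) dμ(y) is twice differentiable on ℝ and its second derivative satisfies f_{μ,t}''(x) < 0 for every x with |x| < √t/2. -/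
open MeasureTheory Real Set Filter Topology

private lemma gcv_deriv1 (t : ℝ) (ht : t ≠ 0) (y x : ℝ) :
    HasDerivAt (fun x : ℝ => Real.exp (-(x - y) ^ 2 / (2 * t)))
      ((-(x - y) / t) * Real.exp (-(x - y) ^ 2 / (2 * t))) x := by
  have h1 : HasDerivAt (fun x : ℝ => x - y) 1 x := (hasDerivAt_id x).sub_const y
  have h2 : HasDerivAt (fun x : ℝ => -(x - y) ^ 2 / (2 * t)) (-(x - y) / t) x := by
    have h3 : HasDerivAt (fun x : ℝ => -(x - y) ^ 2 / (2 * t))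
        (-(↑2 * (x - y) ^ (2 - 1) * 1) / (2 * t)) x := ((h1.pow 2).neg).div_const (2 * t)
    convert h3 using 1
    field_simp
    ring
  have := h2.exp
  convert this using 1
  ring

private lemma gcv_deriv2 (t : ℝ) (ht : t ≠ 0) (y x : ℝ) :
    HasDerivAt (fun x : ℝ => (-(x - y) / t) * Real.exp (-(x - y) ^ 2 / (2 * t)))
      (((x - y) ^ 2 / t ^ 2 - 1 / t) * Real.exp (-(x - y) ^ 2 / (2 * t))) x := by
  have h1 : HasDerivAt (fun x : ℝ => -(x - y) / t) (-1 / t) x := by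
    have : HasDerivAt (fun x : ℝ => -(x - y) / t) (-1 / t) x :=
      (((hasDerivAt_id x).sub_const y).neg).div_const t
    convert this using 1
  have h2 : HasDerivAt (fun x : ℝ => (-(x - y) / t) * Real.exp (-(x - y) ^ 2 / (2 * t)))
      (-1 / t * Real.exp (-(x - y) ^ 2 / (2 * t)) + -(x - y) / t * (-(x - y) / t *
        Real.exp (-(x - y) ^ 2 / (2 * t)))) x := h1.mul (gcv_deriv1 t ht y x)
  convert h2 using 1
  ring

set_option maxHeartbeats 1000000 in
theorem gaussian_convolution_second_deriv_neg_large_time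
    (μ : Measure ℝ) [IsProbabilityMeasure μ] (ε : ℝ) (hε : 0 < ε)
    (hint : Integrable (fun x => Real.exp (ε * x ^ 2)) μ)
    (α : ℝ) (hα : α = ∫ x, Real.exp (ε * x ^ 2) ∂μ)
    (t : ℝ) (ht : 36 * Real.log (2 * α) / ε ≤ t) :
    Differentiable ℝ (fun x : ℝ => ∫ y, Real.exp (-(x - y) ^ 2 / (2 * t)) ∂μ) ∧
    Differentiable ℝ (deriv (fun x : ℝ => ∫ y, Real.exp (-(x - y) ^ 2 / (2 * t)) ∂μ)) ∧
    (∀ x : ℝ, |x| < Real.sqrt t / 2 →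
      deriv (deriv (fun x : ℝ => ∫ y, Real.exp (-(x - y) ^ 2 / (2 * t)) ∂μ)) x < 0) := by
  -- basic positivity facts
  have hα1 : 1 ≤ α := by
    rw [hα]
    calc (1 : ℝ) = ∫ _x, (1 : ℝ) ∂μ := by simp
    _ ≤ ∫ x, Real.exp (ε * x ^ 2) ∂μ := by
        apply integral_mono (integrable_const 1) hint
        intro x
        exact Real.one_le_exp (by positivity)
  have hlog : 0 < Real.log (2 * α) := Real.log_pos (by linarith)
  have ht0 : 0 < t := lt_of_lt_of_le (by positivity) ht
  have htne : t ≠ 0 := ne_of_gt ht0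
  -- key analytic bounds
  have hquad : ∀ u : ℝ, u ^ 2 * Real.exp (-u ^ 2 / (2 * t)) ≤ 2 * t := by
    intro u
    have hp := Real.exp_pos (u ^ 2 / (2 * t))
    have hh := Real.add_one_le_exp (u ^ 2 / (2 * t))
    rw [neg_div, Real.exp_neg, inv_eq_one_div, mul_one_div, div_le_iff₀ hp]
    have h2 : u ^ 2 / (2 * t) * (2 * t) = u ^ 2 := by field_simp
    nlinarith [mul_le_mul_of_nonneg_right hh (le_of_lt ht0)]
  have hexple : ∀ u : ℝ, Real.exp (-u ^ 2 / (2 * t)) ≤ 1 := by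
    intro u
    apply Real.exp_le_one_iff.mpr
    apply div_nonpos_of_nonpos_of_nonneg (neg_nonpos_of_nonneg (sq_nonneg u)) (by positivity)
  -- first derivative
  have hA : ∀ x₀ : ℝ,
      Integrable (fun y => (-(x₀ - y) / t) * Real.exp (-(x₀ - y) ^ 2 / (2 * t))) μ ∧
      HasDerivAt (fun x : ℝ => ∫ y, Real.exp (-(x - y) ^ 2 / (2 * t)) ∂μ)
        (∫ y, (-(x₀ - y) / t) * Real.exp (-(x₀ - y) ^ 2 / (2 * t)) ∂μ) x₀ := by
    intro x₀
    have hmeas : ∀ x : ℝ, AEStronglyMeasurable (fun y : ℝ => Real.exp (-(x - y) ^ 2 / (2 * t))) μ :=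
      fun x => Continuous.aestronglyMeasurable (by fun_prop)
    have hfint : Integrable (fun y : ℝ => Real.exp (-(x₀ - y) ^ 2 / (2 * t))) μ := by
      apply Integrable.mono' (integrable_const 1) (hmeas x₀)
      filter_upwards with y
      rw [Real.norm_eq_abs, abs_of_pos (Real.exp_pos _)]
      exact hexple _
    have hmeas' : AEStronglyMeasurable
        (fun y : ℝ => (-(x₀ - y) / t) * Real.exp (-(x₀ - y) ^ 2 / (2 * t))) μ :=
      Continuous.aestronglyMeasurable (by fun_prop)
    have hbound : ∀ᵐ y ∂μ, ∀ x ∈ Metric.ball x₀ 1,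
        ‖(-(x - y) / t) * Real.exp (-(x - y) ^ 2 / (2 * t))‖ ≤ (1 + 2 * t) / t := by
      filter_upwards with y
      intro x _
      have hE := Real.exp_pos (-(x - y) ^ 2 / (2 * t))
      have h1 : |x - y| * Real.exp (-(x - y) ^ 2 / (2 * t)) ≤ 1 + 2 * t := by
        nlinarith [hquad (x - y), hexple (x - y), sq_nonneg (|x - y| - 1), sq_abs (x - y)]
      rw [Real.norm_eq_abs, abs_mul, abs_of_pos hE, abs_div, abs_neg, abs_of_pos ht0,
        div_mul_eq_mul_div, div_le_div_iff₀ ht0 ht0]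
      nlinarith
    have hdiff : ∀ᵐ y ∂μ, ∀ x ∈ Metric.ball x₀ 1,
        HasDerivAt (fun x : ℝ => Real.exp (-(x - y) ^ 2 / (2 * t)))
          ((-(x - y) / t) * Real.exp (-(x - y) ^ 2 / (2 * t))) x := by
      filter_upwards with y
      intro x _
      exact gcv_deriv1 t htne y x
    exact hasDerivAt_integral_of_dominated_loc_of_deriv_le (Metric.ball_mem_nhds x₀ one_pos)
      (Eventually.of_forall hmeas) hfint hmeas' hbound (integrable_const _) hdiff
  -- second derivative
  have hB : ∀ x₀ : ℝ,
      Integrable (fun y => ((x₀ - y) ^ 2 / t ^ 2 - 1 / t) * Real.exp (-(x₀ - y) ^ 2 / (2 * t))) μ ∧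
      HasDerivAt (fun x : ℝ => ∫ y, (-(x - y) / t) * Real.exp (-(x - y) ^ 2 / (2 * t)) ∂μ)
        (∫ y, ((x₀ - y) ^ 2 / t ^ 2 - 1 / t) * Real.exp (-(x₀ - y) ^ 2 / (2 * t)) ∂μ) x₀ := by
    intro x₀
    have hmeas : ∀ x : ℝ, AEStronglyMeasurable
        (fun y : ℝ => (-(x - y) / t) * Real.exp (-(x - y) ^ 2 / (2 * t))) μ :=
      fun x => Continuous.aestronglyMeasurable (by fun_prop)
    have hmeas' : AEStronglyMeasurable
        (fun y : ℝ => ((x₀ - y) ^ 2 / t ^ 2 - 1 / t) * Real.exp (-(x₀ - y) ^ 2 / (2 * t))) μ :=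
      Continuous.aestronglyMeasurable (by fun_prop)
    have hbound : ∀ᵐ y ∂μ, ∀ x ∈ Metric.ball x₀ 1,
        ‖((x - y) ^ 2 / t ^ 2 - 1 / t) * Real.exp (-(x - y) ^ 2 / (2 * t))‖ ≤ 3 / t := by
      filter_upwards with y
      intro x _
      have hE := Real.exp_pos (-(x - y) ^ 2 / (2 * t))
      have heq : (x - y) ^ 2 / t ^ 2 - 1 / t = ((x - y) ^ 2 - t) / t ^ 2 := by
        field_simp
      have habs : |(x - y) ^ 2 - t| ≤ (x - y) ^ 2 + t := by
        have h := abs_sub ((x - y) ^ 2) t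
        rwa [abs_of_nonneg (sq_nonneg (x - y)), abs_of_pos ht0] at h
      rw [Real.norm_eq_abs, abs_mul, abs_of_pos hE, heq, abs_div,
        abs_of_pos (by positivity : (0:ℝ) < t ^ 2),
        div_mul_eq_mul_div, div_le_div_iff₀ (by positivity) ht0]
      have h2 : |(x - y) ^ 2 - t| * Real.exp (-(x - y) ^ 2 / (2 * t)) ≤ 3 * t := by
        nlinarith [hquad (x - y), hexple (x - y)]
      nlinarith [abs_nonneg ((x - y) ^ 2 - t), mul_nonneg (abs_nonneg ((x - y) ^ 2 - t)) hE.le]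
    have hdiff : ∀ᵐ y ∂μ, ∀ x ∈ Metric.ball x₀ 1,
        HasDerivAt (fun x : ℝ => (-(x - y) / t) * Real.exp (-(x - y) ^ 2 / (2 * t)))
          (((x - y) ^ 2 / t ^ 2 - 1 / t) * Real.exp (-(x - y) ^ 2 / (2 * t))) x := by
      filter_upwards with y
      intro x _
      exact gcv_deriv2 t htne y x
    exact hasDerivAt_integral_of_dominated_loc_of_deriv_le (Metric.ball_mem_nhds x₀ one_pos)
      (Eventually.of_forall hmeas) (hA x₀).1 hmeas' hbound (integrable_const _) hdiff
  have hf' : deriv (fun x : ℝ => ∫ y, Real.exp (-(x - y) ^ 2 / (2 * t)) ∂μ)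
      = fun x : ℝ => ∫ y, (-(x - y) / t) * Real.exp (-(x - y) ^ 2 / (2 * t)) ∂μ :=
    funext fun x => ((hA x).2).deriv
  refine ⟨fun x => ((hA x).2).differentiableAt, ?_, ?_⟩
  · rw [hf']
    exact fun x => ((hB x).2).differentiableAt
  · intro x hx
    rw [hf', ((hB x).2).deriv]
    -- sign estimate
    set c : ℝ := 7 / 16 * Real.exp (-(9 / 32) : ℝ) with hc_def
    set M : ℝ := 2 * Real.exp (-(3 / 2) : ℝ) with hM_def
    have hc0 : 0 < c := by positivity
    have hM0 : 0 < M := by positivity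
    have hα0 : 0 < α := by linarith
    -- exp(ε t / 16) ≥ 4 α²
    have hεt : 36 * Real.log (2 * α) ≤ ε * t := by
      rw [div_le_iff₀ hε] at ht
      linarith
    have hexp_t : 4 * α ^ 2 ≤ Real.exp (ε * t / 16) := by
      have h4 : Real.log (4 * α ^ 2) = 2 * Real.log (2 * α) := by
        rw [show (4 : ℝ) * α ^ 2 = (2 * α) ^ 2 by ring, Real.log_pow]
        push_cast; ring
      have h5 : Real.log (4 * α ^ 2) ≤ ε * t / 16 := by
        rw [h4]; linarith
      calc 4 * α ^ 2 = Real.exp (Real.log (4 * α ^ 2)) :=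
            (Real.exp_log (by positivity)).symm
        _ ≤ Real.exp (ε * t / 16) := Real.exp_le_exp.2 h5
    -- pointwise bound
    have hpt : ∀ y : ℝ, ((x - y) ^ 2 / t ^ 2 - 1 / t) * Real.exp (-(x - y) ^ 2 / (2 * t))
        ≤ -c / t + (M + c) / (4 * α ^ 2 * t) * Real.exp (ε * y ^ 2) := by
      intro y
      have hE := Real.exp_pos (-(x - y) ^ 2 / (2 * t))
      have key : ((x - y) ^ 2 / t - 1) * Real.exp (-(x - y) ^ 2 / (2 * t))
          ≤ -c + (M + c) / (4 * α ^ 2) * Real.exp (ε * y ^ 2) := by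
        by_cases hy : |y| ≤ Real.sqrt t / 4
        · -- close case
          have hst := Real.sq_sqrt ht0.le
          have hsn := Real.sqrt_nonneg t
          have hu : (x - y) ^ 2 ≤ 9 * t / 16 := by
            have h6 : |x - y| ≤ |x| + |y| := abs_sub x y
            have h7 : |x - y| ≤ 3 * Real.sqrt t / 4 := by
              have := hx.le
              linarith
            nlinarith [sq_abs (x - y), abs_nonneg (x - y)]
          have hg1 : (x - y) ^ 2 / t - 1 ≤ -(7 / 16) := by
            rw [div_sub' htne, div_le_iff₀ ht0]
            nlinarith
          have hE1 : Real.exp (-(9 / 32) : ℝ) ≤ Real.exp (-(x - y) ^ 2 / (2 * t)) := by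
            apply Real.exp_le_exp.2
            rw [neg_div, neg_le_neg_iff, div_le_iff₀ (by positivity)]
            linarith
          have h8 : ((x - y) ^ 2 / t - 1) * Real.exp (-(x - y) ^ 2 / (2 * t)) ≤ -c := by
            calc ((x - y) ^ 2 / t - 1) * Real.exp (-(x - y) ^ 2 / (2 * t))
                ≤ ((x - y) ^ 2 / t - 1) * Real.exp (-(9 / 32) : ℝ) := by
                  apply mul_le_mul_of_nonpos_left hE1 (by linarith)
              _ ≤ -(7 / 16) * Real.exp (-(9 / 32) : ℝ) :=
                  mul_le_mul_of_nonneg_right hg1 (Real.exp_pos _).le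
              _ = -c := by rw [hc_def]; ring
          have h9 : 0 ≤ (M + c) / (4 * α ^ 2) * Real.exp (ε * y ^ 2) := by positivity
          linarith
        · -- far case
          push_neg at hy
          have hst := Real.sq_sqrt ht0.le
          have hsn := Real.sqrt_nonneg t
          have hy2 : t / 16 ≤ y ^ 2 := by
            nlinarith [sq_abs y, abs_nonneg y]
          have hexp_y : 4 * α ^ 2 ≤ Real.exp (ε * y ^ 2) := by
            refine hexp_t.trans (Real.exp_le_exp.2 ?_)
            rw [div_le_iff₀ (by norm_num : (0:ℝ) < 16)] at hy2 ⊢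
            nlinarith
          -- universal bound g ≤ M
          have hgM : ((x - y) ^ 2 / t - 1) * Real.exp (-(x - y) ^ 2 / (2 * t)) ≤ M := by
            set s : ℝ := (x - y) ^ 2 / (2 * t) with hs_def
            have hs0 : 0 ≤ s := by positivity
            have h2s : (x - y) ^ 2 / t = 2 * s := by rw [hs_def]; field_simp
            have hns : -(x - y) ^ 2 / (2 * t) = -s := by rw [hs_def]; ring
            rw [h2s, hns]
            have hmul : Real.exp s * Real.exp (-s) = 1 := by
              rw [← Real.exp_add]; simp
            have hsub : Real.exp (s - 3 / 2) = Real.exp s * Real.exp (-(3 / 2) : ℝ) := by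
              rw [← Real.exp_add, sub_eq_add_neg]
            have h10 := Real.add_one_le_exp (s - 3 / 2)
            have h11 : (s - 1 / 2) * Real.exp (-s) ≤ Real.exp s * Real.exp (-(3/2) : ℝ)
                * Real.exp (-s) := by
              apply mul_le_mul_of_nonneg_right _ (Real.exp_pos (-s)).le
              rw [← hsub]; linarith
            have h12 : Real.exp s * Real.exp (-(3/2) : ℝ) * Real.exp (-s)
                = Real.exp (-(3/2) : ℝ) := by
              rw [mul_comm (Real.exp s), mul_assoc, hmul, mul_one]
            rw [hM_def]
            nlinarith [h11, h12]
          have h13 : M + c ≤ (M + c) / (4 * α ^ 2) * Real.exp (ε * y ^ 2) := by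
            rw [div_mul_eq_mul_div, le_div_iff₀ (by positivity)]
            nlinarith
          linarith
      have hrw : ((x - y) ^ 2 / t ^ 2 - 1 / t) * Real.exp (-(x - y) ^ 2 / (2 * t))
          = (1 / t) * (((x - y) ^ 2 / t - 1) * Real.exp (-(x - y) ^ 2 / (2 * t))) := by
        field_simp
      rw [hrw]
      have := mul_le_mul_of_nonneg_left key (by positivity : (0:ℝ) ≤ 1 / t)
      calc (1 / t) * (((x - y) ^ 2 / t - 1) * Real.exp (-(x - y) ^ 2 / (2 * t)))
          ≤ (1 / t) * (-c + (M + c) / (4 * α ^ 2) * Real.exp (ε * y ^ 2)) := this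
        _ = -c / t + (M + c) / (4 * α ^ 2 * t) * Real.exp (ε * y ^ 2) := by
            field_simp
    -- integrate the bound
    have hrhs_int : Integrable
        (fun y : ℝ => -c / t + (M + c) / (4 * α ^ 2 * t) * Real.exp (ε * y ^ 2)) μ :=
      (integrable_const _).add (hint.const_mul _)
    have hIle : ∫ y, ((x - y) ^ 2 / t ^ 2 - 1 / t) * Real.exp (-(x - y) ^ 2 / (2 * t)) ∂μ
        ≤ ∫ y, (-c / t + (M + c) / (4 * α ^ 2 * t) * Real.exp (ε * y ^ 2)) ∂μ :=
      integral_mono (hB x).1 hrhs_int hpt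
    have hIval : ∫ y, (-c / t + (M + c) / (4 * α ^ 2 * t) * Real.exp (ε * y ^ 2)) ∂μ
        = -c / t + (M + c) / (4 * α ^ 2 * t) * α := by
      rw [integral_add (integrable_const _) (hint.const_mul _), integral_const,
        integral_const_mul, ← hα]
      simp
    -- final numeric estimate : M < 3 c
    have hM3c : M < 3 * c := by
      have he1 : Real.exp (-(3 / 2) : ℝ) * Real.exp ((39 / 32) : ℝ)
          = Real.exp (-(9 / 32) : ℝ) := by
        rw [← Real.exp_add]; norm_num
      have he2 := Real.add_one_le_exp ((39 / 32) : ℝ)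
      rw [hM_def, hc_def]
      nlinarith [Real.exp_pos (-(3 / 2) : ℝ), Real.exp_pos ((39 / 32) : ℝ)]
    have hfinal : -c / t + (M + c) / (4 * α ^ 2 * t) * α < 0 := by
      have h14 : (M + c) / (4 * α ^ 2 * t) * α = (M + c) / (4 * α * t) := by
        field_simp
      rw [h14]
      have h15 : (M + c) / (4 * α * t) < c / t := by
        rw [div_lt_div_iff₀ (by positivity) ht0]
        nlinarith [mul_lt_mul_of_pos_right (show M + c < 4 * c by linarith) ht0,
          mul_le_mul_of_nonneg_left hα1 (show (0:ℝ) ≤ 4 * c * t by positivity)]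
      have h16 : -c / t + c / t = 0 := by ring
      linarith
    calc ∫ y, ((x - y) ^ 2 / t ^ 2 - 1 / t) * Real.exp (-(x - y) ^ 2 / (2 * t)) ∂μ
        ≤ -c / t + (M + c) / (4 * α ^ 2 * t) * α := by rw [← hIval]; exact hIle
      _ < 0 := hfinal
end

section
/- There exists a Borel probability measure μ on ℝ with the following three properties: (i) for every A > 0 and every p with 0 < p < 2, ∫_ℝ exp(A·|x|^p) dμ(x) < ∞; (ii) for every A > 0, ∫_ℝ exp(A x²) dμ(x) = ∞; (iii) for every t > 0, the function f_{μ,t}(x) = ∫_ℝ exp(-(x-y)²/(2t)) dμ(y) is not unimodal. -/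
open MeasureTheory Real Set Filter Topology

noncomputable def myW (n : ℕ) : ℝ := Real.exp (-(4:ℝ)^n / (n+1))
noncomputable def myZ : ℝ := ∑' n, myW n
noncomputable def myMu : Measure ℝ :=
  Measure.sum (fun n => ENNReal.ofReal (myW n / myZ) • Measure.dirac ((2:ℝ)^n))

lemma myW_pos (n : ℕ) : 0 < myW n := Real.exp_pos _

lemma pow4_bound (n : ℕ) : (n:ℝ) * ((n:ℝ)+1) ≤ 4^n := by
  have h : (n:ℝ) + 1 ≤ 2^n := by
    have h0 : n + 1 ≤ 2^n := Nat.lt_two_pow_self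
    exact_mod_cast h0
  have h2 : ((2:ℝ)^n)^2 = 4^n := by
    rw [← pow_mul, mul_comm, pow_mul]; norm_num
  nlinarith [pow_pos (by norm_num : (0:ℝ) < 2) n, Nat.cast_nonneg (α := ℝ) n]

lemma nat_le_pow4 (n : ℕ) : (n:ℝ) ≤ 4^n := by
  rcases Nat.eq_zero_or_pos n with h | h
  · norm_num [h]
  · have := pow4_bound n
    have h1 : (1:ℝ) ≤ (n:ℝ) := by exact_mod_cast h
    nlinarith

lemma div_pow4_ge (n : ℕ) : (n:ℝ) ≤ 4^n / ((n:ℝ)+1) := by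
  rw [le_div_iff₀ (by positivity)]
  exact pow4_bound n

lemma myW_le (n : ℕ) : myW n ≤ Real.exp (-(n:ℝ)) := by
  rw [myW, Real.exp_le_exp]
  have := div_pow4_ge n
  rw [neg_div]
  linarith

lemma myW_summable : Summable myW := by
  apply Summable.of_nonneg_of_le (fun n => (myW_pos n).le) (fun n => myW_le n)
  have : ∀ n : ℕ, Real.exp (-(n:ℝ)) = (Real.exp (-1))^n := by
    intro n
    rw [← Real.exp_nat_mul]
    norm_num
  simp_rw [this]
  exact summable_geometric_of_lt_one (Real.exp_pos _).le
    (Real.exp_lt_one_iff.mpr (by norm_num))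

lemma myZ_pos : 0 < myZ :=
  Summable.tsum_pos myW_summable (fun n => (myW_pos n).le) 0 (myW_pos 0)

lemma myC_summable : Summable (fun n => myW n / myZ) := myW_summable.div_const _

lemma myC_tsum : ∑' n, myW n / myZ = 1 := by
  rw [tsum_div_const]
  exact div_self myZ_pos.ne'

lemma myC_tsum_ennreal : ∑' n, ENNReal.ofReal (myW n / myZ) = 1 := by
  rw [← ENNReal.ofReal_tsum_of_nonneg (fun n => div_nonneg (myW_pos n).le myZ_pos.le) myC_summable, myC_tsum,
    ENNReal.ofReal_one]

lemma myMu_lintegral (f : ℝ → ENNReal) :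
    ∫⁻ x, f x ∂myMu = ∑' n, ENNReal.ofReal (myW n / myZ) * f ((2:ℝ)^n) := by
  rw [myMu, lintegral_sum_measure]
  simp [lintegral_smul_measure, lintegral_dirac]

instance myMu_prob : IsProbabilityMeasure myMu := by
  constructor
  rw [myMu, Measure.sum_apply _ MeasurableSet.univ]
  simp only [Measure.smul_apply, smul_eq_mul]
  simp [myC_tsum_ennreal]

lemma rpow_nat_eq (n : ℕ) (p : ℝ) : ((2:ℝ)^n : ℝ) ^ p = (2:ℝ) ^ ((n:ℝ)*p) := by
  rw [← Real.rpow_natCast 2 n, ← Real.rpow_mul (by norm_num : (0:ℝ) ≤ 2)]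

lemma key1 (A p : ℝ) (hA : 0 < A) (hp2 : p < 2) :
    ∃ N : ℕ, ∀ n : ℕ, N ≤ n →
      A * (2:ℝ)^((n:ℝ)*p) - 4^n/((n:ℝ)+1) ≤ -(n:ℝ)/2 := by
  set ε : ℝ := 2 - p with hεdef
  have hε : 0 < ε := by simp [hεdef]; linarith
  have hlog : 0 < Real.log 2 := Real.log_pos (by norm_num)
  set c₀ : ℝ := (ε * Real.log 2 / 2)^2 with hc₀def
  have hc₀ : 0 < c₀ := by positivity
  refine ⟨max 1 ⌈4*A/c₀⌉₊, fun n hn => ?_⟩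
  have hn1 : (1:ℝ) ≤ (n:ℝ) := by
    exact_mod_cast le_trans (le_max_left _ _) hn
  have hn2 : 4*A/c₀ ≤ (n:ℝ) := by
    calc 4*A/c₀ ≤ (⌈4*A/c₀⌉₊ : ℝ) := Nat.le_ceil _
    _ ≤ (n:ℝ) := by exact_mod_cast le_trans (le_max_right _ _) hn
  -- Step A : 2^(nε) ≥ c₀ n²
  have hx : (0:ℝ) ≤ Real.log 2 * ((n:ℝ)*ε) := by positivity
  have hA1 : (2:ℝ)^((n:ℝ)*ε) = Real.exp (Real.log 2 * ((n:ℝ)*ε)) :=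
    Real.rpow_def_of_pos (by norm_num) _
  have hexp_sq : ∀ x : ℝ, 0 ≤ x → (x/2)^2 ≤ Real.exp x := by
    intro x hx0
    have h1 : x/2 + 1 ≤ Real.exp (x/2) := by
      have := Real.add_one_le_exp (x/2); linarith
    have h2 : Real.exp (x/2) ^ 2 = Real.exp x := by
      rw [sq, ← Real.exp_add]; congr 1; ring
    nlinarith [Real.exp_pos (x/2)]
  have hstepA : c₀ * (n:ℝ)^2 ≤ (2:ℝ)^((n:ℝ)*ε) := by
    rw [hA1]
    calc c₀ * (n:ℝ)^2 = (Real.log 2 * ((n:ℝ)*ε)/2)^2 := by rw [hc₀def]; ring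
    _ ≤ Real.exp (Real.log 2 * ((n:ℝ)*ε)) := hexp_sq _ hx
  -- Step B : 2A(n+1) ≤ c₀ n²
  have hstepB : 2*A*((n:ℝ)+1) ≤ c₀ * (n:ℝ)^2 := by
    have h4 : 4*A ≤ c₀ * (n:ℝ) := by
      rw [div_le_iff₀ hc₀] at hn2; linarith [mul_comm c₀ (n:ℝ)]
    nlinarith
  have hAB : 2*A*((n:ℝ)+1) ≤ (2:ℝ)^((n:ℝ)*ε) := le_trans hstepB hstepA
  -- Step C : A * 2^(np) ≤ 4^n / (2(n+1))
  have hmul : (2:ℝ)^((n:ℝ)*p) * (2:ℝ)^((n:ℝ)*ε) = 4^n := by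
    rw [← Real.rpow_add (by norm_num : (0:ℝ) < 2)]
    have : (n:ℝ)*p + (n:ℝ)*ε = (2*n : ℕ) := by push_cast [hεdef]; ring
    rw [this, Real.rpow_natCast, pow_mul]
    norm_num
  have hrp : (0:ℝ) < (2:ℝ)^((n:ℝ)*p) := Real.rpow_pos_of_pos (by norm_num) _
  have hstepC : A * (2:ℝ)^((n:ℝ)*p) ≤ 4^n / (2*((n:ℝ)+1)) := by
    rw [le_div_iff₀ (by positivity)]
    calc A * (2:ℝ)^((n:ℝ)*p) * (2*((n:ℝ)+1)) = (2*A*((n:ℝ)+1)) * (2:ℝ)^((n:ℝ)*p) := by ring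
    _ ≤ (2:ℝ)^((n:ℝ)*ε) * (2:ℝ)^((n:ℝ)*p) := by
        exact mul_le_mul_of_nonneg_right hAB hrp.le
    _ = 4^n := by rw [mul_comm]; exact hmul
  -- Step D
  have hstepD : (n:ℝ)/2 ≤ 4^n / (2*((n:ℝ)+1)) := by
    have := div_pow4_ge n
    rw [div_le_div_iff₀ (by positivity) (by positivity)]
    rw [le_div_iff₀ (by positivity)] at this
    nlinarith
  have hsplit : (4:ℝ)^n/((n:ℝ)+1) = 4^n / (2*((n:ℝ)+1)) + 4^n / (2*((n:ℝ)+1)) := by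
    field_simp; ring
  linarith

lemma summable_part1 (A p : ℝ) (hA : 0 < A) (hp2 : p < 2) :
    Summable (fun n : ℕ => (myW n / myZ) * Real.exp (A * ((2:ℝ)^n : ℝ) ^ p)) := by
  obtain ⟨N, hN⟩ := key1 A p hA hp2
  have hg : ∀ n : ℕ, (myW n / myZ) * Real.exp (A * ((2:ℝ)^n : ℝ) ^ p)
      = Real.exp (A * (2:ℝ)^((n:ℝ)*p) - 4^n/((n:ℝ)+1)) / myZ := by
    intro n
    rw [myW, div_mul_eq_mul_div, ← Real.exp_add, rpow_nat_eq]
    congr 2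
    ring
  simp_rw [hg]
  rw [← summable_nat_add_iff N]
  apply Summable.of_nonneg_of_le
    (g := fun n => Real.exp (A * (2:ℝ)^(((n+N:ℕ):ℝ)*p) - 4^(n+N)/(((n+N:ℕ):ℝ)+1)) / myZ)
    (fun n => div_nonneg (Real.exp_pos _).le myZ_pos.le)
    (f := fun n => (Real.exp (-(N:ℝ)/2) / myZ) * (Real.exp (-(1:ℝ)/2))^n)
  · intro n
    have h1 : A * (2:ℝ)^(((n+N:ℕ):ℝ)*p) - 4^(n+N)/(((n+N:ℕ):ℝ)+1) ≤ -((n+N:ℕ):ℝ)/2 :=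
      hN (n+N) (Nat.le_add_left _ _)
    have h2 : Real.exp (-((n+N:ℕ):ℝ)/2) = (Real.exp (-(N:ℝ)/2)) * (Real.exp (-(1:ℝ)/2))^n := by
      rw [← Real.exp_nat_mul, ← Real.exp_add]
      congr 1
      push_cast
      ring
    calc Real.exp (A * (2:ℝ)^(((n+N:ℕ):ℝ)*p) - 4^(n+N)/(((n+N:ℕ):ℝ)+1)) / myZ
        ≤ Real.exp (-((n+N:ℕ):ℝ)/2) / myZ := by
          gcongr
          exact myZ_pos.le
    _ = (Real.exp (-(N:ℝ)/2) / myZ) * (Real.exp (-(1:ℝ)/2))^n := by rw [h2]; ring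
  · apply Summable.mul_left
    exact summable_geometric_of_lt_one (Real.exp_pos _).le
      (Real.exp_lt_one_iff.mpr (by norm_num))

lemma part1 (A : ℝ) (hA : 0 < A) (p : ℝ) (hp : 0 < p) (hp2 : p < 2) :
    Integrable (fun x : ℝ => Real.exp (A * |x| ^ p)) myMu := by
  constructor
  · exact (by measurability : Measurable fun x : ℝ => Real.exp (A * |x| ^ p)).aestronglyMeasurable
  · rw [hasFiniteIntegral_iff_ofReal (ae_of_all _ fun x => (Real.exp_pos _).le)]
    rw [myMu_lintegral]
    have habs : ∀ n : ℕ, |(2:ℝ)^n| = (2:ℝ)^n := fun n => abs_of_pos (by positivity)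
    have hterm : ∀ n : ℕ, ENNReal.ofReal (myW n / myZ) *
        ENNReal.ofReal (Real.exp (A * |(2:ℝ)^n| ^ p))
        = ENNReal.ofReal ((myW n / myZ) * Real.exp (A * ((2:ℝ)^n : ℝ) ^ p)) := by
      intro n
      rw [habs n, ← ENNReal.ofReal_mul (div_nonneg (myW_pos n).le myZ_pos.le)]
    simp_rw [hterm]
    rw [← ENNReal.ofReal_tsum_of_nonneg
      (fun n => mul_nonneg (div_nonneg (myW_pos n).le myZ_pos.le) (Real.exp_pos _).le)
      (summable_part1 A p hA hp2)]
    exact ENNReal.ofReal_lt_top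

lemma tsum_ofReal_eq_top_of_unbounded (f : ℕ → ℝ) (hf : ∀ r : ℝ, ∃ n, r ≤ f n) :
    ∑' n, ENNReal.ofReal (f n) = ⊤ := by
  by_contra hne
  obtain ⟨n, hn⟩ := hf ((∑' n, ENNReal.ofReal (f n)).toReal + 1)
  have h1 : ENNReal.ofReal (f n) ≤ ∑' n, ENNReal.ofReal (f n) := ENNReal.le_tsum n
  have h2 := ENNReal.toReal_mono hne h1
  have h0 : (0:ℝ) ≤ (∑' n, ENNReal.ofReal (f n)).toReal := ENNReal.toReal_nonneg
  rw [ENNReal.toReal_ofReal (by linarith)] at h2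
  linarith

lemma pow2_sq (n : ℕ) : (((2:ℝ)^n : ℝ)) ^ 2 = 4^n := by
  rw [← pow_mul, mul_comm, pow_mul]; norm_num

lemma part2 (A : ℝ) (hA : 0 < A) :
    ∫⁻ x, ENNReal.ofReal (Real.exp (A * x ^ 2)) ∂myMu = ⊤ := by
  rw [myMu_lintegral]
  have hterm : ∀ n : ℕ, ENNReal.ofReal (myW n / myZ) *
      ENNReal.ofReal (Real.exp (A * ((2:ℝ)^n : ℝ)^2))
      = ENNReal.ofReal (Real.exp (A*4^n - 4^n/((n:ℝ)+1)) / myZ) := by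
    intro n
    rw [← ENNReal.ofReal_mul (div_nonneg (myW_pos n).le myZ_pos.le)]
    congr 1
    rw [myW, pow2_sq n, div_mul_eq_mul_div, ← Real.exp_add]
    congr 2
    ring
  simp_rw [hterm]
  apply tsum_ofReal_eq_top_of_unbounded
  intro r
  refine ⟨max ⌈2/A⌉₊ ⌈2*myZ*|r|/A⌉₊, ?_⟩
  set n := max ⌈2/A⌉₊ ⌈2*myZ*|r|/A⌉₊ with hndef
  have hna : 2/A ≤ (n:ℝ) := by
    calc 2/A ≤ (⌈2/A⌉₊ : ℝ) := Nat.le_ceil _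
    _ ≤ (n:ℝ) := by exact_mod_cast le_max_left _ _
  have hnb : 2*myZ*|r|/A ≤ (n:ℝ) := by
    calc 2*myZ*|r|/A ≤ (⌈2*myZ*|r|/A⌉₊ : ℝ) := Nat.le_ceil _
    _ ≤ (n:ℝ) := by exact_mod_cast le_max_right _ _
  have h4pos : (0:ℝ) < 4^n := by positivity
  have h1 : 1/((n:ℝ)+1) ≤ A/2 := by
    rw [div_le_iff₀ hA] at hna
    rw [div_le_div_iff₀ (by positivity) (by norm_num : (0:ℝ) < 2)]
    nlinarith
  have h2 : (A/2)*4^n ≤ A*4^n - 4^n/((n:ℝ)+1) := by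
    have : (4:ℝ)^n/((n:ℝ)+1) = 4^n * (1/((n:ℝ)+1)) := by ring
    rw [this]
    nlinarith
  have h3 : myZ*|r| ≤ (A/2)*4^n := by
    have := nat_le_pow4 n
    have hb : 2*myZ*|r| ≤ A * (n:ℝ) := by
      rw [div_le_iff₀ hA] at hnb; linarith [mul_comm A (n:ℝ)]
    nlinarith
  have h4 : myZ*|r| + 1 ≤ Real.exp (A*4^n - 4^n/((n:ℝ)+1)) := by
    have := Real.add_one_le_exp (A*4^n - 4^n/((n:ℝ)+1))
    linarith
  have h5 : r ≤ Real.exp (A*4^n - 4^n/((n:ℝ)+1)) / myZ := by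
    rw [le_div_iff₀ myZ_pos]
    calc r * myZ ≤ |r| * myZ :=
      mul_le_mul_of_nonneg_right (le_abs_self r) myZ_pos.le
    _ ≤ myZ*|r| + 1 := by rw [mul_comm]; linarith
    _ ≤ _ := h4
  exact h5

noncomputable def myL (t x : ℝ) : ENNReal :=
  ∑' k : ℕ, ENNReal.ofReal (myW k / myZ) *
    ENNReal.ofReal (Real.exp (-(x - (2:ℝ)^k)^2/(2*t)))

lemma myF_eq (t : ℝ) (x : ℝ) :
    ∫ y, Real.exp (-(x - y)^2/(2*t)) ∂myMu = (myL t x).toReal := by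
  rw [integral_eq_lintegral_of_nonneg_ae (ae_of_all _ fun y => (Real.exp_pos _).le)
    ((Real.continuous_exp.comp (by fun_prop)).aestronglyMeasurable)]
  rw [myMu_lintegral, myL]

lemma myL_le_one (t x : ℝ) (ht : 0 < t) : myL t x ≤ 1 := by
  rw [myL]
  calc ∑' k : ℕ, ENNReal.ofReal (myW k / myZ) *
        ENNReal.ofReal (Real.exp (-(x - (2:ℝ)^k)^2/(2*t)))
      ≤ ∑' k : ℕ, ENNReal.ofReal (myW k / myZ) * 1 := by
        apply ENNReal.tsum_le_tsum
        intro k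
        apply mul_le_mul_right
        rw [ENNReal.ofReal_le_one, Real.exp_le_one_iff]
        apply div_nonpos_of_nonpos_of_nonneg
        · exact neg_nonpos_of_nonneg (sq_nonneg _)
        · linarith
  _ = 1 := by simp [myC_tsum_ennreal]

lemma myL_ne_top (t x : ℝ) (ht : 0 < t) : myL t x ≠ ⊤ :=
  ne_top_of_le_ne_top ENNReal.one_ne_top (myL_le_one t x ht)

lemma myF_lower (t : ℝ) (ht : 0 < t) (n : ℕ) :
    myW n / myZ ≤ ∫ y, Real.exp (-((2:ℝ)^n - y)^2/(2*t)) ∂myMu := by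
  rw [myF_eq]
  have h1 : ENNReal.ofReal (myW n / myZ) ≤ myL t ((2:ℝ)^n) := by
    rw [myL]
    have := ENNReal.le_tsum (f := fun k : ℕ => ENNReal.ofReal (myW k / myZ) *
      ENNReal.ofReal (Real.exp (-((2:ℝ)^n - (2:ℝ)^k)^2/(2*t)))) n
    simpa using this
  have := ENNReal.toReal_mono (myL_ne_top t _ ht) h1
  rwa [ENNReal.toReal_ofReal (div_nonneg (myW_pos n).le myZ_pos.le)] at this

lemma myF_upper_mid (t : ℝ) (ht : 0 < t) (n : ℕ) :
    ∫ y, Real.exp (-((3*(2:ℝ)^n/2) - y)^2/(2*t)) ∂myMu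
      ≤ Real.exp (-((4:ℝ)^n/4)/(2*t)) := by
  set x2 : ℝ := 3*(2:ℝ)^n/2 with hx2
  have hdist : ∀ k : ℕ, (4:ℝ)^n/4 ≤ (x2 - (2:ℝ)^k)^2 := by
    intro k
    rcases le_or_gt k n with hk | hk
    · have h1 : (2:ℝ)^k ≤ (2:ℝ)^n := pow_le_pow_right₀ (by norm_num) hk
      have h2 : (2:ℝ)^n/2 ≤ x2 - (2:ℝ)^k := by
        rw [hx2]; linarith
      nlinarith [pow2_sq n, pow_pos (show (0:ℝ) < 2 by norm_num) n]
    · have h1 : (2:ℝ)^(n+1) ≤ (2:ℝ)^k := pow_le_pow_right₀ (by norm_num) hk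
      have h2 : (2:ℝ)^n/2 ≤ (2:ℝ)^k - x2 := by
        rw [hx2]
        have : (2:ℝ)^(n+1) = 2*(2:ℝ)^n := by rw [pow_succ]; ring
        linarith
      nlinarith [pow2_sq n, pow_pos (show (0:ℝ) < 2 by norm_num) n]
  have h2t : (0:ℝ) < 2*t := by linarith
  rw [myF_eq]
  have hL : myL t x2 ≤ ENNReal.ofReal (Real.exp (-((4:ℝ)^n/4)/(2*t))) := by
    rw [myL]
    calc ∑' k : ℕ, ENNReal.ofReal (myW k / myZ) *
          ENNReal.ofReal (Real.exp (-(x2 - (2:ℝ)^k)^2/(2*t)))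
        ≤ ∑' k : ℕ, ENNReal.ofReal (myW k / myZ) *
          ENNReal.ofReal (Real.exp (-((4:ℝ)^n/4)/(2*t))) := by
          apply ENNReal.tsum_le_tsum
          intro k
          apply mul_le_mul_right
          apply ENNReal.ofReal_le_ofReal
          rw [Real.exp_le_exp]
          rw [div_le_div_iff₀ h2t h2t]
          nlinarith [hdist k]
    _ = 1 * ENNReal.ofReal (Real.exp (-((4:ℝ)^n/4)/(2*t))) := by
          rw [ENNReal.tsum_mul_right, myC_tsum_ennreal]
    _ = _ := one_mul _
  have := ENNReal.toReal_mono (by simp) hL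
  rw [ENNReal.toReal_ofReal (Real.exp_pos _).le] at this
  exact this

lemma myW_antitone_succ (n : ℕ) : myW (n+1) ≤ myW n := by
  rw [myW, myW, Real.exp_le_exp]
  push_cast
  rw [neg_div, neg_div, neg_le_neg_iff]
  rw [div_le_div_iff₀ (by positivity) (by positivity)]
  have h4 : (4:ℝ)^(n+1) = 4*4^n := by rw [pow_succ]; ring
  have h4pos : (0:ℝ) < 4^n := by positivity
  have : (0:ℝ) ≤ (n:ℝ) := Nat.cast_nonneg n
  nlinarith

lemma key3 (t : ℝ) (ht : 0 < t) : ∃ n : ℕ,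
    Real.exp (-((4:ℝ)^n/4)/(2*t)) < myW (n+1) / myZ ∧
    Real.exp (-((4:ℝ)^n/4)/(2*t)) < myW n / myZ := by
  refine ⟨max ⌈64*t⌉₊ ⌈16*t*myZ⌉₊, ?_⟩
  set n := max ⌈64*t⌉₊ ⌈16*t*myZ⌉₊ with hndef
  have hn1 : 64*t ≤ (n:ℝ) := by
    calc 64*t ≤ (⌈64*t⌉₊ : ℝ) := Nat.le_ceil _
    _ ≤ (n:ℝ) := by exact_mod_cast le_max_left _ _
  have hn2 : 16*t*myZ ≤ (n:ℝ) := by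
    calc 16*t*myZ ≤ (⌈16*t*myZ⌉₊ : ℝ) := Nat.le_ceil _
    _ ≤ (n:ℝ) := by exact_mod_cast le_max_right _ _
  have h4pos : (0:ℝ) < 4^n := by positivity
  have h2t : (0:ℝ) < 2*t := by linarith
  have hE : -((4:ℝ)^n/4)/(2*t) = -((4:ℝ)^n/(8*t)) := by
    field_simp
    ring
  have hmain : myZ * Real.exp (-((4:ℝ)^n/4)/(2*t)) < myW (n+1) := by
    have ha : 4*(4:ℝ)^n/((n:ℝ)+2) ≤ (4:ℝ)^n/(16*t) := by
      rw [div_le_div_iff₀ (by positivity) (by positivity)]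
      nlinarith
    have hb : (n:ℝ)/(16*t) ≤ (4:ℝ)^n/(16*t) := by
      gcongr
      exact nat_le_pow4 n
    have hc : (4:ℝ)^n/(16*t) + (4:ℝ)^n/(16*t) = (4:ℝ)^n/(8*t) := by
      field_simp
      ring
    have he : myZ < Real.exp ((n:ℝ)/(16*t)) := by
      have h1 : myZ ≤ (n:ℝ)/(16*t) := by
        rw [le_div_iff₀ (by positivity)]
        nlinarith
      have h2 := Real.add_one_le_exp ((n:ℝ)/(16*t))
      linarith
    calc myZ * Real.exp (-((4:ℝ)^n/4)/(2*t))
        < Real.exp ((n:ℝ)/(16*t)) * Real.exp (-((4:ℝ)^n/4)/(2*t)) :=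
          mul_lt_mul_of_pos_right he (Real.exp_pos _)
    _ = Real.exp ((n:ℝ)/(16*t) - (4:ℝ)^n/(8*t)) := by
          rw [← Real.exp_add, hE]; ring_nf
    _ ≤ Real.exp (-(4:ℝ)^(n+1)/(((n+1:ℕ):ℝ)+1)) := by
          rw [Real.exp_le_exp]
          push_cast
          have h4 : (4:ℝ)^(n+1) = 4*4^n := by rw [pow_succ]; ring
          rw [h4, neg_div]
          rw [show ((n:ℝ)+1+1) = ((n:ℝ)+2) by ring]
          linarith
    _ = myW (n+1) := by rw [myW]
  have hmain2 : myZ * Real.exp (-((4:ℝ)^n/4)/(2*t)) < myW n :=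
    lt_of_lt_of_le hmain (myW_antitone_succ n)
  constructor
  · rw [lt_div_iff₀ myZ_pos]
    linarith [hmain]
  · rw [lt_div_iff₀ myZ_pos]
    linarith [hmain2]

lemma part3 (t : ℝ) (ht : 0 < t) :
    ¬ Unimodal (fun x => ∫ y, Real.exp (-(x - y) ^ 2 / (2 * t)) ∂myMu) := by
  obtain ⟨n, hE1, hE2⟩ := key3 t ht
  rintro ⟨m0, hmono, hanti⟩
  set F := fun x : ℝ => ∫ y, Real.exp (-(x - y) ^ 2 / (2 * t)) ∂myMu with hF
  have h2npos : (0:ℝ) < 2^n := by positivity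
  have hpow : (2:ℝ)^(n+1) = 2*(2:ℝ)^n := by rw [pow_succ]; ring
  have h12 : (2:ℝ)^n < 3*(2:ℝ)^n/2 := by linarith
  have h23 : 3*(2:ℝ)^n/2 < (2:ℝ)^(n+1) := by rw [hpow]; linarith
  have hFx1 : myW n / myZ ≤ F ((2:ℝ)^n) := myF_lower t ht n
  have hFx3 : myW (n+1) / myZ ≤ F ((2:ℝ)^(n+1)) := myF_lower t ht (n+1)
  have hFx2 : F (3*(2:ℝ)^n/2) ≤ Real.exp (-((4:ℝ)^n/4)/(2*t)) := myF_upper_mid t ht n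
  have hb1 : F (3*(2:ℝ)^n/2) < F ((2:ℝ)^n) :=
    lt_of_le_of_lt hFx2 (lt_of_lt_of_le hE2 hFx1)
  have hb3 : F (3*(2:ℝ)^n/2) < F ((2:ℝ)^(n+1)) :=
    lt_of_le_of_lt hFx2 (lt_of_lt_of_le hE1 hFx3)
  rcases le_total (3*(2:ℝ)^n/2) m0 with h | h
  · exact absurd (hmono (mem_Iic.mpr (le_trans h12.le h)) (mem_Iic.mpr h) h12.le)
      (not_le.mpr hb1)
  · exact absurd (hanti (mem_Ici.mpr h) (mem_Ici.mpr (le_trans h h23.le)) h23.le)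
      (not_le.mpr hb3)

theorem exists_measure_subgaussian_moments_gaussian_convolution_never_unimodal :
    ∃ μ : Measure ℝ, IsProbabilityMeasure μ ∧
      (∀ A : ℝ, 0 < A → ∀ p : ℝ, 0 < p → p < 2 →
        Integrable (fun x : ℝ => Real.exp (A * |x| ^ p)) μ) ∧
      (∀ A : ℝ, 0 < A → ∫⁻ x, ENNReal.ofReal (Real.exp (A * x ^ 2)) ∂μ = ⊤) ∧
      (∀ t : ℝ, 0 < t →
        ¬ Unimodal (fun x => ∫ y, Real.exp (-(x - y) ^ 2 / (2 * t)) ∂μ)) := by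
  exact ⟨myMu, myMu_prob, fun A hA p hp hp2 => part1 A hA p hp hp2,
    fun A hA => part2 A hA, fun t ht => part3 t ht⟩
end

section
/- Let (w_n)_{n≥1} be positive reals with ∑_{n≥1} w_n = 1 and let (a_n)_{n≥1} be a strictly increasing sequence of reals. For each k set b_k := inf_{n≠k} |a_k - a_n - 1|, and assume that b_k → ∞ as k → ∞ and that for every t > 0 there exists k₀ ∈ ℕ such that w_k·exp(-1/(2t)) > b_k·exp(-b_k²/(2t)) for all k ≥ k₀. Then for every t > 0 the function F_t(x) = ∑_{n≥1} w_n·exp(-(x - a_n)²/(2t)) satisfies F_t'(a_k - 1) > 0 for all sufficiently large k; in particular, F_t is not unimodal for any t > 0. -/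
open MeasureTheory Real Set Filter Topology

private lemma expBound (t s : ℝ) (ht : 0 < t) :
    |s| * Real.exp (-s ^ 2 / (2 * t)) ≤ 1 + 2 * t := by
  rcases le_or_gt (|s|) 1 with h | h
  · have he : Real.exp (-s ^ 2 / (2 * t)) ≤ 1 := by
      rw [Real.exp_le_one_iff]
      exact div_nonpos_of_nonpos_of_nonneg (neg_nonpos.2 (sq_nonneg s)) (by positivity)
    nlinarith [Real.exp_pos (-s ^ 2 / (2 * t))]
  · have key : s ^ 2 / (2 * t) + 1 ≤ Real.exp (s ^ 2 / (2 * t)) :=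
      Real.add_one_le_exp _
    have hmul : Real.exp (-s ^ 2 / (2 * t)) * Real.exp (s ^ 2 / (2 * t)) = 1 := by
      rw [← Real.exp_add]; ring_nf; exact Real.exp_zero
    have hE : 0 < Real.exp (-s ^ 2 / (2 * t)) := Real.exp_pos _
    have hs2 : s ^ 2 = |s| ^ 2 := (sq_abs s).symm
    have h1 : Real.exp (-s ^ 2 / (2 * t)) * (s ^ 2 / (2 * t) + 1) ≤ 1 := by
      calc Real.exp (-s ^ 2 / (2 * t)) * (s ^ 2 / (2 * t) + 1)
          ≤ Real.exp (-s ^ 2 / (2 * t)) * Real.exp (s ^ 2 / (2 * t)) := by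
            apply mul_le_mul_of_nonneg_left key hE.le
        _ = 1 := hmul
    have h2 : Real.exp (-s ^ 2 / (2 * t)) * s ^ 2 ≤ 2 * t := by
      have h2t : 0 < 2 * t := by positivity
      have := mul_le_mul_of_nonneg_left key hE.le
      rw [hmul] at this
      calc Real.exp (-s ^ 2 / (2 * t)) * s ^ 2
          = Real.exp (-s ^ 2 / (2 * t)) * (s ^ 2 / (2 * t)) * (2 * t) := by
            field_simp
        _ ≤ (1 - Real.exp (-s ^ 2 / (2 * t))) * (2 * t) := by
            apply mul_le_mul_of_nonneg_right _ h2t.le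
            nlinarith
        _ ≤ 2 * t := by nlinarith
    have h3 : |s| * Real.exp (-s ^ 2 / (2 * t)) ≤ |s| ^ 2 * Real.exp (-s ^ 2 / (2 * t)) := by
      apply mul_le_mul_of_nonneg_right _ hE.le
      nlinarith
    rw [← hs2] at h3
    nlinarith

private lemma monoBound (t c s : ℝ) (ht : 0 < t) (hc : t ≤ c ^ 2) (hc0 : 0 ≤ c)
    (hs : c ≤ s) :
    s * Real.exp (-s ^ 2 / (2 * t)) ≤ c * Real.exp (-c ^ 2 / (2 * t)) := by
  have hE : Real.exp (-c ^ 2 / (2 * t)) =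
      Real.exp ((s ^ 2 - c ^ 2) / (2 * t)) * Real.exp (-s ^ 2 / (2 * t)) := by
    rw [← Real.exp_add]; congr 1; ring
  have h1 : (s ^ 2 - c ^ 2) / (2 * t) + 1 ≤ Real.exp ((s ^ 2 - c ^ 2) / (2 * t)) :=
    Real.add_one_le_exp _
  have hEpos : 0 < Real.exp (-s ^ 2 / (2 * t)) := Real.exp_pos _
  rw [hE, ← mul_assoc]
  apply mul_le_mul_of_nonneg_right _ hEpos.le
  have h2 : s ≤ c * ((s ^ 2 - c ^ 2) / (2 * t) + 1) := by
    rw [← sub_nonneg]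
    have he : c * ((s ^ 2 - c ^ 2) / (2 * t) + 1) - s
        = (s - c) * (c * (s + c) - 2 * t) / (2 * t) := by
      field_simp
      ring
    rw [he]
    apply div_nonneg _ (by positivity)
    apply mul_nonneg (by linarith)
    have hcs : c * c ≤ c * s := mul_le_mul_of_nonneg_left hs hc0
    nlinarith
  calc s ≤ c * ((s ^ 2 - c ^ 2) / (2 * t) + 1) := h2
    _ ≤ c * Real.exp ((s ^ 2 - c ^ 2) / (2 * t)) :=
        mul_le_mul_of_nonneg_left h1 hc0

theorem discrete_gaussian_mixture_never_unimodal
    (w a b : ℕ → ℝ) (hw : ∀ n, 0 < w n) (hsum : ∑' n, w n = 1)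
    (ha : StrictMono a)
    (hb : ∀ k, b k = sInf {r : ℝ | ∃ n, n ≠ k ∧ r = |a k - a n - 1|})
    (hbtop : Tendsto b atTop atTop)
    (hcond : ∀ t : ℝ, 0 < t → ∃ k₀ : ℕ, ∀ k, k₀ ≤ k →
      b k * Real.exp (-(b k) ^ 2 / (2 * t)) < w k * Real.exp (-1 / (2 * t))) :
    ∀ t : ℝ, 0 < t →
      (∀ᶠ k in atTop,
        0 < deriv (fun x : ℝ => ∑' n, w n * Real.exp (-(x - a n) ^ 2 / (2 * t))) (a k - 1)) ∧
      ¬ Unimodal (fun x : ℝ => ∑' n, w n * Real.exp (-(x - a n) ^ 2 / (2 * t))) := by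
  -- basic facts about b
  have hbdd : ∀ k : ℕ, BddBelow {r : ℝ | ∃ n, n ≠ k ∧ r = |a k - a n - 1|} := by
    intro k
    exact ⟨0, fun r ⟨n, _, hr⟩ => hr ▸ abs_nonneg _⟩
  have hb0 : ∀ k, 0 ≤ b k := by
    intro k
    rw [hb k]
    refine le_csInf ⟨_, k + 1, by omega, rfl⟩ ?_
    rintro r ⟨n, _, rfl⟩
    exact abs_nonneg _
  have hble : ∀ k n, n ≠ k → b k ≤ |a k - a n - 1| := by
    intro k n hn
    rw [hb k]
    exact csInf_le (hbdd k) ⟨n, hn, rfl⟩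
  -- a tends to atTop
  have haTop : Tendsto a atTop atTop := by
    apply tendsto_atTop_mono' atTop (show ∀ᶠ k in atTop, b k + (a 0 - 1) ≤ a k from ?_)
      (tendsto_atTop_add_const_right atTop (a 0 - 1) hbtop)
    filter_upwards [eventually_ge_atTop 1] with k hk
    have h1 : b k ≤ |a k - a 0 - 1| := hble k 0 (by omega)
    have h2 : a 0 < a k := ha (by omega)
    rcases abs_cases (a k - a 0 - 1) with ⟨he, _⟩ | ⟨he, h3⟩ <;> [linarith; linarith]
  -- summability of w
  have hwsum : Summable w := by
    by_contra h
    rw [tsum_eq_zero_of_not_summable h] at hsum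
    norm_num at hsum
  intro t ht
  set F' : ℕ → ℝ → ℝ := fun n x =>
    w n * ((a n - x) / t * Real.exp (-(x - a n) ^ 2 / (2 * t))) with hF'def
  have hderiv : ∀ (n : ℕ) (x : ℝ),
      HasDerivAt (fun x => w n * Real.exp (-(x - a n) ^ 2 / (2 * t))) (F' n x) x := by
    intro n x
    have h0 : HasDerivAt (fun x : ℝ => x - a n) 1 x := (hasDerivAt_id x).sub_const _
    have h1 : HasDerivAt (fun x : ℝ => -(x - a n) ^ 2 / (2 * t)) ((a n - x) / t) x := by
      have h2 := ((h0.pow 2).neg).div_const (2 * t)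
      exact h2.congr_deriv (by field_simp; ring)
    have h3 := (h1.exp).const_mul (w n)
    exact h3.congr_deriv (by rw [hF'def]; ring)
  have hbound : ∀ (n : ℕ) (x : ℝ), ‖F' n x‖ ≤ w n * ((1 + 2 * t) / t) := by
    intro n x
    have h := expBound t (a n - x) ht
    have hEe : Real.exp (-(x - a n) ^ 2 / (2 * t)) =
        Real.exp (-(a n - x) ^ 2 / (2 * t)) := by congr 1; ring
    rw [hF'def, Real.norm_eq_abs, abs_mul, abs_of_pos (hw n), hEe,
      mul_le_mul_iff_right₀ (hw n), abs_mul, abs_div, abs_of_pos ht,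
      abs_of_pos (Real.exp_pos _), div_mul_eq_mul_div]
    exact (div_le_div_iff_of_pos_right ht).2 h
  have husum : Summable (fun n => w n * ((1 + 2 * t) / t)) := hwsum.mul_right _
  have hfsum : ∀ x : ℝ, Summable (fun n => w n * Real.exp (-(x - a n) ^ 2 / (2 * t))) := by
    intro x
    apply Summable.of_nonneg_of_le (fun n => mul_nonneg (hw n).le (Real.exp_pos _).le) _ hwsum
    intro n
    apply mul_le_of_le_one_right (hw n).le
    rw [Real.exp_le_one_iff]
    exact div_nonpos_of_nonpos_of_nonneg (neg_nonpos.2 (sq_nonneg _)) (by positivity)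
  have hF : ∀ x : ℝ,
      HasDerivAt (fun x : ℝ => ∑' n, w n * Real.exp (-(x - a n) ^ 2 / (2 * t)))
        (∑' n, F' n x) x :=
    fun x => hasDerivAt_tsum husum hderiv hbound (hfsum 0) x
  have hF'sum : ∀ x : ℝ, Summable (fun n => F' n x) := by
    intro x
    exact Summable.of_norm_bounded husum (fun n => hbound n x)
  -- the main positivity claim
  have hmain : ∀ᶠ k in atTop,
      0 < deriv (fun x : ℝ => ∑' n, w n * Real.exp (-(x - a n) ^ 2 / (2 * t))) (a k - 1) := by
    obtain ⟨k₀, hk₀⟩ := hcond t ht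
    filter_upwards [eventually_ge_atTop k₀, hbtop.eventually_ge_atTop (Real.sqrt t)]
      with k hk hsq
    set x : ℝ := a k - 1 with hx
    rw [(hF x).deriv]
    have hbksq : t ≤ (b k) ^ 2 := by
      have := Real.sq_sqrt ht.le
      nlinarith [Real.sqrt_nonneg t]
    -- split off k-th term
    rw [Summable.tsum_eq_add_tsum_ite (hF'sum x) k]
    set C : ℝ := b k * Real.exp (-(b k) ^ 2 / (2 * t)) / t with hC
    have hFk : F' k x = w k * Real.exp (-1 / (2 * t)) / t := by
      show w k * ((a k - x) / t * Real.exp (-(x - a k) ^ 2 / (2 * t))) = _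
      have h1 : a k - x = 1 := by rw [hx]; ring
      have h2 : -(x - a k) ^ 2 / (2 * t) = -1 / (2 * t) := by rw [hx]; ring_nf
      rw [h1, h2]
      ring
    have htail : ‖∑' n, if n = k then 0 else F' n x‖ ≤ C := by
      have hsum' : Summable (fun n => if n = k then 0 else F' n x) := by
        apply Summable.of_norm_bounded husum
        intro n
        by_cases h : n = k
        · simp only [h, if_true, norm_zero]
          exact mul_nonneg (hw k).le (by positivity)
        · simp only [h, if_false]
          exact hbound n x
      calc ‖∑' n, if n = k then 0 else F' n x‖
          ≤ ∑' n, ‖if n = k then 0 else F' n x‖ := by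
            apply norm_tsum_le_tsum_norm
            exact hsum'.norm
        _ ≤ ∑' n, w n * C := by
            apply Summable.tsum_le_tsum _ hsum'.norm (hwsum.mul_right C)
            intro n
            by_cases h : n = k
            · simp only [h, if_true, norm_zero]
              have hC0 : 0 ≤ C := by
                rw [hC]
                exact div_nonneg (mul_nonneg (hb0 k) (Real.exp_pos _).le) ht.le
              exact mul_nonneg (hw k).le hC0
            · simp only [h, if_false]
              rw [hF'def, Real.norm_eq_abs, abs_mul, abs_of_pos (hw n),
                mul_le_mul_iff_right₀ (hw n), abs_mul, abs_div, abs_of_pos ht,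
                abs_of_pos (Real.exp_pos _), div_mul_eq_mul_div, hC]
              apply (div_le_div_iff_of_pos_right ht).2
              have hge : b k ≤ |a n - x| := by
                have h1 := hble k n h
                rw [show a k - a n - 1 = x - a n by rw [hx]; ring, abs_sub_comm] at h1
                exact h1
              have hEe : Real.exp (-(x - a n) ^ 2 / (2 * t)) =
                  Real.exp (-|a n - x| ^ 2 / (2 * t)) := by
                congr 1
                rw [sq_abs]
                ring
              rw [hEe]
              exact monoBound t (b k) (|a n - x|) ht hbksq (hb0 k) hge
        _ = (∑' n, w n) * C := tsum_mul_right
        _ = C := by rw [hsum, one_mul]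
    have hCF : C < F' k x := by
      rw [hFk, hC]
      exact (div_lt_div_iff_of_pos_right ht).2 (hk₀ k hk)
    have := neg_abs_le (∑' n, if n = k then 0 else F' n x)
    rw [Real.norm_eq_abs] at htail
    linarith
  refine ⟨hmain, ?_⟩
  rintro ⟨m, _, hanti⟩
  obtain ⟨k, hk1, hk2⟩ := (hmain.and (haTop.eventually_gt_atTop (m + 1))).exists
  set x : ℝ := a k - 1 with hx
  have hxm : m < x := by rw [hx]; linarith
  have hd := hF x
  rw [hasDerivAt_iff_tendsto_slope] at hd
  rw [(hF x).deriv] at hk1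
  have hev : ∀ᶠ y in 𝓝[>] x, 0 < slope
      (fun x : ℝ => ∑' n, w n * Real.exp (-(x - a n) ^ 2 / (2 * t))) x y := by
    apply (hd.mono_left (nhdsWithin_mono x (fun y hy => ne_of_gt hy))).eventually
    exact eventually_gt_nhds hk1
  obtain ⟨y, hy, hyx⟩ := (hev.and self_mem_nhdsWithin).exists
  rw [slope_def_field] at hy
  have hxy : x < y := hyx
  have hgty : (fun x : ℝ => ∑' n, w n * Real.exp (-(x - a n) ^ 2 / (2 * t))) x <
      (fun x : ℝ => ∑' n, w n * Real.exp (-(x - a n) ^ 2 / (2 * t))) y := by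
    have h1 : 0 < y - x := by linarith
    have := mul_pos hy h1
    rw [div_mul_cancel₀] at this
    · linarith
    · linarith
  have := hanti (le_of_lt hxm) (by simp [Set.mem_Ici]; linarith : y ∈ Set.Ici m) hxy.le
  linarith
end

section
/- For t > 0, the function f_t : ℝ → ℝ defined by f_t(x) = exp(-(x-1)²/(2t)) + exp(-(x+1)²/(2t)) is unimodal if and only if t ≥ 1. -/
open MeasureTheory Real Set Filter Topology

private lemma aux_L1 {x : ℝ} (h0 : 0 ≤ x) (h1 : x ≤ 1) :
    (1 - x) * Real.exp (2 * x) ≤ 1 + x := by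
  have hd : ∀ y : ℝ, HasDerivAt (fun y : ℝ => (1 + y) - (1 - y) * Real.exp (2 * y))
      (1 - (1 - 2 * y) * Real.exp (2 * y)) y := by
    intro y
    have h2 : HasDerivAt (fun y : ℝ => Real.exp (2 * y)) (Real.exp (2 * y) * 2) y := by
      simpa using ((hasDerivAt_id y).const_mul 2).exp
    have h3 : HasDerivAt (fun y : ℝ => (1 - y) * Real.exp (2 * y))
        ((-1) * Real.exp (2 * y) + (1 - y) * (Real.exp (2 * y) * 2)) y := by
      exact ((hasDerivAt_id' y).const_sub 1).mul h2
    have h4 : HasDerivAt (fun y : ℝ => 1 + y) 1 y := (hasDerivAt_id y).const_add 1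
    have h5 := h4.sub h3
    exact h5.congr_deriv (by ring)
  have hmono : MonotoneOn (fun y : ℝ => (1 + y) - (1 - y) * Real.exp (2 * y)) (Set.Icc 0 1) := by
    apply monotoneOn_of_deriv_nonneg (convex_Icc 0 1)
    · exact fun y _ => (hd y).continuousAt.continuousWithinAt
    · exact fun y _ => (hd y).differentiableAt.differentiableWithinAt
    · intro y _
      rw [(hd y).deriv]
      have hle := Real.add_one_le_exp (-(2 * y))
      have hmul : Real.exp (-(2 * y)) * Real.exp (2 * y) = 1 := by
        rw [← Real.exp_add]; simp
      nlinarith [Real.exp_pos (2 * y)]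
  have h00 : (fun y : ℝ => (1 + y) - (1 - y) * Real.exp (2 * y)) 0 = 0 := by simp
  have h2x := hmono (Set.mem_Icc.2 ⟨le_refl 0, zero_le_one⟩) (Set.mem_Icc.2 ⟨h0, h1⟩) h0
  rw [h00] at h2x
  have h3x : (0 : ℝ) ≤ 1 + x - (1 - x) * Real.exp (2 * x) := h2x
  linarith

private lemma aux_hasDeriv {t : ℝ} (ht : 0 < t) (x : ℝ) :
    HasDerivAt (fun x : ℝ =>
        Real.exp (-(x - 1) ^ 2 / (2 * t)) + Real.exp (-(x + 1) ^ 2 / (2 * t)))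
      (Real.exp (-(x - 1) ^ 2 / (2 * t)) * (-(x - 1) / t) +
       Real.exp (-(x + 1) ^ 2 / (2 * t)) * (-(x + 1) / t)) x := by
  have h1 : HasDerivAt (fun x : ℝ => -(x - 1) ^ 2 / (2 * t)) (-(x - 1) / t) x := by
    have := (((hasDerivAt_id x).sub_const 1).pow 2).neg.div_const (2 * t)
    exact this.congr_deriv (by simp only [id_eq, Nat.cast_ofNat]; ring)
  have h2 : HasDerivAt (fun x : ℝ => -(x + 1) ^ 2 / (2 * t)) (-(x + 1) / t) x := by
    have := (((hasDerivAt_id x).add_const 1).pow 2).neg.div_const (2 * t)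
    exact this.congr_deriv (by simp only [id_eq, Nat.cast_ofNat]; ring)
  exact h1.exp.add h2.exp

private lemma aux_L2 {t y : ℝ} (ht : 0 < t) (ht1 : t < 1) (hy : 0 < y) (hy2 : y ≤ 1 / 2)
    (hyt : y ≤ 1 - t) : 2 * Real.exp (t * y ^ 2 / 2) < Real.exp y + Real.exp (-y) := by
  have hS : ∀ z : ℝ, ∑ m ∈ Finset.range 3, z ^ m / m.factorial = 1 + z + z ^ 2 / 2 := by
    intro z
    simp [Finset.sum_range_succ, Nat.factorial]
  have h1 : 1 + y + y ^ 2 / 2 - (2 / 9) * y ^ 3 ≤ Real.exp y := by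
    have hb := Real.exp_bound (x := y) (by rw [abs_of_pos hy]; linarith) (n := 3) (by norm_num)
    rw [hS, abs_of_pos hy, abs_sub_le_iff] at hb
    have h := hb.2
    norm_num [Nat.factorial] at h
    nlinarith [h]
  have h2 : 1 - y + y ^ 2 / 2 - (2 / 9) * y ^ 3 ≤ Real.exp (-y) := by
    have hb := Real.exp_bound (x := -y) (by rw [abs_neg, abs_of_pos hy]; linarith)
      (n := 3) (by norm_num)
    rw [hS, abs_neg, abs_of_pos hy, abs_sub_le_iff] at hb
    have h := hb.2
    norm_num [Nat.factorial] at h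
    nlinarith [h]
  have hs1 : t * y ^ 2 / 2 < 1 := by nlinarith
  have hs0 : 0 < t * y ^ 2 / 2 := by positivity
  have hpos : 0 < 1 - t * y ^ 2 / 2 := by linarith
  have hexp := Real.exp_bound_div_one_sub_of_interval' hs0 hs1
  have ha : y ^ 3 ≤ y ^ 2 * (1 - t) := by nlinarith [sq_nonneg y]
  have hb' : t * y ^ 4 ≤ y ^ 2 * (1 - t) / 2 := by nlinarith [sq_nonneg y, pow_pos hy 3]
  have hc : 0 ≤ (2 / 9) * t * y ^ 5 := by positivity
  have h4 : 2 ≤ (2 + y ^ 2 - (4 / 9) * y ^ 3) * (1 - t * y ^ 2 / 2) := by nlinarith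
  calc 2 * Real.exp (t * y ^ 2 / 2) < 2 * (1 / (1 - t * y ^ 2 / 2)) := by linarith
    _ ≤ 2 + y ^ 2 - (4 / 9) * y ^ 3 := by
        rw [mul_one_div, div_le_iff₀ hpos]
        linarith
    _ ≤ Real.exp y + Real.exp (-y) := by linarith

theorem bernoulli_gaussian_convolution_unimodal_iff (t : ℝ) (ht : 0 < t) :
    Unimodal (fun x : ℝ =>
      Real.exp (-(x - 1) ^ 2 / (2 * t)) + Real.exp (-(x + 1) ^ 2 / (2 * t))) ↔ 1 ≤ t := by
  set f : ℝ → ℝ := fun x : ℝ =>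
      Real.exp (-(x - 1) ^ 2 / (2 * t)) + Real.exp (-(x + 1) ^ 2 / (2 * t)) with hf
  have heven : ∀ x : ℝ, f (-x) = f x := by
    intro x
    simp only [hf]
    rw [show -(-x - 1) ^ 2 / (2 * t) = -(x + 1) ^ 2 / (2 * t) by ring,
        show -(-x + 1) ^ 2 / (2 * t) = -(x - 1) ^ 2 / (2 * t) by ring, add_comm]
  constructor
  · rintro ⟨a, hmono, hanti⟩
    by_contra hlt
    push_neg at hlt
    set y : ℝ := min (1 / 2) (1 - t) with hy_def
    have hy0 : 0 < y := lt_min (by norm_num) (by linarith)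
    have hy2 : y ≤ 1 / 2 := min_le_left _ _
    have hyt : y ≤ 1 - t := min_le_right _ _
    have hx0 : 0 < t * y := mul_pos ht hy0
    set C : ℝ := Real.exp (-((t * y) ^ 2 + 1) / (2 * t)) with hC_def
    have hC : 0 < C := Real.exp_pos _
    have e1 : Real.exp (-(t * y - 1) ^ 2 / (2 * t)) = C * Real.exp y := by
      rw [hC_def, ← Real.exp_add]
      congr 1
      field_simp
      ring
    have e2 : Real.exp (-(t * y + 1) ^ 2 / (2 * t)) = C * Real.exp (-y) := by
      rw [hC_def, ← Real.exp_add]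
      congr 1
      field_simp
      ring
    have e3 : Real.exp (-((0 : ℝ) - 1) ^ 2 / (2 * t)) = C * Real.exp (t * y ^ 2 / 2) := by
      rw [hC_def, ← Real.exp_add]
      congr 1
      field_simp
      ring
    have e4 : Real.exp (-((0 : ℝ) + 1) ^ 2 / (2 * t)) = C * Real.exp (t * y ^ 2 / 2) := by
      rw [hC_def, ← Real.exp_add]
      congr 1
      field_simp
      ring
    have key : f 0 < f (t * y) := by
      simp only [hf]
      rw [e1, e2, e3, e4]
      have := aux_L2 ht hlt hy0 hy2 hyt
      nlinarith
    rcases le_or_gt 0 a with hA | hA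
    · have h1 : f (-(t * y)) ≤ f 0 :=
        hmono (Set.mem_Iic.2 (by linarith)) (Set.mem_Iic.2 hA) (by linarith)
      rw [heven] at h1
      linarith
    · have h1 : f (t * y) ≤ f 0 :=
        hanti (Set.mem_Ici.2 (by linarith)) (Set.mem_Ici.2 (by linarith)) (by linarith)
      linarith
  · intro h1t
    have hanti : AntitoneOn f (Set.Ici (0 : ℝ)) := by
      apply antitoneOn_of_deriv_nonpos (convex_Ici 0)
      · exact fun x _ => (aux_hasDeriv ht x).continuousAt.continuousWithinAt
      · intro x _
        exact (aux_hasDeriv ht x).differentiableAt.differentiableWithinAt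
      · intro x hx
        rw [interior_Ici] at hx
        have hx0 : 0 < x := hx
        rw [(aux_hasDeriv ht x).deriv]
        set A : ℝ := Real.exp (-(x - 1) ^ 2 / (2 * t)) with hA_def
        set B : ℝ := Real.exp (-(x + 1) ^ 2 / (2 * t)) with hB_def
        have hApos : 0 < A := Real.exp_pos _
        have hBpos : 0 < B := Real.exp_pos _
        have key : (1 - x) * A ≤ (1 + x) * B := by
          rcases le_or_gt 1 x with h1x | h1x
          · have : (1 - x) * A ≤ 0 := mul_nonpos_of_nonpos_of_nonneg (by linarith) hApos.le
            nlinarith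
          · have hAB : A = B * Real.exp (2 * x / t) := by
              rw [hA_def, hB_def, ← Real.exp_add]
              congr 1
              field_simp
              ring
            have hexple : Real.exp (2 * x / t) ≤ Real.exp (2 * x) := by
              apply Real.exp_le_exp.2
              rw [div_le_iff₀ ht]
              nlinarith
            have hL1 : (1 - x) * Real.exp (2 * x) ≤ 1 + x := aux_L1 hx0.le h1x.le
            calc (1 - x) * A = (1 - x) * Real.exp (2 * x / t) * B := by rw [hAB]; ring
              _ ≤ (1 - x) * Real.exp (2 * x) * B := by
                  apply mul_le_mul_of_nonneg_right _ hBpos.le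
                  exact mul_le_mul_of_nonneg_left hexple (by linarith)
              _ ≤ (1 + x) * B := mul_le_mul_of_nonneg_right hL1 hBpos.le
        have heq : A * (-(x - 1) / t) + B * (-(x + 1) / t) =
            ((1 - x) * A - (1 + x) * B) / t := by ring
        rw [heq]
        exact div_nonpos_of_nonpos_of_nonneg (by linarith) ht.le
    refine ⟨0, ?_, hanti⟩
    intro u hu v hv huv
    have h1 : f (-u) ≤ f (-v) := by
      apply hanti (Set.mem_Ici.2 (by simp only [Set.mem_Iic] at hv; linarith))
        (Set.mem_Ici.2 (by simp only [Set.mem_Iic] at hu; linarith)) (by linarith)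
    rwa [heven, heven] at h1
end

section
/- Let μ be a Borel probability measure on ℝ such that β := ∫_ℝ |x|³ dμ(x) < ∞ (i.e. x ↦ |x|³ is μ-integrable). Then for every t > 0 with t ≥ 20·β^{1/3}, the function g_{μ,t}(x) = ∫_ℝ ((x-y)² + t²)⁻¹ dμ(y) is unimodal; consequently the convolution μ * C_t is unimodal for all such t. -/
open MeasureTheory Real Set Filter Topology

theorem aux_gt (a : ℝ) (h : 11/20 ≤ a) :
    3*a^2 - 1 + (a^2+1)^3/25 ≤ 200*(a-1/2)^3*(a^2+1)^3 := by
  have h0 : (0:ℝ) ≤ a - 1/2 := by linarith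
  have h1 : (0:ℝ) ≤ a - 11/20 := by linarith
  nlinarith [mul_nonneg h1 h1, mul_nonneg (mul_nonneg h1 h1) h1, mul_nonneg h1 h0, sq_nonneg (a^2-1), mul_nonneg (mul_nonneg h0 h0) h0, mul_nonneg (mul_nonneg h1 h1) (sq_nonneg a), mul_nonneg (mul_nonneg (mul_nonneg h1 h1) h1) (sq_nonneg a), mul_nonneg (mul_nonneg (mul_nonneg h1 h1) h1) (sq_nonneg (a^2)), mul_nonneg (mul_nonneg (mul_nonneg h1 h1) h1) (sq_nonneg (a^2-1)), mul_nonneg (mul_nonneg (mul_nonneg h1 h1) h1) (sq_nonneg (a^2+1)), mul_nonneg h1 (sq_nonneg (a^2-1))]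

theorem aux_le (a : ℝ) (ha : 0 ≤ a) (h : a ≤ 11/20) :
    3*a^2 - 1 + (a^2+1)^3/25 ≤ 0 := by
  have h1 : a^2 ≤ (11/20)^2 := by nlinarith
  nlinarith [sq_nonneg a, sq_nonneg (a^2)]

-- cert B reduced
theorem certB_red (a b : ℝ) (ha : 0 ≤ a) (hb : 0 ≤ b) (hab : a ≤ b + 1/2) :
    3*a^2 - 1 + (a^2+1)^3/25 ≤ 200*b^3*(a^2+1)^3 := by
  rcases le_or_gt a (11/20) with h | h
  · have := aux_le a ha h
    have : (0:ℝ) ≤ 200*b^3*(a^2+1)^3 := by positivity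
    linarith
  · have h3 : (a-1/2)^3 ≤ b^3 := pow_le_pow_left₀ (by linarith) (by linarith) 3
    have h4 : 200*((a-1/2)^3*(a^2+1)^3) ≤ 200*(b^3*(a^2+1)^3) := by
      have := mul_le_mul_of_nonneg_right h3 (by positivity : (0:ℝ) ≤ (a^2+1)^3)
      linarith
    have := aux_gt a (le_of_lt h)
    nlinarith

set_option maxHeartbeats 1000000 in
theorem certA_hard (x c : ℝ) (hx : 1/2 ≤ x) (hc : 0 < c) :
    x*(c^2+1)^2 + 20*c*(x^2+1)^2 ≤ 160*x*(x+c)^3*(c^2+1)^2 := by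
  have hx0 : (0:ℝ) < x := by linarith
  have hQ : (0:ℝ) ≤ (c^2+1)^2 := by positivity
  have hx3 : (1:ℝ)/8 ≤ x^3 := by
    nlinarith [mul_nonneg (by linarith : (0:ℝ) ≤ x - 1/2) (by positivity : (0:ℝ) ≤ x^2 + x/2 + 1/4)]
  rcases le_or_gt c x with h | h
  · have hexp : 160*x^4*(c^2+1)^2 + 480*x^3*c*(c^2+1)^2 ≤ 160*x*(x+c)^3*(c^2+1)^2 := by
      nlinarith [mul_nonneg (mul_nonneg (by positivity : (0:ℝ) ≤ 160*x) hQ) (by positivity : (0:ℝ) ≤ 3*x*c^2 + c^3)]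
    have h1 : x*(c^2+1)^2 ≤ 20*x^4*(c^2+1)^2 := by nlinarith [mul_nonneg (mul_nonneg hx0.le hQ) (by nlinarith : (0:ℝ) ≤ 20*x^3 - 1)]
    have h2 : 20*c*x^4 ≤ 140*x^4*(c^2+1)^2 := by
      nlinarith [mul_nonneg (by positivity : (0:ℝ) ≤ x^4) (by nlinarith [sq_nonneg (c-1), sq_nonneg c, sq_nonneg (c^2)] : (0:ℝ) ≤ 140*(c^2+1)^2 - 20*c)]
    have h3 : 40*c*x^2 ≤ 240*x^3*c := by nlinarith [mul_nonneg (mul_nonneg hc.le (by positivity : (0:ℝ) ≤ x^2)) (by linarith : (0:ℝ) ≤ 6*x - 1)]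
    have h4 : 20*c ≤ 240*x^3*c := by nlinarith [mul_nonneg hc.le (by nlinarith : (0:ℝ) ≤ 12*x^3 - 1)]
    have h5 : 480*x^3*c ≤ 480*x^3*c*(c^2+1)^2 := by
      nlinarith [mul_nonneg (mul_nonneg (by positivity : (0:ℝ) ≤ x^3) hc.le) (by nlinarith [sq_nonneg c, sq_nonneg (c^2)] : (0:ℝ) ≤ (c^2+1)^2 - 1)]
    nlinarith [hexp, h1, h2, h3, h4, h5]
  · have hc2 : (1:ℝ)/2 ≤ c := by linarith
    have hexp : 160*x*c^3*(c^2+1)^2 + 160*x^4*(c^2+1)^2 ≤ 160*x*(x+c)^3*(c^2+1)^2 := by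
      nlinarith [mul_nonneg (mul_nonneg (by positivity : (0:ℝ) ≤ 160*x) hQ) (by positivity : (0:ℝ) ≤ 3*x^2*c + 3*x*c^2)]
    have h1 : x*(c^2+1)^2 ≤ 160*x^4*(c^2+1)^2 := by nlinarith [mul_nonneg (mul_nonneg hx0.le hQ) (by nlinarith : (0:ℝ) ≤ 160*x^3 - 1)]
    have h2 : 20*c*(x^2+1)^2 ≤ 20*c*(c^2+1)^2 := by
      have hcx : (0:ℝ) ≤ c^2 - x^2 := by nlinarith [mul_nonneg (by linarith : (0:ℝ) ≤ c - x) (by linarith : (0:ℝ) ≤ c + x)]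
      have : (x^2+1)^2 ≤ (c^2+1)^2 := by nlinarith [mul_nonneg hcx (by positivity : (0:ℝ) ≤ c^2 + x^2 + 2)]
      nlinarith [mul_nonneg hc.le (sub_nonneg.2 this)]
    have h3 : 20*c*(c^2+1)^2 ≤ 160*x*c^3*(c^2+1)^2 := by
      have hstep : 20*c ≤ 160*x*c^3 := by
        nlinarith [mul_nonneg (by linarith : (0:ℝ) ≤ 2*x - 1) (by positivity : (0:ℝ) ≤ c^3), mul_nonneg hc.le (by nlinarith [mul_nonneg (by linarith : (0:ℝ) ≤ c - 1/2) (by linarith : (0:ℝ) ≤ c + 1/2)] : (0:ℝ) ≤ 4*c^2 - 1)]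
      have := mul_le_mul_of_nonneg_right hstep hQ
      linarith
    linarith

set_option maxHeartbeats 1000000 in
theorem certA1 (x y : ℝ) (hx : 1/2 ≤ x) :
    x*((x-y)^2+1)^2 ≤ 20*(x-y)*(x^2+1)^2 + 160*x*|y|^3*((x-y)^2+1)^2 := by
  have hx0 : (0:ℝ) < x := by linarith
  rcases le_or_gt y 0 with hy | hy
  · -- y ≤ 0, write y = -b with b ≥ 0
    obtain ⟨b, hb0, rfl⟩ : ∃ b, 0 ≤ b ∧ y = -b := ⟨-y, by linarith, by ring⟩
    have hb : |(-b)| = b := by rw [abs_neg, abs_of_nonneg hb0]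
    have hyx : x - -b = x + b := by ring
    rw [hb, hyx]
    rcases le_or_gt b x with h | h
    · -- b ≤ x : (x+b)^2+1 ≤ 4(x^2+1) and x+b ≥ x
      have hU : (x+b)^2+1 ≤ 4*(x^2+1) := by nlinarith
      have hU0 : (0:ℝ) < (x+b)^2+1 := by positivity
      have h1 : x*((x+b)^2+1)^2 ≤ 16*x*(x^2+1)^2 := by nlinarith [mul_le_mul hU hU (le_of_lt hU0) (by positivity : (0:ℝ) ≤ 4*(x^2+1))]
      have h2 : 16*x*(x^2+1)^2 ≤ 20*(x+b)*(x^2+1)^2 := by nlinarith [mul_nonneg (by linarith : (0:ℝ) ≤ 4*x + 20*b) (by positivity : (0:ℝ) ≤ (x^2+1)^2)]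
      have h3 : (0:ℝ) ≤ 160*x*b^3*((x+b)^2+1)^2 := by positivity
      linarith
    · -- b > x ≥ 1/2 : 160 b^3 ≥ 1
      have hb2 : (1:ℝ)/2 < b := by linarith
      have h1 : (1:ℝ) ≤ 160*b^3 := by
        nlinarith [mul_nonneg (by linarith : (0:ℝ) ≤ b - 1/2) (by positivity : (0:ℝ) ≤ b^2 + b/2 + 1/4)]
      have h2 : x*((x+b)^2+1)^2 ≤ 160*x*b^3*((x+b)^2+1)^2 := by
        nlinarith [mul_nonneg (mul_nonneg hx0.le (by positivity : (0:ℝ) ≤ ((x+b)^2+1)^2)) (by linarith : (0:ℝ) ≤ 160*b^3 - 1)]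
      have h3 : (0:ℝ) ≤ 20*(x+b)*(x^2+1)^2 := by positivity
      linarith
  · have hyabs : |y| = y := abs_of_pos hy
    rw [hyabs]
    rcases le_or_gt y x with h | h
    · -- 0 < y ≤ x : u = x - y ∈ [0, x]
      have hu0 : (0:ℝ) ≤ x - y := by linarith
      have hU : (x-y)^2+1 ≤ x^2+1 := by nlinarith
      have hUX : ((x-y)^2+1)^2 ≤ (x^2+1)^2 := by nlinarith [mul_le_mul hU hU (by positivity : (0:ℝ) ≤ (x-y)^2+1) (by positivity : (0:ℝ) ≤ x^2+1)]
      rcases le_or_gt x (20*(x-y)) with h2 | h2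
      · have h3 : x*((x-y)^2+1)^2 ≤ 20*(x-y)*(x^2+1)^2 := by
          have e1 : x*((x-y)^2+1)^2 ≤ x*(x^2+1)^2 := by nlinarith [mul_le_mul_of_nonneg_left hUX hx0.le]
          have e2 : x*(x^2+1)^2 ≤ 20*(x-y)*(x^2+1)^2 := by nlinarith [mul_le_mul_of_nonneg_right h2 (by positivity : (0:ℝ) ≤ (x^2+1)^2)]
          linarith
        have h4 : (0:ℝ) ≤ 160*x*y^3*((x-y)^2+1)^2 := by positivity
        linarith
      · -- y ≥ (19/20) x ≥ 19/40 : 160 y^3 ≥ 1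
        have hy19 : (19:ℝ)/40 ≤ y := by linarith
        have h1 : (1:ℝ) ≤ 160*y^3 := by
          nlinarith [mul_nonneg (by linarith : (0:ℝ) ≤ y - 19/40) (by positivity : (0:ℝ) ≤ y^2 + 19/40*y + (19/40)^2)]
        have h2' : x*((x-y)^2+1)^2 ≤ 160*x*y^3*((x-y)^2+1)^2 := by
          nlinarith [mul_nonneg (mul_nonneg hx0.le (by positivity : (0:ℝ) ≤ ((x-y)^2+1)^2)) (by linarith : (0:ℝ) ≤ 160*y^3 - 1)]
        have h8 : (0:ℝ) ≤ 20*(x-y)*(x^2+1)^2 := by positivity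
        linarith
    · -- y > x : c = y - x > 0
      have hc : 0 < y - x := by linarith
      have := certA_hard x (y-x) hx hc
      have hxy : x + (y-x) = y := by ring
      rw [hxy] at this
      have hsq : (x-y)^2 = (y-x)^2 := by ring
      rw [hsq]
      linarith

theorem certB1 (x y : ℝ) (hx : |x| ≤ 1/2) :
    3*(x-y)^2 - 1 + ((x-y)^2+1)^3/25 ≤ 200*|y|^3*((x-y)^2+1)^3 := by
  have h := certB_red |x-y| |y| (abs_nonneg _) (abs_nonneg _)
    (by calc |x-y| ≤ |x| + |y| := abs_sub _ _
          _ ≤ |y| + 1/2 := by linarith)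
  simpa [sq_abs] using h

-- scaled polynomial certificates
theorem certAt (t x y : ℝ) (ht : 0 < t) (hx : t/2 ≤ x) :
    t^3*x*((x-y)^2+t^2)^2 ≤ 20*t^3*(x-y)*(x^2+t^2)^2 + 160*x*|y|^3*((x-y)^2+t^2)^2 := by
  have ht' : t ≠ 0 := ne_of_gt ht
  have h := certA1 (x/t) (y/t) (by rw [le_div_iff₀ ht]; linarith)
  rw [show x/t - y/t = (x-y)/t by ring, abs_div, abs_of_pos ht] at h
  have h9 : (0:ℝ) ≤ t^9 := by positivity
  have hmul := mul_le_mul_of_nonneg_left h h9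
  have e1 : t^9*(x/t*(((x-y)/t)^2+1)^2) = t^4*(x*((x-y)^2+t^2)^2) := by
    field_simp
  have e2 : t^9*(20*((x-y)/t)*((x/t)^2+1)^2 + 160*(x/t)*(|y|/t)^3*(((x-y)/t)^2+1)^2)
      = t^4*(20*(x-y)*(x^2+t^2)^2) + t*(160*x*|y|^3*((x-y)^2+t^2)^2) := by
    field_simp
  rw [e1, e2] at hmul
  refine le_of_mul_le_mul_left ?_ ht
  linarith [hmul]

theorem certBt (t x y : ℝ) (ht : 0 < t) (hx : |x| ≤ t/2) :
    t^7*(3*(x-y)^2 - t^2) + t^3*((x-y)^2+t^2)^3/25 ≤ 200*|y|^3*((x-y)^2+t^2)^3 := by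
  have ht' : t ≠ 0 := ne_of_gt ht
  have h := certB1 (x/t) (y/t) (by rw [abs_div, abs_of_pos ht, div_le_iff₀ ht]; linarith)
  rw [show x/t - y/t = (x-y)/t by ring, abs_div, abs_of_pos ht] at h
  have h9 : (0:ℝ) ≤ t^9 := by positivity
  have hmul := mul_le_mul_of_nonneg_left h h9
  have e1 : t^9*(3*((x-y)/t)^2 - 1 + (((x-y)/t)^2+1)^3/25)
      = t^7*(3*(x-y)^2 - t^2) + t^3*((x-y)^2+t^2)^3/25 := by
    field_simp
  have e2 : t^9*(200*(|y|/t)^3*(((x-y)/t)^2+1)^3) = 200*|y|^3*((x-y)^2+t^2)^3 := by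
    field_simp
  rw [e1, e2] at hmul
  exact hmul

theorem pointA (t x y : ℝ) (ht : 0 < t) (hx : t/2 ≤ x) :
    (t^3*x/20 - 8*x*|y|^3)/(t^3*(x^2+t^2)^2) ≤ (x-y)/(((x-y)^2+t^2)^2) := by
  rw [div_le_div_iff₀ (by positivity) (by positivity)]
  have h := certAt t x y ht hx
  nlinarith [h]

theorem pointA_neg (t x y : ℝ) (ht : 0 < t) (hx : x ≤ -(t/2)) :
    (x-y)/(((x-y)^2+t^2)^2) ≤ (t^3*x/20 - 8*x*|y|^3)/(t^3*(x^2+t^2)^2) := by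
  rw [div_le_div_iff₀ (by positivity) (by positivity)]
  have h := certAt t (-x) (-y) ht (by linarith)
  rw [abs_neg] at h
  nlinarith [h]

theorem pointB (t x y : ℝ) (ht : 0 < t) (hx : |x| ≤ t/2) :
    (t^3/25 - 200*|y|^3)/t^7 ≤ (t^2-3*(x-y)^2)/(((x-y)^2+t^2)^3) := by
  rw [div_le_div_iff₀ (by positivity) (by positivity)]
  have h := certBt t x y ht hx
  nlinarith [h]

theorem bound1 (t u : ℝ) (ht : 0 < t) : ‖-(2*u)/((u^2+t^2)^2)‖ ≤ 1/t^3 := by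
  rw [Real.norm_eq_abs, abs_div, abs_of_pos (by positivity : (0:ℝ) < (u^2+t^2)^2)]
  rw [div_le_div_iff₀ (by positivity) (by positivity)]
  have h1 : |(-(2*u))| = 2 * |u| := by simp [abs_mul]
  rw [h1]
  have h2 : 2 * |u| * t ≤ u^2+t^2 := by nlinarith [sq_nonneg (|u| - t), sq_abs u]
  nlinarith [sq_abs u, abs_nonneg u, sq_nonneg (u^2+t^2), mul_pos ht ht,
    mul_le_mul_of_nonneg_right h2 (by positivity : (0:ℝ) ≤ t^2*(u^2+t^2)),
    mul_le_mul_of_nonneg_right (by nlinarith [sq_nonneg u] : t^2 ≤ u^2 + t^2) (by positivity : (0:ℝ) ≤ t*(u^2+t^2))]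

theorem bound2 (t u : ℝ) (ht : 0 < t) : ‖(t^2-3*u^2)/((u^2+t^2)^3)‖ ≤ 3/t^4 := by
  rw [Real.norm_eq_abs, abs_div, abs_of_pos (by positivity : (0:ℝ) < (u^2+t^2)^3)]
  rw [div_le_div_iff₀ (by positivity) (by positivity)]
  have habs : |t^2-3*u^2| ≤ 3*(u^2+t^2) := abs_le.2 ⟨by nlinarith [sq_nonneg u], by nlinarith [sq_nonneg u]⟩
  have h3 : t^4 ≤ (u^2+t^2)^2 := by nlinarith [sq_nonneg u, sq_nonneg (u^2+t^2), mul_pos ht ht]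
  calc |t^2-3*u^2| * t^4 ≤ (3*(u^2+t^2)) * (u^2+t^2)^2 := by
        apply mul_le_mul habs h3 (by positivity) (by positivity)
    _ = 3*(u^2+t^2)^3 := by ring

theorem hasDeriv_g (μ : Measure ℝ) [IsProbabilityMeasure μ] (t : ℝ) (ht : 0 < t) (x : ℝ) :
    Integrable (fun y => -(2*(x-y))/(((x-y)^2+t^2)^2)) μ ∧
    HasDerivAt (fun x => ∫ y, ((x - y)^2 + t^2)⁻¹ ∂μ)
      (∫ y, -(2*(x-y))/(((x-y)^2+t^2)^2) ∂μ) x := by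
  have hpos : ∀ z y : ℝ, (0:ℝ) < (z-y)^2 + t^2 := fun z y => by positivity
  have hcont : ∀ z : ℝ, Continuous fun y : ℝ => ((z-y)^2+t^2)⁻¹ := fun z =>
    (((continuous_const.sub continuous_id).pow 2).add continuous_const).inv₀ (fun y => (hpos z y).ne')
  have hcont' : Continuous fun y : ℝ => -(2*(x-y))/(((x-y)^2+t^2)^2) := by
    apply Continuous.div
    · fun_prop
    · fun_prop
    · exact fun y => by positivity
  refine hasDerivAt_integral_of_dominated_loc_of_deriv_le
      (F := fun z y => ((z-y)^2+t^2)⁻¹) (F' := fun z y => -(2*(z-y))/(((z-y)^2+t^2)^2))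
      (s := Metric.ball x 1) (bound := fun _ => 1/t^3) (Metric.ball_mem_nhds x one_pos) ?_ ?_ ?_ ?_ ?_ ?_
  · exact Eventually.of_forall fun z => (hcont z).aestronglyMeasurable
  · apply Integrable.mono' (integrable_const ((t^2)⁻¹)) ((hcont x).aestronglyMeasurable)
    refine ae_of_all _ fun y => ?_
    rw [Real.norm_eq_abs, abs_of_pos (by positivity)]
    exact inv_anti₀ (by positivity) (by nlinarith [sq_nonneg (x-y)])
  · exact hcont'.aestronglyMeasurable
  · exact ae_of_all _ fun y z _ => bound1 t (z-y) ht
  · exact integrable_const _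
  · refine ae_of_all _ fun y z _ => ?_
    have h1 : HasDerivAt (fun w : ℝ => (w-y)^2+t^2) (2*(z-y)) z := by
      simpa using (((hasDerivAt_id z).sub_const y).pow 2).add_const (t^2)
    exact h1.inv (hpos z y).ne'

theorem hasDeriv_psi (μ : Measure ℝ) [IsProbabilityMeasure μ] (t : ℝ) (ht : 0 < t) (x : ℝ) :
    Integrable (fun y => (t^2-3*(x-y)^2)/(((x-y)^2+t^2)^3)) μ ∧
    HasDerivAt (fun x => ∫ y, (x-y)/(((x-y)^2+t^2)^2) ∂μ)
      (∫ y, (t^2-3*(x-y)^2)/(((x-y)^2+t^2)^3) ∂μ) x := by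
  have hpos : ∀ z y : ℝ, (0:ℝ) < (z-y)^2 + t^2 := fun z y => by positivity
  have hcont : ∀ z : ℝ, Continuous fun y : ℝ => (z-y)/(((z-y)^2+t^2)^2) := by
    intro z
    apply Continuous.div
    · fun_prop
    · fun_prop
    · exact fun y => by positivity
  have hcont' : Continuous fun y : ℝ => (t^2-3*(x-y)^2)/(((x-y)^2+t^2)^3) := by
    apply Continuous.div
    · fun_prop
    · fun_prop
    · exact fun y => by positivity
  refine hasDerivAt_integral_of_dominated_loc_of_deriv_le
      (F := fun z y => (z-y)/(((z-y)^2+t^2)^2)) (F' := fun z y => (t^2-3*(z-y)^2)/(((z-y)^2+t^2)^3))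
      (s := Metric.ball x 1) (bound := fun _ => 3/t^4) (Metric.ball_mem_nhds x one_pos) ?_ ?_ ?_ ?_ ?_ ?_
  · exact Eventually.of_forall fun z => (hcont z).aestronglyMeasurable
  · apply Integrable.mono' (integrable_const (1/(2*t^3))) ((hcont x).aestronglyMeasurable)
    refine ae_of_all _ fun y => ?_
    rw [Real.norm_eq_abs, abs_div, abs_of_pos (by positivity : (0:ℝ) < ((x-y)^2+t^2)^2)]
    rw [div_le_div_iff₀ (by positivity) (by positivity)]
    have h2 : 2 * |x-y| * t ≤ (x-y)^2+t^2 := by nlinarith [sq_nonneg (|x-y| - t), sq_abs (x-y)]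
    nlinarith [sq_abs (x-y), abs_nonneg (x-y), mul_pos ht ht, mul_pos (mul_pos ht ht) ht,
      mul_le_mul_of_nonneg_right h2 (by positivity : (0:ℝ) ≤ t^2*((x-y)^2+t^2)),
      mul_le_mul_of_nonneg_right (by nlinarith [sq_nonneg (x-y)] : t^2 ≤ (x-y)^2 + t^2) (by positivity : (0:ℝ) ≤ t*((x-y)^2+t^2))]
  · exact hcont'.aestronglyMeasurable
  · exact ae_of_all _ fun y z _ => bound2 t (z-y) ht
  · exact integrable_const _
  · refine ae_of_all _ fun y z _ => ?_
    have h1 : HasDerivAt (fun w : ℝ => (w-y)^2+t^2) (2*(z-y)) z := by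
      simpa using (((hasDerivAt_id z).sub_const y).pow 2).add_const (t^2)
    have hden : HasDerivAt (fun w : ℝ => ((w-y)^2+t^2)^2) (2*((z-y)^2+t^2)*(2*(z-y))) z := by
      exact (h1.pow 2).congr_deriv (by norm_num <;> ring)
    have hnum : HasDerivAt (fun w : ℝ => w - y) 1 z := (hasDerivAt_id z).sub_const y
    have := hnum.div hden (by positivity : ((z-y)^2+t^2)^2 ≠ 0)
    refine this.congr_deriv ?_
    have hU : (z-y)^2+t^2 ≠ 0 := (hpos z y).ne'
    rw [div_eq_div_iff (by positivity) (by positivity)]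
    ring

theorem cauchy_convolution_unimodal_large_time
    (μ : Measure ℝ) [IsProbabilityMeasure μ]
    (hint : Integrable (fun x : ℝ => |x| ^ 3) μ)
    (β : ℝ) (hβ : β = ∫ x, |x| ^ 3 ∂μ)
    (t : ℝ) (ht0 : 0 < t) (ht : 20 * β ^ ((1 : ℝ) / 3) ≤ t) :
    Unimodal (fun x => ∫ y, ((x - y) ^ 2 + t ^ 2)⁻¹ ∂μ) := by
  -- basic facts about β
  have hβ0 : 0 ≤ β := hβ ▸ integral_nonneg (fun x => by positivity)
  have hβt : 8000 * β ≤ t^3 := by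
    have h3 : (β ^ ((1:ℝ)/3))^(3:ℕ) = β := by
      rw [← Real.rpow_natCast (β ^ ((1:ℝ)/3)) 3, ← Real.rpow_mul hβ0]
      norm_num
    have hle : (β ^ ((1:ℝ)/3))^(3:ℕ) ≤ (t/20)^(3:ℕ) :=
      pow_le_pow_left₀ (Real.rpow_nonneg hβ0 _) (by linarith) 3
    rw [h3] at hle
    nlinarith [hle]
  set ψ : ℝ → ℝ := fun x => ∫ y, (x-y)/(((x-y)^2+t^2)^2) ∂μ with hψdef
  -- derivative of g
  have hg' : ∀ x : ℝ, HasDerivAt (fun x => ∫ y, ((x - y)^2 + t^2)⁻¹ ∂μ) (-2 * ψ x) x := by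
    intro x
    have h := (hasDeriv_g μ t ht0 x).2
    have e : (∫ y, -(2*(x-y))/(((x-y)^2+t^2)^2) ∂μ) = -2 * ψ x := by
      rw [hψdef, ← integral_const_mul]
      exact integral_congr_ae (Eventually.of_forall fun y => by ring)
    rwa [e] at h
  -- integrability of the ψ integrand
  have hint1 : ∀ x : ℝ, Integrable (fun y => (x-y)/(((x-y)^2+t^2)^2)) μ := by
    intro x
    exact ((hasDeriv_g μ t ht0 x).1.const_mul (-1/2)).congr
      (Eventually.of_forall fun y => by ring)
  -- integrability of minorant/majorant functions
  have hintm : ∀ A B : ℝ, Integrable (fun y : ℝ => A + B * |y|^3) μ :=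
    fun A B => (integrable_const A).add (hint.const_mul B)
  have hintval : ∀ A B : ℝ, (∫ y, (A + B * |y|^3) ∂μ) = A + B * β := by
    intro A B
    rw [integral_add (integrable_const A) (hint.const_mul B), integral_const,
      integral_const_mul, ← hβ]
    simp
  -- ψ is positive on [t/2, ∞)
  have hψpos : ∀ x : ℝ, t/2 ≤ x → 0 < ψ x := by
    intro x hx
    have hx0 : 0 < x := by linarith
    have key : (∫ y, (x/(20*(x^2+t^2)^2) + (-8*x/(t^3*(x^2+t^2)^2)) * |y|^3) ∂μ) ≤ ψ x := by
      apply integral_mono (hintm _ _) (hint1 x)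
      intro y
      dsimp only
      have h := pointA t x y ht0 hx
      have e : x/(20*(x^2+t^2)^2) + (-8*x/(t^3*(x^2+t^2)^2)) * |y|^3
          = (t^3*x/20 - 8*x*|y|^3)/(t^3*(x^2+t^2)^2) := by
        field_simp
        ring
      rw [e]
      exact h
    rw [hintval] at key
    have hpos : 0 < x/(20*(x^2+t^2)^2) + (-8*x/(t^3*(x^2+t^2)^2)) * β := by
      have e : x/(20*(x^2+t^2)^2) + (-8*x/(t^3*(x^2+t^2)^2)) * β
          = x*(t^3 - 160*β)/(20*t^3*(x^2+t^2)^2) := by field_simp; ring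
      rw [e]
      apply div_pos (mul_pos hx0 (by nlinarith [pow_pos ht0 3])) (by positivity)
    linarith
  -- ψ is negative on (-∞, -t/2]
  have hψneg : ∀ x : ℝ, x ≤ -(t/2) → ψ x < 0 := by
    intro x hx
    have hx0 : x < 0 := by linarith
    have key : ψ x ≤ ∫ y, (x/(20*(x^2+t^2)^2) + (-8*x/(t^3*(x^2+t^2)^2)) * |y|^3) ∂μ := by
      apply integral_mono (hint1 x) (hintm _ _)
      intro y
      dsimp only
      have h := pointA_neg t x y ht0 hx
      have e : x/(20*(x^2+t^2)^2) + (-8*x/(t^3*(x^2+t^2)^2)) * |y|^3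
          = (t^3*x/20 - 8*x*|y|^3)/(t^3*(x^2+t^2)^2) := by field_simp; ring
      rw [e]
      exact h
    rw [hintval] at key
    have hpos : x/(20*(x^2+t^2)^2) + (-8*x/(t^3*(x^2+t^2)^2)) * β < 0 := by
      have e : x/(20*(x^2+t^2)^2) + (-8*x/(t^3*(x^2+t^2)^2)) * β
          = x*(t^3 - 160*β)/(20*t^3*(x^2+t^2)^2) := by field_simp; ring
      rw [e]
      apply div_neg_of_neg_of_pos (mul_neg_of_neg_of_pos hx0 (by nlinarith [pow_pos ht0 3])) (by positivity)
    linarith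
  -- ψ' is positive on [-t/2, t/2]
  have hψ'pos : ∀ x : ℝ, |x| ≤ t/2 → 0 < ∫ y, (t^2-3*(x-y)^2)/(((x-y)^2+t^2)^3) ∂μ := by
    intro x hx
    have key : (∫ y, (1/(25*t^4) + (-200/t^7) * |y|^3) ∂μ)
        ≤ ∫ y, (t^2-3*(x-y)^2)/(((x-y)^2+t^2)^3) ∂μ := by
      apply integral_mono (hintm _ _) (hasDeriv_psi μ t ht0 x).1
      intro y
      dsimp only
      have h := pointB t x y ht0 hx
      have e : 1/(25*t^4) + (-200/t^7) * |y|^3 = (t^3/25 - 200*|y|^3)/t^7 := by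
        field_simp
        ring
      rw [e]
      exact h
    rw [hintval] at key
    have hpos : 0 < 1/(25*t^4) + (-200/t^7) * β := by
      have e : 1/(25*t^4) + (-200/t^7) * β = (t^3 - 5000*β)/(25*t^7) := by field_simp; ring
      rw [e]
      apply div_pos (by nlinarith [pow_pos ht0 3]) (by positivity)
    linarith
  -- ψ is continuous and strictly monotone on the middle interval
  have hψderiv : ∀ x : ℝ, HasDerivAt ψ (∫ y, (t^2-3*(x-y)^2)/(((x-y)^2+t^2)^3) ∂μ) x :=
    fun x => (hasDeriv_psi μ t ht0 x).2
  have hψcont : Continuous ψ := by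
    have : Differentiable ℝ ψ := fun x => (hψderiv x).differentiableAt
    exact this.continuous
  have hψmono : StrictMonoOn ψ (Icc (-(t/2)) (t/2)) := by
    apply strictMonoOn_of_deriv_pos (convex_Icc _ _) hψcont.continuousOn
    intro x hx
    rw [interior_Icc] at hx
    rw [(hψderiv x).deriv]
    exact hψ'pos x (abs_le.2 ⟨by linarith [hx.1], by linarith [hx.2]⟩)
  -- find the mode a via IVT
  obtain ⟨a, ha_mem, ha0⟩ : ∃ a ∈ Icc (-(t/2)) (t/2), ψ a = 0 := by
    have hsub := intermediate_value_Icc (by linarith : -(t/2) ≤ t/2) hψcont.continuousOn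
    have h0 : (0:ℝ) ∈ Icc (ψ (-(t/2))) (ψ (t/2)) :=
      ⟨le_of_lt (hψneg _ le_rfl), le_of_lt (hψpos _ le_rfl)⟩
    obtain ⟨a, ham, ha⟩ := hsub h0
    exact ⟨a, ham, ha⟩
  -- sign of ψ on each side of a
  have hsign_lt : ∀ x : ℝ, x < a → ψ x < 0 := by
    intro x hxa
    rcases lt_or_ge x (-(t/2)) with h | h
    · exact hψneg x h.le
    · have hx_mem : x ∈ Icc (-(t/2)) (t/2) := ⟨h, by linarith [ha_mem.2]⟩
      have := hψmono hx_mem ha_mem hxa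
      linarith [ha0 ▸ this]
  have hsign_gt : ∀ x : ℝ, a < x → 0 < ψ x := by
    intro x hxa
    rcases le_or_gt x (t/2) with h | h
    · have hx_mem : x ∈ Icc (-(t/2)) (t/2) := ⟨by linarith [ha_mem.1], h⟩
      have := hψmono ha_mem hx_mem hxa
      linarith [ha0 ▸ this]
    · exact hψpos x (by linarith)
  -- conclude
  have hgdiff : Differentiable ℝ (fun x => ∫ y, ((x - y)^2 + t^2)⁻¹ ∂μ) :=
    fun x => (hg' x).differentiableAt
  refine ⟨a, ?_, ?_⟩
  · have : StrictMonoOn (fun x => ∫ y, ((x - y)^2 + t^2)⁻¹ ∂μ) (Iic a) := by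
      apply strictMonoOn_of_deriv_pos (convex_Iic a) hgdiff.continuous.continuousOn
      intro x hx
      rw [interior_Iic] at hx
      rw [(hg' x).deriv]
      have := hsign_lt x hx
      linarith
    exact this.monotoneOn
  · have : StrictAntiOn (fun x => ∫ y, ((x - y)^2 + t^2)⁻¹ ∂μ) (Ici a) := by
      apply strictAntiOn_of_deriv_neg (convex_Ici a) hgdiff.continuous.continuousOn
      intro x hx
      rw [interior_Ici] at hx
      rw [(hg' x).deriv]
      have := hsign_gt x hx
      linarith
    exact this.antitoneOn
end

section
/- Let μ be a Borel probability measure on ℝ such that β := ∫_ℝ |x|³ dμ(x) < ∞. Then for every t > 0 with t ≥ 20·β^{1/3}, the function g_{μ,t}(x) = ∫_ℝ ((x-y)² + t²)⁻¹ dμ(y) is differentiable on ℝ, and its derivative satisfies g_{μ,t}'(x) < 0 for every x ≥ t/4 and g_{μ,t}'(x) > 0 for every x ≤ -t/4. -/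
open MeasureTheory Real Set Filter Topology Metric

lemma cauchy_aux_abs_bound (t : ℝ) (ht : 0 < t) (u : ℝ) :
    |u| / ((u ^ 2 + t ^ 2) ^ 2) ≤ 1 / (2 * t ^ 3) := by
  rw [div_le_div_iff₀ (by positivity) (by positivity)]
  nlinarith [sq_nonneg (|u| - t), mul_pos ht ht, sq_abs u, abs_nonneg u]

lemma cauchy_aux_cont (t : ℝ) (ht : 0 < t) (x : ℝ) :
    Continuous fun y : ℝ => (x - y) / ((x - y) ^ 2 + t ^ 2) ^ 2 := by
  apply Continuous.div (by continuity) (by continuity)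
  intro y; positivity

lemma cauchy_aux_int (μ : Measure ℝ) [IsProbabilityMeasure μ] (t : ℝ) (ht : 0 < t) (x : ℝ) :
    Integrable (fun y : ℝ => (x - y) / ((x - y) ^ 2 + t ^ 2) ^ 2) μ := by
  refine Integrable.mono' (integrable_const (1 / (2 * t ^ 3)))
    (cauchy_aux_cont t ht x).aestronglyMeasurable ?_
  filter_upwards with y
  rw [Real.norm_eq_abs, abs_div, abs_of_pos (show (0:ℝ) < ((x - y) ^ 2 + t ^ 2) ^ 2 by positivity)]
  exact cauchy_aux_abs_bound t ht (x - y)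

lemma cauchy_aux_hasDeriv (μ : Measure ℝ) [IsProbabilityMeasure μ] (t : ℝ) (ht : 0 < t)
    (x : ℝ) :
    HasDerivAt (fun x : ℝ => ∫ y, ((x - y) ^ 2 + t ^ 2)⁻¹ ∂μ)
      (-2 * ∫ y, (x - y) / ((x - y) ^ 2 + t ^ 2) ^ 2 ∂μ) x := by
  have key := hasDerivAt_integral_of_dominated_loc_of_deriv_le (μ := μ)
    (F := fun x y => ((x - y) ^ 2 + t ^ 2)⁻¹)
    (F' := fun x y => -2 * ((x - y) / ((x - y) ^ 2 + t ^ 2) ^ 2))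
    (x₀ := x) (bound := fun _ => 1 / t ^ 3) (s := ball x 1) (ball_mem_nhds x one_pos)
    ?_ ?_ ?_ ?_ ?_ ?_
  · rw [integral_const_mul] at key
    exact key.2
  · filter_upwards with x'
    exact (Continuous.inv₀ (by continuity) (fun y => by positivity)).aestronglyMeasurable
  · refine Integrable.mono' (integrable_const ((t ^ 2)⁻¹))
      (Continuous.inv₀ (by continuity) (fun y => by positivity)).aestronglyMeasurable ?_
    filter_upwards with y
    rw [Real.norm_eq_abs, abs_of_pos (by positivity)]
    exact inv_anti₀ (by positivity) (by nlinarith [sq_nonneg (x - y)])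
  · exact (continuous_const.mul (cauchy_aux_cont t ht x)).aestronglyMeasurable
  · filter_upwards with y x' _
    rw [norm_mul, norm_div, Real.norm_eq_abs, Real.norm_eq_abs, Real.norm_eq_abs,
      abs_of_pos (show (0:ℝ) < ((x' - y) ^ 2 + t ^ 2) ^ 2 by positivity)]
    have := cauchy_aux_abs_bound t ht (x' - y)
    rw [show |(-2 : ℝ)| = 2 by norm_num]
    calc 2 * (|x' - y| / ((x' - y) ^ 2 + t ^ 2) ^ 2) ≤ 2 * (1 / (2 * t ^ 3)) := by linarith
      _ = 1 / t ^ 3 := by field_simp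
  · exact integrable_const _
  · filter_upwards with y x' _
    have h1 : HasDerivAt (fun x : ℝ => (x - y) ^ 2 + t ^ 2) (2 * (x' - y)) x' := by
      have := (((hasDerivAt_id x').sub_const y).pow 2).add_const (t ^ 2)
      simpa using this
    have h2 : HasDerivAt (fun x : ℝ => ((x - y) ^ 2 + t ^ 2)⁻¹) _ x' := h1.inv (by positivity)
    exact h2.congr_deriv (by ring)

set_option maxHeartbeats 1000000 in
lemma cauchy_aux_key (μ : Measure ℝ) [IsProbabilityMeasure μ]
    (hint : Integrable (fun x : ℝ => |x| ^ 3) μ)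
    (t : ℝ) (ht0 : 0 < t) (hβ : ∫ x, |x| ^ 3 ∂μ ≤ (t / 20) ^ 3)
    (x : ℝ) (hx : t / 4 ≤ x) :
    0 < ∫ y, (x - y) / ((x - y) ^ 2 + t ^ 2) ^ 2 ∂μ := by
  set β := ∫ x, |x| ^ 3 ∂μ with hβdef
  have hx0 : 0 < x := lt_of_lt_of_le (by linarith) hx
  have htx : t ≤ 4 * x := by linarith
  set A : Set ℝ := {y | |y| ≤ x / 2} with hAdef
  have hA : MeasurableSet A := (isClosed_le continuous_abs continuous_const).measurableSet
  set a := (μ A).toReal with hadef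
  set b := (μ Aᶜ).toReal with hbdef
  have ha0 : 0 ≤ a := ENNReal.toReal_nonneg
  have hb0 : 0 ≤ b := ENNReal.toReal_nonneg
  have hab : b = 1 - a := by
    rw [hbdef, measure_compl hA (measure_ne_top μ A), measure_univ,
      ENNReal.toReal_sub_of_le prob_le_one ENNReal.one_ne_top, ENNReal.toReal_one, hadef]
  -- Markov
  have hmarkov : (x / 2) ^ 3 * b ≤ β := by
    have h1 := mul_meas_ge_le_integral_of_nonneg (μ := μ)
      (Eventually.of_forall fun y => by positivity) hint ((x / 2) ^ 3)
    have hsub : Aᶜ ⊆ {y : ℝ | (x / 2) ^ 3 ≤ |y| ^ 3} := by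
      intro y hy
      simp only [hAdef, mem_compl_iff, mem_setOf_eq, not_le] at hy ⊢
      exact pow_le_pow_left₀ (by positivity) hy.le 3
    have h2 : (μ Aᶜ).toReal ≤ (μ {y : ℝ | (x / 2) ^ 3 ≤ |y| ^ 3}).toReal :=
      ENNReal.toReal_le_toReal (measure_ne_top _ _) (measure_ne_top _ _)
        |>.mpr (measure_mono hsub)
    calc (x / 2) ^ 3 * b ≤ (x / 2) ^ 3 * (μ {y : ℝ | (x / 2) ^ 3 ≤ |y| ^ 3}).toReal := by
          gcongr
      _ ≤ β := h1
  set c := (x / 2) / ((3 * x / 2) ^ 2 + t ^ 2) ^ 2 with hcdef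
  have hInt := cauchy_aux_int μ t ht0 x
  -- lower bound on good set
  have hgood : c * a ≤ ∫ y in A, (x - y) / ((x - y) ^ 2 + t ^ 2) ^ 2 ∂μ := by
    refine setIntegral_ge_of_const_le_real hA (measure_ne_top μ A) ?_ hInt.integrableOn
    intro y hy
    have hy' : |y| ≤ x / 2 := hy
    obtain ⟨hy1, hy2⟩ := abs_le.mp hy'
    have h1 : x / 2 ≤ x - y := by linarith
    have h2 : x - y ≤ 3 * x / 2 := by linarith
    rw [hcdef]
    have hu2 : (x - y) ^ 2 ≤ (3 * x / 2) ^ 2 := by nlinarith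
    have hden : ((x - y) ^ 2 + t ^ 2) ^ 2 ≤ ((3 * x / 2) ^ 2 + t ^ 2) ^ 2 :=
      pow_le_pow_left₀ (by positivity) (by linarith) 2
    calc x / 2 / ((3 * x / 2) ^ 2 + t ^ 2) ^ 2
        ≤ x / 2 / ((x - y) ^ 2 + t ^ 2) ^ 2 := by
          apply div_le_div_of_nonneg_left (by positivity) (by positivity) hden
      _ ≤ (x - y) / ((x - y) ^ 2 + t ^ 2) ^ 2 := by
          gcongr
  -- lower bound on bad set
  have hbad : -(1 / (2 * t ^ 3) * b) ≤ ∫ y in Aᶜ, (x - y) / ((x - y) ^ 2 + t ^ 2) ^ 2 ∂μ := by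
    have hn := norm_setIntegral_le_of_norm_le_const (μ := μ) (s := Aᶜ)
      (measure_lt_top μ Aᶜ) (C := 1 / (2 * t ^ 3)) (f := fun y => (x - y) / ((x - y) ^ 2 + t ^ 2) ^ 2)
      (fun y _ => by
        rw [Real.norm_eq_abs, abs_div,
          abs_of_pos (show (0:ℝ) < ((x - y) ^ 2 + t ^ 2) ^ 2 by positivity)]
        exact cauchy_aux_abs_bound t ht0 (x - y))
    change _ ≤ _ * b at hn
    rw [Real.norm_eq_abs] at hn
    have := (abs_le.mp hn).1
    linarith
  have hsplit : (∫ y in A, (x - y) / ((x - y) ^ 2 + t ^ 2) ^ 2 ∂μ) +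
      (∫ y in Aᶜ, (x - y) / ((x - y) ^ 2 + t ^ 2) ^ 2 ∂μ) =
      ∫ y, (x - y) / ((x - y) ^ 2 + t ^ 2) ^ 2 ∂μ :=
    integral_add_compl hA hInt
  -- arithmetic
  have hβx : β ≤ x ^ 3 / 125 := by
    calc β ≤ (t / 20) ^ 3 := hβ
      _ ≤ x ^ 3 / 125 := by
          have h3 : t ^ 3 ≤ (4 * x) ^ 3 := pow_le_pow_left₀ ht0.le htx 3
          nlinarith [h3]
  have hb8 : b ≤ 8 / 125 := by nlinarith [pow_pos hx0 3]
  have ha117 : 117 / 125 ≤ a := by linarith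
  have step1 : 1 / (2 * t ^ 3) * b ≤ 1 / (2000 * x ^ 3) := by
    rw [div_mul_eq_mul_div, div_le_div_iff₀ (by positivity) (by positivity)]
    nlinarith [pow_pos hx0 3, pow_pos ht0 3]
  have step2 : 1 / (2000 * x ^ 3) < c * a := by
    rw [hcdef, div_mul_eq_mul_div, div_lt_div_iff₀ (by positivity) (by positivity)]
    have ht2 : t ^ 2 ≤ 16 * x ^ 2 := by nlinarith
    have hs : (3 * x / 2) ^ 2 + t ^ 2 ≤ 73 / 4 * x ^ 2 := by nlinarith
    have hD : ((3 * x / 2) ^ 2 + t ^ 2) ^ 2 ≤ (73 / 4 * x ^ 2) ^ 2 :=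
      pow_le_pow_left₀ (by positivity) hs 2
    have h := mul_le_mul_of_nonneg_right ha117 (pow_pos hx0 4).le
    have hx4 := pow_pos hx0 4
    have he : (73 / 4 * x ^ 2) ^ 2 = 5329 / 16 * x ^ 4 := by ring
    calc 1 * ((3 * x / 2) ^ 2 + t ^ 2) ^ 2 = ((3 * x / 2) ^ 2 + t ^ 2) ^ 2 := one_mul _
      _ ≤ (73 / 4 * x ^ 2) ^ 2 := hD
      _ = 5329 / 16 * x ^ 4 := he
      _ < 936 * x ^ 4 := by linarith
      _ = 1000 * (117 / 125 * x ^ 4) := by ring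
      _ ≤ 1000 * (a * x ^ 4) := by linarith
      _ = x / 2 * a * (2000 * x ^ 3) := by ring
  linarith


theorem cauchy_convolution_deriv_sign_large_time
    (μ : Measure ℝ) [IsProbabilityMeasure μ]
    (hint : Integrable (fun x : ℝ => |x| ^ 3) μ)
    (β : ℝ) (hβ : β = ∫ x, |x| ^ 3 ∂μ)
    (t : ℝ) (ht0 : 0 < t) (ht : 20 * β ^ ((1 : ℝ) / 3) ≤ t) :
    Differentiable ℝ (fun x : ℝ => ∫ y, ((x - y) ^ 2 + t ^ 2)⁻¹ ∂μ) ∧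
    (∀ x : ℝ, t / 4 ≤ x →
      deriv (fun x : ℝ => ∫ y, ((x - y) ^ 2 + t ^ 2)⁻¹ ∂μ) x < 0) ∧
    (∀ x : ℝ, x ≤ -(t / 4) →
      0 < deriv (fun x : ℝ => ∫ y, ((x - y) ^ 2 + t ^ 2)⁻¹ ∂μ) x) := by
  have hβ0 : 0 ≤ β := hβ ▸ integral_nonneg fun y => by positivity
  have h13' : (0 : ℝ) ≤ β ^ ((1 : ℝ) / 3) := Real.rpow_nonneg hβ0 _
  have hβt : ∫ x, |x| ^ 3 ∂μ ≤ (t / 20) ^ 3 := by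
    rw [← hβ]
    calc β = (β ^ ((1 : ℝ) / 3)) ^ 3 := by
          rw [← Real.rpow_natCast (β ^ ((1 : ℝ) / 3)) 3, ← Real.rpow_mul hβ0]
          norm_num
      _ ≤ (t / 20) ^ 3 := pow_le_pow_left₀ h13' (by linarith) 3
  refine ⟨fun x => (cauchy_aux_hasDeriv μ t ht0 x).differentiableAt, ?_, ?_⟩
  · intro x hx
    rw [(cauchy_aux_hasDeriv μ t ht0 x).deriv]
    have := cauchy_aux_key μ hint t ht0 hβt x hx
    nlinarith
  · intro x hx
    rw [(cauchy_aux_hasDeriv μ t ht0 x).deriv]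
    set ν : Measure ℝ := μ.map Neg.neg with hν
    haveI : IsProbabilityMeasure ν := Measure.isProbabilityMeasure_map measurable_neg.aemeasurable
    have hint' : Integrable (fun x : ℝ => |x| ^ 3) ν := by
      rw [hν, integrable_map_measure ((show Continuous (fun b : ℝ => |b| ^ 3) from
          continuous_abs.pow 3).aestronglyMeasurable)
        measurable_neg.aemeasurable]
      have : ((fun b : ℝ => |b| ^ 3) ∘ Neg.neg) = fun b : ℝ => |b| ^ 3 := by
        funext b; simp [Function.comp, abs_neg]
      rw [this]; exact hint
    have hβν : ∫ z, |z| ^ 3 ∂ν ≤ (t / 20) ^ 3 := by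
      rw [hν, integral_map measurable_neg.aemeasurable
        ((show Continuous (fun b : ℝ => |b| ^ 3) from
          continuous_abs.pow 3).aestronglyMeasurable)]
      simpa [abs_neg] using hβt
    have hkey := cauchy_aux_key ν hint' t ht0 hβν (-x) (by linarith)
    have hmap : ∫ z, (-x - z) / ((-x - z) ^ 2 + t ^ 2) ^ 2 ∂ν
        = ∫ y, (-x - (-y)) / ((-x - (-y)) ^ 2 + t ^ 2) ^ 2 ∂μ := by
      rw [hν, integral_map measurable_neg.aemeasurable
        (cauchy_aux_cont t ht0 (-x)).aestronglyMeasurable]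
    have heq : (fun y : ℝ => (-x - (-y)) / ((-x - (-y)) ^ 2 + t ^ 2) ^ 2)
        = fun y : ℝ => -((x - y) / ((x - y) ^ 2 + t ^ 2) ^ 2) := by
      funext y
      rw [show -x - (-y) = -(x - y) by ring, neg_sq, neg_div]
    rw [hmap, heq, integral_neg] at hkey
    nlinarith
end
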